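/- arXiv:2503.20473 — 7 statements merged into one kernel-verified Lean document; each statement's English description precedes it below -/
import Mathlib

section
/- Fix α > 0 and integers n ≥ 2. Let B be the set of vectors P = (x₁,...,xₙ) ∈ ℝⁿ with Σxᵢ = 0 and Σ|xᵢ| = 2α. For each i ∈ {1,...,n-1}, let P_{i,α} be the vector whose first i coordinates equal α/i and remaining n-i coordinates equal -α/(n-i). Then for every P ∈ B there exists i ∈ {1,...,n-1} such that P_{i,α} ≺ P (P_{i,α} is majorized by P). -/
open Finset

lemma top_subset {ι : Type*} [DecidableEq ι] (f : ι → ℝ) :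
    ∀ (k : ℕ) (S : Finset ι), k ≤ S.card →
    ∃ B ⊆ S, B.card = k ∧ (k : ℝ) * ∑ j ∈ S, f j ≤ (S.card : ℝ) * ∑ j ∈ B, f j := by
  intro k
  induction k with
  | zero => intro S _; exact ⟨∅, empty_subset _, card_empty, by simp⟩
  | succ k ih =>
    intro S hk
    obtain ⟨B, hBS, hBcard, hB⟩ := ih S (Nat.le_of_succ_le hk)
    have hne : (S \ B).Nonempty := by
      rw [← card_pos, card_sdiff_of_subset hBS, hBcard]; omega
    obtain ⟨a, haSB, hamax⟩ := exists_max_image (S \ B) f hne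
    have haS : a ∈ S := (mem_sdiff.mp haSB).1
    have haB : a ∉ B := (mem_sdiff.mp haSB).2
    refine ⟨insert a B, insert_subset haS hBS,
      by rw [card_insert_of_notMem haB, hBcard], ?_⟩
    rw [sum_insert haB]
    have hsum_sdiff : ∑ j ∈ S \ B, f j ≤ ((S \ B).card : ℕ) • f a :=
      sum_le_card_nsmul _ _ _ (fun x hx => hamax x hx)
    have h2 : ∑ j ∈ S, f j - ∑ j ∈ B, f j ≤ ((S.card : ℝ) - k) * f a := by
      rw [← sum_sdiff_eq_sub hBS]
      calc ∑ j ∈ S \ B, f j ≤ ((S \ B).card : ℕ) • f a := hsum_sdiff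
        _ = ((S.card : ℝ) - k) * f a := by
            rw [nsmul_eq_mul, card_sdiff_of_subset hBS, hBcard,
              Nat.cast_sub (Nat.le_of_succ_le hk)]
    have hmk : (1 : ℝ) ≤ (S.card : ℝ) - k := by
      have : k + 1 ≤ S.card := hk
      have := Nat.cast_le (α := ℝ).mpr this
      push_cast at this ⊢
      linarith
    have hm0 : (0 : ℝ) ≤ (S.card : ℝ) := Nat.cast_nonneg _
    push_cast
    nlinarith [mul_le_mul_of_nonneg_left h2 hm0,
      mul_le_mul_of_nonneg_left hB (by linarith : (0:ℝ) ≤ (S.card : ℝ) - k - 1)]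

/-- `x` is majorized by `y`. -/
def IsMajorizedBy {n : ℕ} (x y : Fin n → ℝ) : Prop :=
  (∀ A : Finset (Fin n), ∃ B : Finset (Fin n),
      B.card = A.card ∧ ∑ i ∈ A, x i ≤ ∑ i ∈ B, y i)
    ∧ ∑ i, x i = ∑ i, y i

/-- Every zero-sum population with absolute deviation `2α` majorizes some two-valued
population `P_{i,α}`. -/
theorem exists_minimal_population
    {n : ℕ} (hn : 2 ≤ n) (α : ℝ) (hα : 0 < α)
    (P : Fin n → ℝ) (hsum : ∑ j, P j = 0) (habs : ∑ j, |P j| = 2 * α) :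
    ∃ i ∈ Finset.Icc 1 (n - 1),
      IsMajorizedBy
        (fun j : Fin n => if (j : ℕ) < i then α / i else -α / (n - i)) P := by
  classical
  set Pos : Finset (Fin n) := univ.filter (fun j => 0 < P j) with hPosdef
  set Neg : Finset (Fin n) := univ.filter (fun j => ¬ 0 < P j) with hNegdef
  have hsplit : ∑ j ∈ Pos, P j + ∑ j ∈ Neg, P j = 0 := by
    rw [hPosdef, hNegdef, sum_filter_add_sum_filter_not]; exact hsum
  have hPosabs : ∑ j ∈ Pos, |P j| = ∑ j ∈ Pos, P j :=
    sum_congr rfl fun j hj => abs_of_pos (mem_filter.mp hj).2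
  have hNegabs : ∑ j ∈ Neg, |P j| = - ∑ j ∈ Neg, P j := by
    rw [← sum_neg_distrib]
    exact sum_congr rfl fun j hj => abs_of_nonpos (not_lt.mp (mem_filter.mp hj).2)
  have habs2 : ∑ j ∈ Pos, P j - ∑ j ∈ Neg, P j = 2 * α := by
    have := sum_filter_add_sum_filter_not univ (fun j => 0 < P j) (fun j => |P j|)
    rw [← hPosdef, ← hNegdef] at this
    rw [hPosabs, hNegabs] at this
    linarith [habs ▸ this]
  have hSp : ∑ j ∈ Pos, P j = α := by linarith
  have hSn : ∑ j ∈ Neg, P j = -α := by linarith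
  set i := Pos.card with hi
  have hcards : Pos.card + Neg.card = n := by
    rw [hPosdef, hNegdef, card_filter_add_card_filter_not, card_univ, Fintype.card_fin]
  have hPosne : Pos.Nonempty := by
    by_contra h
    rw [not_nonempty_iff_eq_empty] at h
    rw [h, sum_empty] at hSp; linarith
  have hNegne : Neg.Nonempty := by
    by_contra h
    rw [not_nonempty_iff_eq_empty] at h
    rw [h, sum_empty] at hSn; linarith
  have hi1 : 1 ≤ i := card_pos.mpr hPosne
  have hin : i ≤ n - 1 := by
    have := card_pos.mpr hNegne; omega
  have hilt : i < n := by omega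
  have hipos : (0 : ℝ) < (i : ℝ) := by exact_mod_cast hi1
  have hni' : (0 : ℝ) < (n : ℝ) - (i : ℝ) := by
    have h1 : (i : ℝ) < (n : ℝ) := by exact_mod_cast hilt
    linarith
  have hNegcard : Neg.card = n - i := by omega
  have hlowcard : (univ.filter (fun j : Fin n => (j : ℕ) < i)).card = i := by
    have he : univ.filter (fun j : Fin n => (j : ℕ) < i) = Iio (⟨i, hilt⟩ : Fin n) := by
      ext j; simp [Fin.lt_def]
    rw [he, Fin.card_Iio]
  refine ⟨i, mem_Icc.mpr ⟨hi1, hin⟩, ?_, ?_⟩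
  · -- partial sums condition
    intro A
    set k := A.card with hk
    have hkn : k ≤ n := by simpa using card_le_card (subset_univ A)
    have hAsum : ∑ j ∈ A, (if (j : ℕ) < i then α / i else -α / (n - i))
        = ((A.filter (fun j : Fin n => (j : ℕ) < i)).card : ℝ) * (α / i)
          + ((A.filter (fun j : Fin n => ¬ (j : ℕ) < i)).card : ℝ) * (-α / (n - i)) := by
      rw [← sum_filter_add_sum_filter_not A (fun j : Fin n => (j : ℕ) < i)]
      rw [sum_congr rfl (fun j hj => if_pos (mem_filter.mp hj).2),
        sum_congr rfl (fun j hj => if_neg (mem_filter.mp hj).2),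
        sum_const, sum_const, nsmul_eq_mul, nsmul_eq_mul]
    set a := (A.filter (fun j : Fin n => (j : ℕ) < i)).card with ha
    set b := (A.filter (fun j : Fin n => ¬ (j : ℕ) < i)).card with hb
    have hab : a + b = k := by
      rw [ha, hb, card_filter_add_card_filter_not]
    have hai : a ≤ i :=
      calc a ≤ (univ.filter (fun j : Fin n => (j : ℕ) < i)).card :=
            card_le_card (filter_subset_filter _ (subset_univ A))
        _ = i := hlowcard
    have hcneg : -α / ((n : ℝ) - i) ≤ 0 := by
      apply div_nonpos_of_nonpos_of_nonneg <;> linarith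
    by_cases hki : k ≤ i
    · obtain ⟨B, hBPos, hBcard, hB⟩ := top_subset P k Pos (by omega)
      refine ⟨B, by omega, ?_⟩
      rw [hAsum]
      rw [hSp, ← hi] at hB
      have t1 : (b : ℝ) * (-α / ((n : ℝ) - i)) ≤ 0 :=
        mul_nonpos_of_nonneg_of_nonpos (Nat.cast_nonneg _) hcneg
      have hak : (a : ℝ) ≤ (k : ℝ) := by exact_mod_cast (by omega : a ≤ k)
      have t2 : (a : ℝ) * (α / i) ≤ (k : ℝ) * (α / i) :=
        mul_le_mul_of_nonneg_right hak (by positivity)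
      have t3 : (k : ℝ) * (α / i) ≤ ∑ j ∈ B, P j := by
        rw [← mul_div_assoc, div_le_iff₀ hipos]; linarith
      push_cast
      linarith
    · push_neg at hki
      obtain ⟨C, hCNeg, hCcard, hC⟩ := top_subset P (k - i) Neg (by omega)
      have hdisj : Disjoint Pos C := by
        refine Finset.disjoint_left.mpr (fun x hx hxC => ?_)
        exact (mem_filter.mp (hCNeg hxC)).2 (mem_filter.mp hx).2
      refine ⟨Pos ∪ C, ?_, ?_⟩
      · rw [card_union_of_disjoint hdisj, hCcard, ← hi]; omega
      · rw [sum_union hdisj, hSp, hAsum]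
        rw [hSn, hNegcard] at hC
        push_cast [Nat.cast_sub hilt.le, Nat.cast_sub hki.le] at hC
        have h1 : (a : ℝ) * (α / i) ≤ α := by
          have hai' : (a : ℝ) ≤ (i : ℝ) := by exact_mod_cast hai
          calc (a : ℝ) * (α / i) ≤ (i : ℝ) * (α / i) :=
                mul_le_mul_of_nonneg_right hai' (by positivity)
            _ = α := by field_simp
        have hbk : (k : ℝ) - (i : ℝ) ≤ (b : ℝ) := by
          have : ((k - i : ℕ) : ℝ) ≤ (b : ℝ) := by exact_mod_cast (by omega : k - i ≤ b)
          rwa [Nat.cast_sub hki.le] at this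
        have h2 : (b : ℝ) * (-α / ((n : ℝ) - i)) ≤ ((k : ℝ) - i) * (-α / ((n : ℝ) - i)) :=
          mul_le_mul_of_nonpos_right hbk hcneg
        have h3 : ((k : ℝ) - i) * (-α / ((n : ℝ) - i)) ≤ ∑ j ∈ C, P j := by
          rw [← mul_div_assoc, div_le_iff₀ hni']; nlinarith
        push_cast
        linarith
  · -- total sums equal
    rw [hsum]
    rw [← sum_filter_add_sum_filter_not univ (fun j : Fin n => (j : ℕ) < i)]
    rw [sum_congr rfl (fun j hj => if_pos (mem_filter.mp hj).2),
      sum_congr rfl (fun j hj => if_neg (mem_filter.mp hj).2),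
      sum_const, sum_const, hlowcard]
    have hhicard : (univ.filter (fun j : Fin n => ¬ (j : ℕ) < i)).card = n - i := by
      have h := card_filter_add_card_filter_not (s := (univ : Finset (Fin n)))
        (p := fun j : Fin n => (j : ℕ) < i)
      rw [hlowcard, card_univ, Fintype.card_fin] at h
      omega
    rw [hhicard, nsmul_eq_mul, nsmul_eq_mul, Nat.cast_sub hilt.le]
    field_simp
    ring
end

section
/- For all positive integers n, √(2πn)·(n/e)ⁿ·e^{1/(12n+1)} < n! < √(2πn)·(n/e)ⁿ·e^{1/(12n)}. -/
open Real Filter Topology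

lemma logIneqLower (x : ℝ) (hx0 : 0 < x) (hx1 : x < 1) :
    2*x + 2*x^3/3 < Real.log ((1+x)/(1-x)) := by
  set f : ℝ → ℝ := fun y => Real.log (1+y) - Real.log (1-y) - (2*y + 2*y^3/3) with hf
  have key : StrictMonoOn f (Set.Ico 0 1) := by
    apply StrictMonoOn.mono (s := Set.Ico (0:ℝ) 1) ?_ le_rfl
    apply strictMonoOn_of_deriv_pos (convex_Ico 0 1)
    · apply ContinuousOn.sub (ContinuousOn.sub ?_ ?_) ?_
      · exact ((continuous_const.add continuous_id).continuousOn).log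
          (fun y hy => by simp only [Set.mem_Ico, id, Pi.add_apply] at hy ⊢; nlinarith)
      · exact ((continuous_const.sub continuous_id).continuousOn).log
          (fun y hy => by simp only [Set.mem_Ico, id, Pi.sub_apply] at hy ⊢; nlinarith)
      · fun_prop
    · intro y hy
      rw [interior_Ico] at hy
      obtain ⟨hy0, hy1⟩ := hy
      have h1 : (1:ℝ) + y ≠ 0 := by nlinarith
      have h2 : (1:ℝ) - y ≠ 0 := by nlinarith
      have d1 : HasDerivAt (fun y : ℝ => Real.log (1+y)) (1/(1+y)) y := by
        simpa using ((hasDerivAt_id y).const_add 1).log h1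
      have d2 : HasDerivAt (fun y : ℝ => Real.log (1-y)) ((-1)/(1-y)) y := by
        simpa using ((hasDerivAt_id y).const_sub 1).log h2
      have d3 : HasDerivAt (fun y : ℝ => 2*y + 2*y^3/3) (2 + 2*y^2) y := by
        have := ((hasDerivAt_id y).const_mul 2).add
          (((hasDerivAt_pow 3 y).const_mul 2).div_const 3)
        exact this.congr_deriv (by rw [show (3:ℕ)-1 = 2 from rfl]; push_cast; ring)
      have D : HasDerivAt f (1/(1+y) - (-1)/(1-y) - (2 + 2*y^2)) y := (d1.sub d2).sub d3
      rw [D.deriv]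
      have h1' : (0:ℝ) < 1 + y := by linarith
      have h2' : (0:ℝ) < 1 - y := by linarith
      rw [sub_pos, div_sub_div _ _ (ne_of_gt h1') (ne_of_gt h2'), lt_div_iff₀ (by nlinarith)]
      nlinarith [pow_pos hy0 4]
  have h0 : f 0 < f x := key (by simp) (by constructor <;> linarith) hx0
  have : f 0 = 0 := by simp [hf]
  rw [this] at h0
  have hlog : Real.log ((1+x)/(1-x)) = Real.log (1+x) - Real.log (1-x) :=
    Real.log_div (by nlinarith) (by nlinarith)
  rw [hlog]
  simp only [hf] at h0
  linarith

lemma logIneqUpper (x : ℝ) (hx0 : 0 < x) (hx1 : x < 1) :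
    Real.log ((1+x)/(1-x)) < 2*x + 2*x^3/(3 - 3*x^2) := by
  set f : ℝ → ℝ := fun y => 2*y + 2*y^3/(3 - 3*y^2) - (Real.log (1+y) - Real.log (1-y)) with hf
  have key : StrictMonoOn f (Set.Ico 0 1) := by
    apply strictMonoOn_of_deriv_pos (convex_Ico 0 1)
    · apply ContinuousOn.sub (ContinuousOn.add (by fun_prop) ?_) (ContinuousOn.sub ?_ ?_)
      · apply ContinuousOn.div (by fun_prop) (by fun_prop)
        intro y hy; simp only [Set.mem_Ico] at hy; nlinarith
      · exact ((continuous_const.add continuous_id).continuousOn).log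
          (fun y hy => by simp only [Set.mem_Ico, id, Pi.add_apply] at hy ⊢; nlinarith)
      · exact ((continuous_const.sub continuous_id).continuousOn).log
          (fun y hy => by simp only [Set.mem_Ico, id, Pi.sub_apply] at hy ⊢; nlinarith)
    · intro y hy
      rw [interior_Ico] at hy
      obtain ⟨hy0, hy1⟩ := hy
      have h1' : (0:ℝ) < 1 + y := by linarith
      have h2' : (0:ℝ) < 1 - y := by linarith
      have hden : (0:ℝ) < 3 - 3*y^2 := by nlinarith
      have d1 : HasDerivAt (fun y : ℝ => Real.log (1+y)) (1/(1+y)) y := by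
        simpa using ((hasDerivAt_id y).const_add 1).log (ne_of_gt h1')
      have d2 : HasDerivAt (fun y : ℝ => Real.log (1-y)) ((-1)/(1-y)) y := by
        simpa using ((hasDerivAt_id y).const_sub 1).log (ne_of_gt h2')
      have dnum : HasDerivAt (fun y : ℝ => 2*y^3) (6*y^2) y := by
        have := (hasDerivAt_pow 3 y).const_mul 2
        exact this.congr_deriv (by rw [show (3:ℕ)-1 = 2 from rfl]; push_cast; ring)
      have dden : HasDerivAt (fun y : ℝ => 3 - 3*y^2) (-(6*y)) y := by
        have := ((hasDerivAt_pow 2 y).const_mul 3).const_sub 3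
        exact this.congr_deriv (by rw [show (2:ℕ)-1 = 1 from rfl]; push_cast; ring)
      have dfrac : HasDerivAt (fun y : ℝ => 2*y^3/(3 - 3*y^2))
          ((6*y^2*(3-3*y^2) - 2*y^3*(-(6*y)))/(3-3*y^2)^2) y := dnum.div dden (ne_of_gt hden)
      have dlin : HasDerivAt (fun y : ℝ => 2*y) 2 y := by simpa using (hasDerivAt_id y).const_mul 2
      have D : HasDerivAt f (2 + (6*y^2*(3-3*y^2) - 2*y^3*(-(6*y)))/(3-3*y^2)^2
          - (1/(1+y) - (-1)/(1-y))) y := (dlin.add dfrac).sub (d1.sub d2)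
      rw [D.deriv]
      have e : 2 + (6*y^2*(3-3*y^2) - 2*y^3*(-(6*y)))/(3-3*y^2)^2 - (1/(1+y) - (-1)/(1-y))
          = 4*y^4/(3*(1-y^2)^2) := by
        have h3 : ((1:ℝ)-y^2) ≠ 0 := by nlinarith
        field_simp
        ring
      rw [e]
      have h3 : ((1:ℝ)-y^2) > 0 := by nlinarith
      positivity
  have h0 : f 0 < f x := key (by simp) (by constructor <;> linarith) hx0
  have hz : f 0 = 0 := by simp [hf]
  rw [hz] at h0
  have hlog : Real.log ((1+x)/(1-x)) = Real.log (1+x) - Real.log (1-x) :=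
    Real.log_div (by nlinarith) (by nlinarith)
  rw [hlog]
  simp only [hf] at h0
  linarith

lemma robbins_diff (N : ℝ) (hN : 1 ≤ N) :
    1/(12*N+1) - 1/(12*N+13) < (N+1/2)*Real.log ((N+1)/N) - 1
    ∧ (N+1/2)*Real.log ((N+1)/N) - 1 < 1/(12*N) - 1/(12*N+12) := by
  have hN0 : (0:ℝ) < N := by linarith
  set x : ℝ := 1/(2*N+1) with hx
  have hx0 : 0 < x := by positivity
  have hx1 : x < 1 := by rw [hx, div_lt_one (by linarith)]; linarith
  have hfrac : (1+x)/(1-x) = (N+1)/N := by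
    rw [div_eq_div_iff (by linarith) hN0.ne', hx]
    field_simp
    ring
  have hlow := logIneqLower x hx0 hx1
  have hup := logIneqUpper x hx0 hx1
  rw [hfrac] at hlow hup
  have hpos : (0:ℝ) < N + 1/2 := by linarith
  have hmul_low := mul_lt_mul_of_pos_left hlow hpos
  have hmul_up := mul_lt_mul_of_pos_left hup hpos
  have e1 : (N+1/2)*(2*x + 2*x^3/3) = 1 + 1/(3*(2*N+1)^2) := by
    rw [hx]; field_simp
  have e2 : (N+1/2)*(2*x + 2*x^3/(3-3*x^2)) = 1 + 1/(12*N) - 1/(12*N+12) := by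
    have hd : 3 - 3*x^2 = (12*N^2+12*N)/(2*N+1)^2 := by
      rw [hx]; field_simp; ring
    rw [hd, hx]
    have h1 : (12*N^2+12*N:ℝ) ≠ 0 := by positivity
    field_simp
    ring
  rw [e1] at hmul_low
  rw [e2] at hmul_up
  constructor
  · have harith : 1/(12*N+1) - 1/(12*N+13) < 1/(3*(2*N+1)^2) := by
      rw [div_sub_div _ _ (by positivity) (by positivity), div_lt_div_iff₀ (by positivity) (by positivity)]
      nlinarith
    linarith
  · linarith

noncomputable def robbinsT (n : ℕ) : ℝ :=
  Real.log n.factorial - ((n : ℝ) + 1/2) * Real.log n + n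

lemma robbinsT_diff (n : ℕ) (hn : 1 ≤ n) :
    robbinsT n - robbinsT (n+1)
      = (((n:ℝ))+1/2) * Real.log (((n:ℝ)+1)/n) - 1 := by
  have hn0 : (0:ℝ) < (n:ℝ) := by exact_mod_cast hn
  have hfac : ((n+1).factorial : ℝ) = ((n:ℝ)+1) * n.factorial := by
    rw [Nat.factorial_succ]; push_cast; ring
  have hfacpos : (0:ℝ) < (n.factorial : ℝ) := by exact_mod_cast n.factorial_pos
  have hlogfac : Real.log ((n+1).factorial : ℝ)
      = Real.log ((n:ℝ)+1) + Real.log (n.factorial : ℝ) := by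
    rw [hfac, Real.log_mul (by positivity) hfacpos.ne']
  have hlogdiv : Real.log (((n:ℝ)+1)/n) = Real.log ((n:ℝ)+1) - Real.log n :=
    Real.log_div (by positivity) hn0.ne'
  simp only [robbinsT]
  rw [hlogfac, hlogdiv]
  push_cast
  ring

open Stirling in
lemma robbinsT_tendsto :
    Filter.Tendsto robbinsT Filter.atTop (𝓝 (1/2 * Real.log (2*Real.pi))) := by
  have hlim := Stirling.tendsto_stirlingSeq_sqrt_pi
  have hπ : (0:ℝ) < Real.sqrt Real.pi := Real.sqrt_pos.mpr Real.pi_pos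
  have hlog : Filter.Tendsto (fun n => Real.log (stirlingSeq n)) Filter.atTop
      (𝓝 (Real.log (Real.sqrt Real.pi))) :=
    ((Real.continuousAt_log hπ.ne').tendsto).comp hlim
  have heq : ∀ᶠ n : ℕ in Filter.atTop,
      Real.log (stirlingSeq n) + 1/2 * Real.log 2 = robbinsT n := by
    filter_upwards [Filter.eventually_ge_atTop 1] with n hn
    have hn0 : (0:ℝ) < (n:ℝ) := by exact_mod_cast hn
    rw [Stirling.log_stirlingSeq_formula, robbinsT]
    rw [Real.log_mul two_ne_zero hn0.ne', Real.log_div hn0.ne' (Real.exp_pos 1).ne',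
      Real.log_exp]
    ring
  have := (hlog.add tendsto_const_nhds).congr' heq
  convert this using 2
  rw [Real.log_sqrt Real.pi_pos.le, Real.log_mul two_ne_zero Real.pi_pos.ne']
  ring

lemma robbinsT_bounds (n : ℕ) (hn : 1 ≤ n) :
    1/2 * Real.log (2*Real.pi) + 1/(12*(n:ℝ)+1) < robbinsT n
    ∧ robbinsT n < 1/2 * Real.log (2*Real.pi) + 1/(12*(n:ℝ)) := by
  set L := 1/2 * Real.log (2*Real.pi) with hL
  -- sequences
  set s : ℕ → ℝ := fun m => robbinsT (m+1) - 1/(12*((m:ℝ)+1)) with hs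
  set u : ℕ → ℝ := fun m => robbinsT (m+1) - 1/(12*((m:ℝ)+1)+1) with hu
  have hdiff : ∀ m : ℕ, 1 ≤ m → (1/(12*(m:ℝ)+1) - 1/(12*(m:ℝ)+13) < robbinsT m - robbinsT (m+1)
      ∧ robbinsT m - robbinsT (m+1) < 1/(12*(m:ℝ)) - 1/(12*(m:ℝ)+12)) := by
    intro m hm
    have hm1 : (1:ℝ) ≤ (m:ℝ) := by exact_mod_cast hm
    rw [robbinsT_diff m hm]
    exact robbins_diff (m:ℝ) hm1
  have hsmono : StrictMono s := by
    apply strictMono_nat_of_lt_succ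
    intro m
    have h := (hdiff (m+1) (Nat.le_add_left 1 m)).2
    simp only [hs]
    push_cast at h ⊢
    ring_nf at h ⊢
    linarith
  have huanti : StrictAnti u := by
    apply strictAnti_nat_of_succ_lt
    intro m
    have h := (hdiff (m+1) (Nat.le_add_left 1 m)).1
    simp only [hu]
    push_cast at h ⊢
    ring_nf at h ⊢
    linarith
  have hTshift : Filter.Tendsto (fun m : ℕ => robbinsT (m+1)) Filter.atTop (𝓝 L) :=
    robbinsT_tendsto.comp (Filter.tendsto_add_atTop_nat 1)
  have hnat : Filter.Tendsto (fun m : ℕ => ((m:ℝ)+1)) Filter.atTop Filter.atTop :=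
    Filter.tendsto_atTop_add_const_right _ 1 tendsto_natCast_atTop_atTop
  have h12 : Filter.Tendsto (fun m : ℕ => 12*((m:ℝ)+1)) Filter.atTop Filter.atTop :=
    hnat.const_mul_atTop (by norm_num)
  have hz : Filter.Tendsto (fun m : ℕ => 1/(12*((m:ℝ)+1))) Filter.atTop (𝓝 0) := by
    simp only [one_div]
    exact tendsto_inv_atTop_zero.comp h12
  have hz' : Filter.Tendsto (fun m : ℕ => 1/(12*((m:ℝ)+1)+1)) Filter.atTop (𝓝 0) := by
    simp only [one_div]
    exact tendsto_inv_atTop_zero.comp (Filter.tendsto_atTop_add_const_right _ 1 h12)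
  have hslim : Filter.Tendsto s Filter.atTop (𝓝 L) := by
    simpa only [hs, sub_zero] using hTshift.sub hz
  have hulim : Filter.Tendsto u Filter.atTop (𝓝 L) := by
    simpa only [hu, sub_zero] using hTshift.sub hz'
  have hsle : ∀ m, s m ≤ L := hsmono.monotone.ge_of_tendsto hslim
  have hule : ∀ m, L ≤ u m := huanti.antitone.le_of_tendsto hulim
  obtain ⟨k, rfl⟩ : ∃ k, n = k + 1 := ⟨n - 1, (Nat.succ_pred_eq_of_pos hn).symm⟩
  constructor
  · have h1 : u (k+1) < u k := huanti (Nat.lt_succ_self k)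
    have h2 := hule (k+1)
    simp only [hu] at h1 h2 ⊢
    push_cast at h1 h2 ⊢
    ring_nf at h1 h2 ⊢
    linarith
  · have h1 : s k < s (k+1) := hsmono (Nat.lt_succ_self k)
    have h2 := hsle (k+1)
    simp only [hs] at h1 h2 ⊢
    push_cast at h1 h2 ⊢
    ring_nf at h1 h2 ⊢
    linarith

/-- Robbins' sharpening of Stirling's formula. -/
theorem robbins_stirling (n : ℕ) (hn : 0 < n) :
    Real.sqrt (2 * Real.pi * n) * ((n : ℝ) / Real.exp 1) ^ n
        * Real.exp (1 / (12 * (n : ℝ) + 1)) < (n.factorial : ℝ)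
    ∧ (n.factorial : ℝ) < Real.sqrt (2 * Real.pi * n) * ((n : ℝ) / Real.exp 1) ^ n
        * Real.exp (1 / (12 * (n : ℝ))) := by
  have hN0 : (0:ℝ) < (n:ℝ) := by exact_mod_cast hn
  have hfacpos : (0:ℝ) < (n.factorial : ℝ) := by exact_mod_cast n.factorial_pos
  have hsq : (0:ℝ) < Real.sqrt (2 * Real.pi * n) := by
    apply Real.sqrt_pos.mpr; positivity
  have hpow : (0:ℝ) < ((n : ℝ) / Real.exp 1) ^ n := by positivity
  have hbase : Real.log (Real.sqrt (2 * Real.pi * n) * ((n : ℝ) / Real.exp 1) ^ n)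
      = 1/2 * Real.log (2*Real.pi) + ((n:ℝ)+1/2) * Real.log n - n := by
    rw [Real.log_mul hsq.ne' hpow.ne', Real.log_sqrt (by positivity),
      Real.log_mul (by positivity) hN0.ne', Real.log_pow,
      Real.log_div hN0.ne' (Real.exp_pos 1).ne', Real.log_exp]
    ring
  obtain ⟨hlow, hup⟩ := robbinsT_bounds n hn
  have hTdef : robbinsT n = Real.log (n.factorial : ℝ) - ((n:ℝ)+1/2) * Real.log n + n := rfl
  constructor
  · rw [← Real.exp_log (by positivity :
        (0:ℝ) < Real.sqrt (2 * Real.pi * n) * ((n : ℝ) / Real.exp 1) ^ n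
          * Real.exp (1 / (12 * (n : ℝ) + 1))), ← Real.exp_log hfacpos]
    apply Real.exp_lt_exp.mpr
    rw [Real.log_mul (by positivity) (Real.exp_pos _).ne', Real.log_exp, hbase]
    linarith
  · rw [← Real.exp_log hfacpos, ← Real.exp_log (by positivity :
        (0:ℝ) < Real.sqrt (2 * Real.pi * n) * ((n : ℝ) / Real.exp 1) ^ n
          * Real.exp (1 / (12 * (n : ℝ))))]
    apply Real.exp_lt_exp.mpr
    rw [Real.log_mul (by positivity) (Real.exp_pos _).ne', Real.log_exp, hbase]
    linarith
end

section
/- Let H ~ Hyp(n,i,k) with mean μ = ik/n, where μ ∈ [m-1,m] for some m ∈ {2,...,min{i,k}-1}. Then E|H - ik/n| = (2m/n)·(n-i-k+m)·P(H = m). -/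
open Finset

/-- The hypergeometric probability `P(H = m)` for `H ~ Hyp(n,i,k)`. -/
noncomputable def hypPMF (n i k m : ℕ) : ℝ :=
  (Nat.choose i m * Nat.choose (n - i) (k - m)) / (Nat.choose n k)

/-- The mean absolute deviation `E|H - ik/n|` of `H ~ Hyp(n,i,k)`. -/
noncomputable def hypMAD (n i k : ℕ) : ℝ :=
  ∑ m ∈ Finset.range (k + 1), |(m : ℝ) - (i : ℝ) * k / n| * hypPMF n i k m

lemma vand (a b k : ℕ) :
    ∑ j ∈ range (k+1), a.choose j * b.choose (k - j) = (a+b).choose k := by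
  rw [Nat.add_choose_eq, Finset.Nat.sum_antidiagonal_eq_sum_range_succ_mk]

lemma mean_sum (n i k : ℕ) (hi1 : 1 ≤ i) (hin : i ≤ n) (hk1 : 1 ≤ k) :
    ∑ j ∈ range (k+1), j * (i.choose j * (n-i).choose (k-j))
      = i * (n-1).choose (k-1) := by
  rw [Finset.sum_range_succ']
  simp only [Nat.zero_eq, zero_mul, add_zero]
  have key : ∀ t, (t+1) * (i.choose (t+1) * (n-i).choose (k-(t+1)))
      = i * ((i-1).choose t * (n-i).choose ((k-1)-t)) := by
    intro t
    have hs : (i-1) + 1 = i := Nat.succ_pred_eq_of_pos hi1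
    have h1 := Nat.add_one_mul_choose_eq (i-1) t
    rw [hs] at h1
    have h2 : k - (t+1) = (k-1) - t := by omega
    rw [h2, ← mul_assoc, ← mul_assoc, mul_comm ((t:ℕ)+1) (i.choose (t+1)),
      ← h1]
  rw [Finset.sum_congr rfl (fun t _ => key t), ← Finset.mul_sum]
  congr 1
  have hv := vand (i-1) (n-i) (k-1)
  have e1 : (k-1)+1 = k := by omega
  rw [e1] at hv
  rw [hv]
  congr 1
  omega

lemma hyp_step (n i k j : ℕ) (hin : i ≤ n) (hjk : j < k) :
    ((j:ℝ)+1) * ((n:ℝ) - i - k + ((j:ℝ)+1)) * hypPMF n i k (j+1)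
      = ((i:ℝ) - j) * ((k:ℝ) - j) * hypPMF n i k j := by
  unfold hypPMF
  rcases le_or_gt i j with hij | hij
  · have h1 : i.choose (j+1) = 0 := Nat.choose_eq_zero_of_lt (by omega)
    rcases eq_or_lt_of_le hij with rfl | hij'
    · simp [h1]
    · have h2 : i.choose j = 0 := Nat.choose_eq_zero_of_lt hij'
      simp [h1, h2]
  · rcases lt_or_ge (n-i) (k-(j+1)) with hc | hc
    · have h1 : (n-i).choose (k-(j+1)) = 0 := Nat.choose_eq_zero_of_lt hc
      have h2 : (n-i).choose (k-j) = 0 := Nat.choose_eq_zero_of_lt (by omega)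
      simp [h1, h2]
    · rcases eq_or_lt_of_le hc with heq | hlt
      · have h2 : (n-i).choose (k-j) = 0 := Nat.choose_eq_zero_of_lt (by omega)
        have hnat : n + (j+1) = i + k := by omega
        have hr : (n:ℝ) + ((j:ℝ)+1) = (i:ℝ) + k := by exact_mod_cast hnat
        have h0 : (n:ℝ) - i - k + ((j:ℝ)+1) = 0 := by linarith
        rw [h0]
        simp [h2]
      · have key : ((j+1) * ((n-i) - (k-(j+1)))) * (i.choose (j+1) * (n-i).choose (k-(j+1)))
            = ((i-j) * (k-j)) * (i.choose j * (n-i).choose (k-j)) := by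
          have h1 : i.choose (j+1) * (j+1) = i.choose j * (i-j) := Nat.choose_succ_right_eq i j
          have h2 := Nat.choose_succ_right_eq (n-i) (k-(j+1))
          have e : (k-(j+1)) + 1 = k - j := by omega
          rw [e] at h2
          calc (j+1) * ((n-i)-(k-(j+1))) * (i.choose (j+1) * (n-i).choose (k-(j+1)))
              = (i.choose (j+1) * (j+1)) * ((n-i).choose (k-(j+1)) * ((n-i)-(k-(j+1)))) := by ring
            _ = (i.choose j * (i-j)) * ((n-i).choose (k-j) * (k-j)) := by rw [h1, ← h2]
            _ = (i-j)*(k-j)*(i.choose j * (n-i).choose (k-j)) := by ring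
        have hcast := congrArg (Nat.cast : ℕ → ℝ) key
        push_cast [Nat.cast_sub (show k-(j+1) ≤ n-i by omega),
          Nat.cast_sub (show i ≤ n from hin),
          Nat.cast_sub (show j+1 ≤ k by omega),
          Nat.cast_sub (show j ≤ i by omega),
          Nat.cast_sub (show j ≤ k by omega)] at hcast
        linear_combination hcast / (Nat.choose n k : ℝ)

/-- Ramasubban's closed form for the mean absolute deviation of a hypergeometric
random variable: `E|H - ik/n| = (2m/n)·(n-i-k+m)·P(H = m)`. -/
theorem hyp_mad_closed_form
    (n i k m : ℕ) (hn : 2 ≤ n)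
    (hi : i ∈ Finset.Icc 1 (n - 1)) (hk : k ∈ Finset.Icc 1 (n - 1))
    (hm : m ∈ Finset.Icc 2 (min i k - 1))
    (hmean₁ : (m : ℝ) - 1 ≤ (i : ℝ) * k / n) (hmean₂ : (i : ℝ) * k / n ≤ m) :
    hypMAD n i k = (2 * m / n) * ((n : ℝ) - i - k + m) * hypPMF n i k m := by
  obtain ⟨hi1, hi2⟩ := Finset.mem_Icc.mp hi
  obtain ⟨hk1, hk2⟩ := Finset.mem_Icc.mp hk
  obtain ⟨hm2, hm3⟩ := Finset.mem_Icc.mp hm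
  have hin : i < n := by omega
  have hkn : k < n := by omega
  have hmi : m + 1 ≤ i := by omega
  have hmk : m + 1 ≤ k := by omega
  have hn0 : (0:ℝ) < n := by positivity
  have hnne : (n:ℝ) ≠ 0 := ne_of_gt hn0
  have hCpos : 0 < n.choose k := Nat.choose_pos (le_of_lt hkn)
  have hC : ((n.choose k : ℕ) : ℝ) ≠ 0 := by exact_mod_cast hCpos.ne'
  set μ : ℝ := (i:ℝ)*k/n with hμdef
  -- sum of pmf = 1
  have hsum1 : ∑ j ∈ range (k+1), hypPMF n i k j = 1 := by
    unfold hypPMF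
    rw [← Finset.sum_div, div_eq_one_iff_eq hC]
    have hv := vand i (n-i) k
    rw [Nat.add_sub_cancel' (le_of_lt hin)] at hv
    exact_mod_cast congrArg (Nat.cast : ℕ → ℝ) hv
  -- mean
  have hnk : (n:ℝ) * (n-1).choose (k-1) = (n.choose k) * k := by
    have h := Nat.add_one_mul_choose_eq (n-1) (k-1)
    have hsn : (n-1) + 1 = n := by omega
    have hsk : (k-1) + 1 = k := by omega
    rw [hsn, hsk] at h
    exact_mod_cast congrArg (Nat.cast : ℕ → ℝ) h
  have hmean : ∑ j ∈ range (k+1), (j:ℝ) * hypPMF n i k j = μ := by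
    unfold hypPMF
    have h := congrArg (Nat.cast : ℕ → ℝ) (mean_sum n i k hi1 (le_of_lt hin) hk1)
    push_cast at h
    have e : ∀ j ∈ range (k+1), (j:ℝ) * ((i.choose j * (n-i).choose (k-j) : ℝ) / (n.choose k : ℝ))
        = ((j:ℝ) * (i.choose j * (n-i).choose (k-j) : ℝ)) / (n.choose k : ℝ) := by
      intro j _; ring
    rw [Finset.sum_congr rfl e, ← Finset.sum_div, h, hμdef, div_eq_div_iff hC hnne]
    linear_combination (i:ℝ) * hnk
  -- zero mean
  have hzero : ∑ j ∈ range (k+1), ((j:ℝ) - μ) * hypPMF n i k j = 0 := by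
    simp only [sub_mul]
    rw [Finset.sum_sub_distrib, hmean, ← Finset.mul_sum, hsum1, mul_one, sub_self]
  -- telescoping function
  set g : ℕ → ℝ := fun j => if j ≤ k then (j:ℝ) * ((n:ℝ)-i-k+j)/n * hypPMF n i k j else 0
    with hgdef
  have hg : ∀ j ≤ k, ((j:ℝ) - μ) * hypPMF n i k j = g j - g (j+1) := by
    intro j hj
    have e1 : g j = (j:ℝ) * ((n:ℝ)-i-k+j)/n * hypPMF n i k j := if_pos hj
    rcases lt_or_eq_of_le hj with hlt | rfl
    · have e2 : g (j+1) = ((j:ℝ)+1) * ((n:ℝ)-i-k+((j:ℝ)+1))/n * hypPMF n i k (j+1) := by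
        rw [hgdef]
        simp only [if_pos (show j+1 ≤ k by omega)]
        push_cast
        ring
      have step := hyp_step n i k j (le_of_lt hin) hlt
      rw [e1, e2]
      have e3 : ((j:ℝ)+1) * ((n:ℝ)-i-k+((j:ℝ)+1))/n * hypPMF n i k (j+1)
          = ((i:ℝ)-j) * ((k:ℝ)-j)/n * hypPMF n i k j := by
        rw [div_mul_eq_mul_div, div_mul_eq_mul_div, step]
      rw [e3, hμdef]
      field_simp
      ring
    · have e2 : g (j+1) = 0 := if_neg (by omega)
      rw [e1, e2, sub_zero, hμdef]
      have e7 : (j:ℝ) - (i:ℝ)*j/n = (j:ℝ) * ((n:ℝ)-i-(j:ℝ)+(j:ℝ))/n := by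
        field_simp
        ring
      rw [e7]
  -- telescoped sum
  have htel : ∑ j ∈ Finset.Ico m (k+1), ((j:ℝ) - μ) * hypPMF n i k j = g m := by
    have hc : ∀ j ∈ Finset.Ico m (k+1), ((j:ℝ) - μ) * hypPMF n i k j = g j - g (j+1) := by
      intro j hj
      exact hg j (by simp only [Finset.mem_Ico] at hj; omega)
    rw [Finset.sum_congr rfl hc, Finset.sum_Ico_eq_sum_range]
    have e4 : ∀ t ∈ range (k+1-m), g (m+t) - g (m+t+1) = (fun s => g (m+s)) t - (fun s => g (m+s)) (t+1) := by
      intro t _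
      rfl
    rw [Finset.sum_congr rfl e4, Finset.sum_range_sub' (fun s => g (m+s)) (k+1-m)]
    show g (m+0) - g (m+(k+1-m)) = g m
    have e5 : m + (k+1-m) = k+1 := by omega
    have e6 : g (k+1) = 0 := if_neg (by omega)
    rw [e5, e6, add_zero, sub_zero]
  -- split
  have hm1le : m ≤ k + 1 := by omega
  have hlow : ∑ j ∈ Finset.Ico 0 m, ((j:ℝ) - μ) * hypPMF n i k j = -(g m) := by
    have := hzero
    rw [Finset.range_eq_Ico, ← Finset.sum_Ico_consecutive _ (Nat.zero_le m) hm1le, htel] at this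
    linarith
  -- assemble
  unfold hypMAD
  rw [show (i:ℝ)*(k:ℝ)/(n:ℝ) = μ from hμdef.symm]
  rw [Finset.range_eq_Ico, ← Finset.sum_Ico_consecutive _ (Nat.zero_le m) hm1le]
  have hA : ∀ j ∈ Finset.Ico 0 m, |(j:ℝ) - μ| * hypPMF n i k j
      = -(((j:ℝ) - μ) * hypPMF n i k j) := by
    intro j hj
    simp only [Finset.mem_Ico] at hj
    have hjm : (j:ℝ) ≤ (m:ℝ) - 1 := by
      have : (j:ℝ) + 1 ≤ m := by exact_mod_cast hj.2
      linarith
    rw [show |(j:ℝ) - μ| = -((j:ℝ) - μ) from abs_of_nonpos (by linarith), neg_mul]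
  have hB : ∀ j ∈ Finset.Ico m (k+1), |(j:ℝ) - μ| * hypPMF n i k j
      = ((j:ℝ) - μ) * hypPMF n i k j := by
    intro j hj
    simp only [Finset.mem_Ico] at hj
    have hjm : (m:ℝ) ≤ (j:ℝ) := by exact_mod_cast hj.1
    rw [show |(j:ℝ) - μ| = (j:ℝ) - μ from abs_of_nonneg (by linarith)]
  rw [Finset.sum_congr rfl hA, Finset.sum_congr rfl hB, Finset.sum_neg_distrib, hlow, htel,
    neg_neg]
  have egm : g m = (m:ℝ) * ((n:ℝ)-i-k+m)/n * hypPMF n i k m := if_pos (by omega)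
  rw [egm]
  ring
end

section
/- Let H ~ Hyp(n,i,k) with ik/n ∈ [m-1,m] for some m ∈ {2,...,min{i,k}-1}. Then (n/(2i(n-i)))·E|H - ik/n| ≥ (e^{-1/3}/(8√(2π)))·√(k/n)·√(n-k)/n. -/
open Real
set_option maxHeartbeats 1000000

section aux


lemma phi_upper (x δ : ℝ) (hx : 0 < x) (hδ : 0 ≤ δ) :
    (x+δ) * Real.log (x+δ) - x * Real.log x ≤ δ * (1 + Real.log (x+δ)) := by
  have hxd : 0 < x + δ := by linarith
  have h1 : Real.log (x+δ) - Real.log x ≤ δ / x := by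
    rw [← Real.log_div (by positivity) (by positivity)]
    have := Real.log_le_sub_one_of_pos (show 0 < (x+δ)/x by positivity)
    calc Real.log ((x+δ)/x) ≤ (x+δ)/x - 1 := this
      _ = δ / x := by field_simp; ring
  have h2 : x * (Real.log (x+δ) - Real.log x) ≤ δ := by
    calc x * (Real.log (x+δ) - Real.log x) ≤ x * (δ/x) := by
          exact mul_le_mul_of_nonneg_left h1 hx.le
      _ = δ := by field_simp
  nlinarith

lemma phi_lower (x δ : ℝ) (hx : 0 < x) (hδ : 0 ≤ δ) :
    δ * (1 + Real.log x) ≤ (x+δ) * Real.log (x+δ) - x * Real.log x := by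
  have hxd : 0 < x + δ := by linarith
  have h1 : δ / (x+δ) ≤ Real.log (x+δ) - Real.log x := by
    have h := Real.log_le_sub_one_of_pos (show 0 < x/(x+δ) by positivity)
    rw [Real.log_div hx.ne' hxd.ne'] at h
    have h3 : x/(x+δ) - 1 = -(δ/(x+δ)) := by field_simp; ring
    linarith
  have h2 : δ ≤ (x+δ) * (Real.log (x+δ) - Real.log x) := by
    calc δ = (x+δ) * (δ/(x+δ)) := by field_simp
      _ ≤ (x+δ) * (Real.log (x+δ) - Real.log x) := mul_le_mul_of_nonneg_left h1 hxd.le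
  nlinarith

lemma Xr (μ z b c δ : ℝ) (hμ : 0 < μ) (hz : 0 < z) (hb : 0 < b) (hc : 0 < c)
    (hδ0 : 0 ≤ δ) (hδ1 : δ ≤ 1) (hr : b*c ≤ (μ+δ)*(z+δ)) :
    b*c/((μ+δ)*(z+δ)) ≤ Real.exp ((μ * Real.log μ + (b+δ) * Real.log (b+δ)
      + (c+δ) * Real.log (c+δ) + z * Real.log z)
      - ((μ+δ) * Real.log (μ+δ) + b * Real.log b + c * Real.log c + (z+δ) * Real.log (z+δ))) := by
  set E := (μ * Real.log μ + (b+δ) * Real.log (b+δ) + (c+δ) * Real.log (c+δ) + z * Real.log z)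
      - ((μ+δ) * Real.log (μ+δ) + b * Real.log b + c * Real.log c + (z+δ) * Real.log (z+δ)) with hE
  have hμδ : 0 < μ + δ := by linarith
  have hzδ : 0 < z + δ := by linarith
  set r : ℝ := b*c/((μ+δ)*(z+δ)) with hrdef
  have hr0 : 0 < r := by positivity
  have hr1 : r ≤ 1 := by
    rw [hrdef, div_le_one (by positivity)]; exact hr
  have hlog : δ * Real.log r ≤ E := by
    have h1 := phi_upper μ δ hμ hδ0
    have h2 := phi_upper z δ hz hδ0
    have h3 := phi_lower b δ hb hδ0
    have h4 := phi_lower c δ hc hδ0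
    have hlr : Real.log r = Real.log b + Real.log c - Real.log (μ+δ) - Real.log (z+δ) := by
      rw [hrdef, Real.log_div (by positivity) (by positivity),
        Real.log_mul (by positivity) (by positivity), Real.log_mul (by positivity) (by positivity)]
      ring
    rw [hlr, hE]; nlinarith
  calc r = r ^ (1:ℝ) := by rw [Real.rpow_one]
    _ ≤ r ^ δ := Real.rpow_le_rpow_of_exponent_ge hr0 hr1 hδ1
    _ = Real.exp (δ * Real.log r) := by
        rw [Real.rpow_def_of_pos hr0, mul_comm]
    _ ≤ Real.exp E := Real.exp_le_exp.mpr hlog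


lemma sqrtpi_le_stirling (n : ℕ) : Real.sqrt π ≤ Stirling.stirlingSeq (n+1) := by
  have h := Stirling.stirlingSeq'_antitone
  have ht : Filter.Tendsto (Stirling.stirlingSeq ∘ Nat.succ) Filter.atTop (nhds (Real.sqrt π)) :=
    Stirling.tendsto_stirlingSeq_sqrt_pi.comp (Filter.tendsto_add_atTop_nat 1)
  exact h.le_of_tendsto ht n

lemma stirling_le' (n : ℕ) : Stirling.stirlingSeq (n+1) ≤ Real.exp 1 / Real.sqrt 2 := by
  have h := Stirling.stirlingSeq'_antitone (Nat.zero_le n)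
  simpa using h

lemma log_aux (j : ℕ) (x : ℝ) (hx : 0 < x) :
    Real.log (Real.sqrt (2*x) * (x / Real.exp 1) ^ j)
      = (1/2) * (Real.log 2 + Real.log x) + (j:ℝ) * (Real.log x - 1) := by
  rw [Real.log_mul (by positivity) (by positivity), Real.log_sqrt (by positivity),
    Real.log_mul (by norm_num) hx.ne', Real.log_pow,
    Real.log_div hx.ne' (Real.exp_ne_zero 1), Real.log_exp]
  ring

lemma log_fact_lower (j : ℕ) (hj : 1 ≤ j) :
    (1/2) * Real.log (2*π) + (1/2) * Real.log j + (j:ℝ) * Real.log j - j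
      ≤ Real.log (Nat.factorial j) := by
  obtain ⟨l, rfl⟩ := Nat.exists_eq_succ_of_ne_zero (by omega : j ≠ 0)
  have h := sqrtpi_le_stirling l
  rw [Stirling.stirlingSeq] at h
  have hj0 : (0:ℝ) < ((l+1 : ℕ) : ℝ) := by positivity
  have hpos : 0 < Real.sqrt (2 * (l+1 : ℕ) : ℝ) * (((l+1 : ℕ) : ℝ) / Real.exp 1) ^ (l+1) := by
    positivity
  rw [le_div_iff₀ hpos] at h
  have h2 := Real.log_le_log (by positivity) h
  rw [Real.log_mul (by positivity) hpos.ne', Real.log_sqrt Real.pi_pos.le,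
    log_aux (l+1) _ hj0] at h2
  rw [Real.log_mul (by norm_num) Real.pi_pos.ne']
  push_cast at h2 ⊢
  linarith
lemma log_fact_upper (j : ℕ) (hj : 1 ≤ j) :
    Real.log (Nat.factorial j)
      ≤ 1 + (1/2) * Real.log j + (j:ℝ) * Real.log j - j := by
  obtain ⟨l, rfl⟩ := Nat.exists_eq_succ_of_ne_zero (by omega : j ≠ 0)
  have h := stirling_le' l
  rw [Stirling.stirlingSeq] at h
  have hj0 : (0:ℝ) < ((l+1 : ℕ) : ℝ) := by positivity
  have hpos : 0 < Real.sqrt (2 * (l+1 : ℕ) : ℝ) * (((l+1 : ℕ) : ℝ) / Real.exp 1) ^ (l+1) := by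
    positivity
  rw [div_le_iff₀ hpos] at h
  have hfp : (0:ℝ) < (Nat.factorial (l+1) : ℝ) := by exact_mod_cast (l+1).factorial_pos
  have h2 := Real.log_le_log hfp h
  rw [Real.log_mul (by positivity) hpos.ne',
    Real.log_div (Real.exp_ne_zero 1) (by positivity), Real.log_exp,
    Real.log_sqrt (by norm_num), log_aux (l+1) _ hj0] at h2
  have hlog2 : (0:ℝ) ≤ Real.log 2 := Real.log_nonneg (by norm_num)
  push_cast at h2 ⊢
  linarith


lemma VID (I J K L : ℝ) (hI : 0 < I) (hJ : 0 < J) (hK : 0 < K) (hL : 0 < L)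
    (h : I + J = K + L) :
    I * Real.log I + J * Real.log J + K * Real.log K + L * Real.log L
        - (I+J) * Real.log (I+J)
      = (I*K/(I+J)) * Real.log (I*K/(I+J)) + (I*L/(I+J)) * Real.log (I*L/(I+J))
        + (J*K/(I+J)) * Real.log (J*K/(I+J)) + (J*L/(I+J)) * Real.log (J*L/(I+J)) := by
  have hN : 0 < I + J := by linarith
  rw [Real.log_div (by positivity) hN.ne', Real.log_mul hI.ne' hK.ne',
      Real.log_div (by positivity) hN.ne', Real.log_mul hI.ne' hL.ne',
      Real.log_div (by positivity) hN.ne', Real.log_mul hJ.ne' hK.ne',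
      Real.log_div (by positivity) hN.ne', Real.log_mul hJ.ne' hL.ne']
  field_simp
  linear_combination ((I*Real.log I + J*Real.log J - (I+J)*Real.log (I+J)) ) * h

-- combinatorial inequality (T'')
lemma T2 (m B C D N : ℝ) (hm : 1 ≤ m) (hB : 1 ≤ B) (hC : 1 ≤ C) (hD : 1 ≤ D)
    (hN : N = m + B + C + D) (hub : m * D ≤ B * C + N) :
    (m+B) * (C+D) * (m*D) ≤ (33/4) * N^2 * (B*C) := by
  have hN4 : 4 ≤ N := by linarith
  rcases le_or_gt N (2*(B*C)) with h2 | h2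
  · have e1 : (m+B)*(C+D) ≤ N^2/4 := by nlinarith [sq_nonneg ((m+B)-(C+D))]
    have e2 : m*D ≤ 3*(B*C) := by linarith
    have e3 : 0 ≤ (m+B)*(C+D) := by nlinarith
    calc (m+B)*(C+D)*(m*D) ≤ (N^2/4) * (3*(B*C)) := by
          apply mul_le_mul e1 e2 (by nlinarith) (by positivity)
      _ ≤ (33/4) * N^2 * (B*C) := by nlinarith
  · have hBC : 1 ≤ B*C := by nlinarith
    have e3 : m*D ≤ (3/2)*N := by nlinarith
    have em : m ≤ (3/2)*N := by nlinarith
    have eD : D ≤ (3/2)*N := by nlinarith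
    have hN0 : (0:ℝ) ≤ N := by linarith
    have ha : m*C ≤ (3/2)*N*C := mul_le_mul_of_nonneg_right em (by linarith)
    have hb : B*D ≤ B*((3/2)*N) := mul_le_mul_of_nonneg_left eD (by linarith)
    have hc : (3/2)*N*C ≤ (3/2)*(N*(B*C)) := by nlinarith [mul_nonneg (mul_nonneg hN0 (by linarith : (0:ℝ) ≤ C)) (by linarith : (0:ℝ) ≤ B - 1)]
    have hd : B*((3/2)*N) ≤ (3/2)*(N*(B*C)) := by nlinarith [mul_nonneg (mul_nonneg hN0 (by linarith : (0:ℝ) ≤ B)) (by linarith : (0:ℝ) ≤ C - 1)]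
    have he : m*D ≤ (3/2)*(N*(B*C)) := by nlinarith [mul_nonneg hN0 (by linarith : (0:ℝ) ≤ B*C - 1)]
    have hf : B*C ≤ (1/2)*(N*(B*C)) := by nlinarith [mul_nonneg (by linarith : (0:ℝ) ≤ N - 2) (by linarith : (0:ℝ) ≤ B*C)]
    have expand : (m+B)*(C+D) = m*C + m*D + B*C + B*D := by ring
    have e4 : (m+B)*(C+D) ≤ 5*N*(B*C) := by rw [expand]; linarith
    have hmD0 : (0 : ℝ) ≤ m*D := by positivity
    have h5 : (0:ℝ) ≤ 5*N*(B*C) := by positivity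
    calc (m+B)*(C+D)*(m*D) ≤ (5*N*(B*C)) * ((3/2)*N) :=
          mul_le_mul e4 e3 hmD0 h5
      _ = (15/2) * N^2 * (B*C) := by ring
      _ ≤ (33/4) * N^2 * (B*C) := by
          have : (0:ℝ) ≤ N^2 * (B*C) := by positivity
          linarith

lemma choose_int_id (a r : ℕ) :
    ((a:ℤ) - r) * (a.choose r) = (r+1) * (a.choose (r+1)) := by
  rcases le_or_gt r a with h | h
  · have h0 := Nat.choose_succ_right_eq a r
    have h2 : ((a.choose (r+1)) * (r+1) : ℤ) = (a.choose r) * ((a:ℤ) - r) := by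
      have := congrArg (Nat.cast : ℕ → ℤ) h0
      push_cast [Nat.cast_sub h] at this
      linarith
    linarith
  · rw [Nat.choose_eq_zero_of_lt h, Nat.choose_eq_zero_of_lt (by omega)]
    simp

lemma sum_tele (i k n : ℕ) (hin : i ≤ n) : ∀ M, M ≤ k →
    ∑ j ∈ Finset.range M, (((i:ℤ)*k - j*n) * (i.choose j) * ((n-i).choose (k-j)))
      = M * ((n:ℤ) + M - i - k) * (i.choose M) * ((n-i).choose (k-M)) := by
  intro M
  induction M with
  | zero => simp
  | succ M ih =>
    intro hM
    rw [Finset.sum_range_succ, ih (by omega)]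
    have e1 : ((i:ℤ) - M) * (i.choose M) = (M+1) * (i.choose (M+1)) := choose_int_id i M
    have e2 : (((n-i:ℕ):ℤ) - ((k-M-1:ℕ):ℤ)) * ((n-i).choose (k-M-1))
        = ((k-M-1:ℕ)+1) * ((n-i).choose ((k-M-1)+1)) := choose_int_id (n-i) (k-M-1)
    have hkM : (k - M - 1 : ℕ) + 1 = k - M := by omega
    rw [hkM] at e2
    have hc1 : ((k-M-1:ℕ):ℤ) = (k:ℤ) - M - 1 := by
      omega
    have hc2 : ((n-i:ℕ):ℤ) = (n:ℤ) - i := by push_cast [Nat.cast_sub hin]; ring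
    rw [hc1, hc2] at e2
    have hidx : k - (M+1) = k - M - 1 := by omega
    rw [hidx]
    push_cast
    linear_combination (((k:ℤ) - M) * (((n-i).choose (k-M)) : ℤ)) * e1
      - (((M:ℤ)+1) * ((i.choose (M+1)) : ℤ)) * e2

lemma mad_lb (m B C D : ℕ) (hm : 2 ≤ m) (hB : 1 ≤ B) (hC : 1 ≤ C) (hD : 1 ≤ D) :
    (m:ℝ) * (D:ℝ) / ((m+B+C+D : ℕ):ℝ) * hypPMF (m+B+C+D) (m+B) (m+C) m
      ≤ hypMAD (m+B+C+D) (m+B) (m+C) := by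
  set n := m+B+C+D with hn
  set i := m+B with hi
  set k := m+C with hk
  have hμ : ∀ j : ℕ, ((i:ℝ)*(k:ℝ)/(n:ℝ) - j) = (((i:ℤ)*k - j*n : ℤ) : ℝ)/(n:ℝ) := by
    intro j
    have hn0 : (n:ℝ) ≠ 0 := by exact_mod_cast (show n ≠ 0 by omega)
    push_cast
    field_simp
  have hpmf_nonneg : ∀ j, 0 ≤ hypPMF n i k j := by
    intro j; unfold hypPMF; positivity
  -- step 1: MAD ≥ partial sum
  have step1 : ∑ j ∈ Finset.range m, ((i:ℝ)*(k:ℝ)/(n:ℝ) - j) * hypPMF n i k j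
      ≤ hypMAD n i k := by
    unfold hypMAD
    calc ∑ j ∈ Finset.range m, ((i:ℝ)*(k:ℝ)/(n:ℝ) - j) * hypPMF n i k j
        ≤ ∑ j ∈ Finset.range m, |(j:ℝ) - (i:ℝ)*(k:ℝ)/(n:ℝ)| * hypPMF n i k j := by
          apply Finset.sum_le_sum
          intro j hj
          apply mul_le_mul_of_nonneg_right _ (hpmf_nonneg j)
          rw [abs_sub_comm]
          exact le_abs_self _
      _ ≤ ∑ j ∈ Finset.range (k+1), |(j:ℝ) - (i:ℝ)*(k:ℝ)/(n:ℝ)| * hypPMF n i k j := by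
          apply Finset.sum_le_sum_of_subset_of_nonneg
          · apply Finset.range_subset_range.mpr; omega
          · intro j _ _
            exact mul_nonneg (abs_nonneg _) (hpmf_nonneg j)
  -- step 2: partial sum equals (m D / n) p_m
  have key := sum_tele i k n (by omega) m (by omega)
  have hND : ((n:ℤ) + m - i - k) = (D:ℤ) := by push_cast [hn, hi, hk]; ring
  rw [hND] at key
  have hCn : (0:ℝ) < (n.choose k : ℝ) := by
    exact_mod_cast Nat.choose_pos (by omega : k ≤ n)
  have hn0 : (0:ℝ) < (n:ℝ) := by positivity
  have step2 : ∑ j ∈ Finset.range m, ((i:ℝ)*(k:ℝ)/(n:ℝ) - j) * hypPMF n i k j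
      = (m:ℝ) * (D:ℝ) / (n:ℝ) * hypPMF n i k m := by
    have lhs_eq : ∑ j ∈ Finset.range m, ((i:ℝ)*(k:ℝ)/(n:ℝ) - j) * hypPMF n i k j
        = (∑ j ∈ Finset.range m,
            (((i:ℤ)*k - j*n : ℤ):ℝ) * (i.choose j : ℝ) * ((n-i).choose (k-j) : ℝ))
          / ((n:ℝ) * (n.choose k : ℝ)) := by
      rw [Finset.sum_div]
      apply Finset.sum_congr rfl
      intro j _
      rw [hμ j]
      unfold hypPMF
      field_simp
    rw [lhs_eq]
    have keyR := congrArg ((Int.cast : ℤ → ℝ)) key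
    push_cast at keyR ⊢
    rw [keyR]
    unfold hypPMF
    field_simp
  linarith [step1, step2.symm.le, step2.le]

lemma pm_eq (m B C D : ℕ) :
    hypPMF (m+B+C+D) (m+B) (m+C) m
      = ((m+B).factorial * (C+D).factorial * (m+C).factorial * (B+D).factorial : ℝ)
        / ((m+B+C+D).factorial * (m.factorial * B.factorial * C.factorial * D.factorial)) := by
  unfold hypPMF
  rw [show (m+B+C+D) - (m+B) = C+D by omega, show (m+C) - m = C by omega]
  have h1 := Nat.choose_mul_factorial_mul_factorial (show m ≤ m+B by omega)
  rw [show (m+B) - m = B by omega] at h1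
  have h2 := Nat.choose_mul_factorial_mul_factorial (show C ≤ C+D by omega)
  rw [show (C+D) - C = D by omega] at h2
  have h3 := Nat.choose_mul_factorial_mul_factorial (show m+C ≤ m+B+C+D by omega)
  rw [show (m+B+C+D) - (m+C) = B+D by omega] at h3
  have e1 : ((m+B).choose m : ℝ) * (m.factorial * B.factorial) = (m+B).factorial := by
    push_cast [← h1]; ring
  have e2 : ((C+D).choose C : ℝ) * (C.factorial * D.factorial) = (C+D).factorial := by
    push_cast [← h2]; ring
  have e3 : ((m+B+C+D).choose (m+C) : ℝ) * ((m+C).factorial * (B+D).factorial) = (m+B+C+D).factorial := by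
    push_cast [← h3]; ring
  have hc3 : (0:ℝ) < ((m+B+C+D).choose (m+C) : ℝ) := by
    exact_mod_cast Nat.choose_pos (show m+C ≤ m+B+C+D by omega)
  have hf : ∀ j : ℕ, (0:ℝ) < (j.factorial : ℝ) := fun j => by exact_mod_cast j.factorial_pos
  rw [← e1, ← e2, ← e3]
  have h4 := hf m; have h5 := hf B; have h6 := hf C; have h7 := hf D
  have h8 := hf (m+C); have h9 := hf (B+D)
  field_simp
lemma log_two_pi_lb : (7/4 : ℝ) ≤ Real.log (2*π) := by
  rw [Real.le_log_iff_exp_le (by positivity)]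
  have h1 : Real.exp (7/4) ^ (4:ℕ) = Real.exp 7 := by
    rw [← Real.exp_nat_mul]; norm_num
  apply le_of_pow_le_pow_left₀ (n := 4) (by norm_num) (by positivity)
  rw [h1]
  have h2 : Real.exp 7 = Real.exp 1 ^ (7:ℕ) := by
    rw [← Real.exp_nat_mul]; norm_num
  have h3 : Real.exp 1 ^ (7:ℕ) ≤ (2.7182818286 : ℝ) ^ (7:ℕ) :=
    pow_le_pow_left₀ (Real.exp_pos 1).le Real.exp_one_lt_d9.le 7
  have h4 : (2*3.141592 : ℝ)^(4:ℕ) ≤ (2*π)^(4:ℕ) := by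
    apply pow_le_pow_left₀ (by norm_num)
    linarith [Real.pi_gt_d6]
  calc Real.exp 7 ≤ (2.7182818286 : ℝ) ^ (7:ℕ) := h2 ▸ h3
    _ ≤ (2*3.141592 : ℝ)^(4:ℕ) := by norm_num
    _ ≤ (2*π)^(4:ℕ) := h4

lemma log_334 : Real.log (33/4 : ℝ) ≤ 3 * Real.log 2 + 1/32 := by
  have h1 : (33/4 : ℝ) = 2^(3:ℕ) * (33/32) := by norm_num
  rw [h1, Real.log_mul (by positivity) (by norm_num), Real.log_pow]
  have h2 := Real.log_le_sub_one_of_pos (show (0:ℝ) < 33/32 by norm_num)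
  push_cast
  linarith

lemma final_real (em eB eC eD N μ δ z pm mad : ℝ)
    (hm : 2 ≤ em) (hB : 1 ≤ eB) (hC : 1 ≤ eC) (hD : 1 ≤ eD)
    (hN : N = em + eB + eC + eD)
    (hμdef : μ = (em+eB)*(em+eC)/N)
    (hμδ : μ + δ = em)
    (hzδ : z + δ = eD)
    (hδ0 : 0 ≤ δ) (hδ1 : δ ≤ 1)
    (hpm : 0 < pm)
    (hlogpm :
      2*Real.log (2*π)
      + (1/2)*(Real.log (em+eB) + Real.log (eC+eD) + Real.log (em+eC) + Real.log (eB+eD))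
      + ((em+eB)*Real.log (em+eB) + (eC+eD)*Real.log (eC+eD)
         + (em+eC)*Real.log (em+eC) + (eB+eD)*Real.log (eB+eD))
      - ((em+eB) + (eC+eD) + (em+eC) + (eB+eD))
      - (5 + (1/2)*(Real.log N + Real.log em + Real.log eB + Real.log eC + Real.log eD)
         + (N*Real.log N + em*Real.log em + eB*Real.log eB + eC*Real.log eC + eD*Real.log eD)
         - (N + em + eB + eC + eD))
      ≤ Real.log pm)
    (hmad : em * eD / N * pm ≤ mad) :
    Real.exp (-1/3) / (8 * Real.sqrt (2*π)) * Real.sqrt ((em+eC)/N) * Real.sqrt (eB+eD) / N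
      ≤ N / (2*(em+eB)*(eC+eD)) * mad := by
  have hN0 : (0:ℝ) < N := by linarith
  have hI0 : (0:ℝ) < em + eB := by linarith
  have hJ0 : (0:ℝ) < eC + eD := by linarith
  have hK0 : (0:ℝ) < em + eC := by linarith
  have hL0 : (0:ℝ) < eB + eD := by linarith
  have hμ0 : (0:ℝ) < μ := by rw [hμdef]; positivity
  have hem0 : (0:ℝ) < em := by linarith
  have heB0 : (0:ℝ) < eB := by linarith
  have heC0 : (0:ℝ) < eC := by linarith
  have heD0 : (0:ℝ) < eD := by linarith
  have hδe : δ = em - (em+eB)*(em+eC)/N := by rw [← hμdef]; linarith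
  have hzdef : z = (eC+eD)*(eB+eD)/N := by
    have hz2 : z = eD - δ := by linarith
    rw [hz2, hδe, hN]; field_simp; ring
  have hz0 : (0:ℝ) < z := by rw [hzdef]; positivity
  -- rewrite VID
  have hvid := VID (em+eB) (eC+eD) (em+eC) (eB+eD) hI0 hJ0 hK0 hL0 (by ring)
  rw [show (em+eB)+(eC+eD) = N by rw [hN]; ring] at hvid
  rw [← hμdef] at hvid
  have hBδeq : (em+eB)*(eB+eD)/N = eB + δ := by
    rw [hδe, hN]; field_simp; ring
  have hCδeq : (eC+eD)*(em+eC)/N = eC + δ := by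
    rw [hδe, hN]; field_simp; ring
  have hzeq : (eC+eD)*(eB+eD)/N = z := hzdef.symm
  rw [hBδeq, hCδeq, hzeq] at hvid
  -- phi bounds
  have phiU1 := phi_upper μ δ hμ0 hδ0
  rw [hμδ] at phiU1
  have phiU2 := phi_upper z δ hz0 hδ0
  rw [hzδ] at phiU2
  have phiL1 := phi_lower eB δ heB0 hδ0
  have phiL2 := phi_lower eC δ heC0 hδ0
  -- δ*w ≥ w
  have hprod : eB*eC ≤ em*eD := by
    have h := (div_le_iff₀ hN0).mp (le_of_eq_of_le hμdef.symm (by linarith : μ ≤ em))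
    nlinarith [h]
  have hw : Real.log eB + Real.log eC - Real.log em - Real.log eD ≤ 0 := by
    have h := Real.log_le_log (by positivity) hprod
    rw [Real.log_mul heB0.ne' heC0.ne', Real.log_mul hem0.ne' heD0.ne'] at h
    linarith
  have hδW : Real.log eB + Real.log eC - Real.log em - Real.log eD
      ≤ (δ*(1+Real.log eB) + δ*(1+Real.log eC)) - (δ*(1+Real.log em) + δ*(1+Real.log eD)) := by
    nlinarith [mul_nonneg (sub_nonneg.2 hδ1) (neg_nonneg.2 hw)]
  -- T'' log form
  have hub : em * eD ≤ eB * eC + N := by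
    have h := (le_div_iff₀ hN0).mp (le_of_le_of_eq (by linarith : em - 1 ≤ μ) hμdef)
    nlinarith [h]
  have hT2 := T2 em eB eC eD N (by linarith) hB hC hD hN hub
  have hT2log : Real.log (em+eB) + Real.log (eC+eD) + Real.log em + Real.log eD
      ≤ Real.log (33/4) + 2*Real.log N + Real.log eB + Real.log eC := by
    have h := Real.log_le_log (by positivity) hT2
    rw [Real.log_mul (by positivity) (by positivity), Real.log_mul (by positivity) (by positivity),
      Real.log_mul hem0.ne' heD0.ne'] at h
    rw [Real.log_mul (by positivity) (by positivity), Real.log_mul (by norm_num) (by positivity),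
      Real.log_mul heB0.ne' heC0.ne', Real.log_pow] at h
    push_cast at h
    linarith
  -- numerics
  have hlog2 := Real.log_two_gt_d9
  have h2pi := log_two_pi_lb
  have h334 := log_334
  -- reduce goal
  have hSpos : (0:ℝ) < em * eD / (2*(em+eB)*(eC+eD)) * pm := by positivity
  have hTpos : (0:ℝ) < Real.exp (-1/3) / (8 * Real.sqrt (2*π)) * Real.sqrt ((em+eC)/N) * Real.sqrt (eB+eD) / N := by
    have : (0:ℝ) < (em+eC)/N := by positivity
    positivity
  have main : Real.exp (-1/3) / (8 * Real.sqrt (2*π)) * Real.sqrt ((em+eC)/N) * Real.sqrt (eB+eD) / N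
      ≤ em * eD / (2*(em+eB)*(eC+eD)) * pm := by
    rw [← Real.exp_log hTpos, ← Real.exp_log hSpos]
    apply Real.exp_le_exp.mpr
    have e1 : Real.log (Real.exp (-1/3) / (8 * Real.sqrt (2*π)) * Real.sqrt ((em+eC)/N) * Real.sqrt (eB+eD) / N)
        = (-1/3) - (Real.log 8 + (1/2)*Real.log (2*π))
          + (1/2)*(Real.log (em+eC) - Real.log N) + (1/2)*Real.log (eB+eD) - Real.log N := by
      rw [Real.log_div (by positivity) hN0.ne', Real.log_mul (by positivity) (by positivity),
        Real.log_mul (by positivity) (by positivity),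
        Real.log_div (by positivity) (by positivity), Real.log_exp,
        Real.log_mul (by norm_num) (by positivity),
        Real.log_sqrt (by positivity), Real.log_sqrt (by positivity),
        Real.log_sqrt (by positivity),
        Real.log_div hK0.ne' hN0.ne']
      ring
    have e2 : Real.log (em * eD / (2*(em+eB)*(eC+eD)) * pm)
        = Real.log em + Real.log eD
          - (Real.log 2 + Real.log (em+eB) + Real.log (eC+eD)) + Real.log pm := by
      rw [Real.log_mul (by positivity) hpm.ne', Real.log_div (by positivity) (by positivity),
        Real.log_mul hem0.ne' heD0.ne', Real.log_mul (by positivity) hJ0.ne',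
        Real.log_mul (by norm_num) hI0.ne']
    rw [e1, e2]
    have hlog8 : Real.log 8 = 3 * Real.log 2 := by
      rw [show (8:ℝ) = 2^(3:ℕ) by norm_num, Real.log_pow]; push_cast; ring
    rw [hlog8]
    linarith [hlogpm, hvid, phiU1, phiU2, phiL1, phiL2, hδW, hT2log, hlog2, h2pi, h334]
  calc Real.exp (-1/3) / (8 * Real.sqrt (2*π)) * Real.sqrt ((em+eC)/N) * Real.sqrt (eB+eD) / N
      ≤ em * eD / (2*(em+eB)*(eC+eD)) * pm := main
    _ = N / (2*(em+eB)*(eC+eD)) * (em * eD / N * pm) := by field_simp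
    _ ≤ N / (2*(em+eB)*(eC+eD)) * mad := by
        apply mul_le_mul_of_nonneg_left hmad (by positivity)

end aux

/-- Lower bound on the scaled mean absolute deviation of a hypergeometric random
variable when its mean is neither too small nor too large. -/
theorem hyp_mad_lower_bound_middle
    (n i k m : ℕ) (hn : 2 ≤ n)
    (hi : i ∈ Finset.Icc 1 (n - 1)) (hk : k ∈ Finset.Icc 1 (n - 1))
    (hm : m ∈ Finset.Icc 2 (min i k - 1))
    (hmean₁ : (m : ℝ) - 1 ≤ (i : ℝ) * k / n) (hmean₂ : (i : ℝ) * k / n ≤ m) :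
    Real.exp (-1/3) / (8 * Real.sqrt (2 * Real.pi))
        * Real.sqrt ((k : ℝ) / n) * Real.sqrt ((n : ℝ) - k) / n
      ≤ (n : ℝ) / (2 * i * ((n : ℝ) - i)) * hypMAD n i k := by
  simp only [Finset.mem_Icc] at hi hk hm
  have hm2 : 2 ≤ m := hm.1
  have hmi : m + 1 ≤ i := by omega
  have hmk : m + 1 ≤ k := by omega
  have hn0 : (0:ℝ) < (n:ℝ) := by exact_mod_cast Nat.lt_of_lt_of_le Nat.zero_lt_two hn
  -- i + k + 1 ≤ n + m
  have hikr : (i:ℝ)*k ≤ (n:ℝ)*m := by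
    have := (div_le_iff₀ hn0).mp hmean₂
    linarith
  have hikn : i * k ≤ n * m := by exact_mod_cast hikr
  have hiknm : i + k + 1 ≤ n + m := by
    by_contra hcon
    push_neg at hcon
    have h1 : (1:ℤ) ≤ (n:ℤ) - i := by omega
    have h2 : (1:ℤ) ≤ (n:ℤ) - k := by omega
    have h3 : (1:ℤ) ≤ ((n:ℤ) - i) * ((n:ℤ) - k) := by nlinarith
    have h4 : (n:ℤ) + m ≤ i + k := by omega
    have h5 : (i:ℤ) * k ≤ (n:ℤ) * m := by exact_mod_cast hikn
    have hnz : (2:ℤ) ≤ n := by exact_mod_cast hn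
    nlinarith [mul_le_mul_of_nonneg_left h4 (by omega : (0:ℤ) ≤ n)]
  obtain ⟨B, hB1, hiB⟩ : ∃ B, 1 ≤ B ∧ i = m + B := ⟨i - m, by omega, by omega⟩
  obtain ⟨C, hC1, hkC⟩ : ∃ C, 1 ≤ C ∧ k = m + C := ⟨k - m, by omega, by omega⟩
  subst hiB hkC
  obtain ⟨D, hD1, hnD⟩ : ∃ D, 1 ≤ D ∧ n = m + B + C + D := ⟨n + m - (m+B) - (m+C), by omega, by omega⟩
  subst hnD
  have hfp : ∀ j : ℕ, (0:ℝ) < (Nat.factorial j : ℝ) := fun j => by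
    exact_mod_cast j.factorial_pos
  have hmadlb := mad_lb m B C D hm2 hB1 hC1 hD1
  have hpmeq := pm_eq m B C D
  have hpm0 : 0 < hypPMF (m+B+C+D) (m+B) (m+C) m := by
    rw [hpmeq]
    apply div_pos
    · have := hfp (m+B); have := hfp (C+D); have := hfp (m+C); have := hfp (B+D)
      positivity
    · have := hfp (m+B+C+D); have := hfp m; have := hfp B; have := hfp C; have := hfp D
      positivity
  -- Stirling bounds on log pmf
  have l1 := log_fact_lower (m+B) (by omega)
  have l2 := log_fact_lower (C+D) (by omega)
  have l3 := log_fact_lower (m+C) (by omega)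
  have l4 := log_fact_lower (B+D) (by omega)
  have u1 := log_fact_upper (m+B+C+D) (by omega)
  have u2 := log_fact_upper m (by omega)
  have u3 := log_fact_upper B (by omega)
  have u4 := log_fact_upper C (by omega)
  have u5 := log_fact_upper D (by omega)
  have hlogpmf_eq : Real.log (hypPMF (m+B+C+D) (m+B) (m+C) m)
      = Real.log (Nat.factorial (m+B)) + Real.log (Nat.factorial (C+D))
        + Real.log (Nat.factorial (m+C)) + Real.log (Nat.factorial (B+D))
        - (Real.log (Nat.factorial (m+B+C+D)) + Real.log (Nat.factorial m)
           + Real.log (Nat.factorial B) + Real.log (Nat.factorial C)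
           + Real.log (Nat.factorial D)) := by
    have p1 := hfp (m+B); have p2 := hfp (C+D); have p3 := hfp (m+C); have p4 := hfp (B+D)
    have p5 := hfp (m+B+C+D); have p6 := hfp m; have p7 := hfp B; have p8 := hfp C
    have p9 := hfp D
    rw [hpmeq, Real.log_div (by positivity) (by positivity),
      Real.log_mul (by positivity) p4.ne', Real.log_mul (by positivity) p3.ne',
      Real.log_mul p1.ne' p2.ne',
      Real.log_mul p5.ne' (by positivity),
      Real.log_mul (by positivity) p9.ne',
      Real.log_mul (by positivity) p8.ne',
      Real.log_mul p6.ne' p7.ne']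
    ring
  have hlogpm : 2*Real.log (2*π)
      + (1/2)*(Real.log ((m:ℝ)+B) + Real.log ((C:ℝ)+D) + Real.log ((m:ℝ)+C) + Real.log ((B:ℝ)+D))
      + (((m:ℝ)+B)*Real.log ((m:ℝ)+B) + ((C:ℝ)+D)*Real.log ((C:ℝ)+D)
         + ((m:ℝ)+C)*Real.log ((m:ℝ)+C) + ((B:ℝ)+D)*Real.log ((B:ℝ)+D))
      - (((m:ℝ)+B) + ((C:ℝ)+D) + ((m:ℝ)+C) + ((B:ℝ)+D))
      - (5 + (1/2)*(Real.log ((m:ℝ)+B+C+D) + Real.log (m:ℝ) + Real.log (B:ℝ) + Real.log (C:ℝ) + Real.log (D:ℝ))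
         + (((m:ℝ)+B+C+D)*Real.log ((m:ℝ)+B+C+D) + (m:ℝ)*Real.log (m:ℝ) + (B:ℝ)*Real.log (B:ℝ)
            + (C:ℝ)*Real.log (C:ℝ) + (D:ℝ)*Real.log (D:ℝ))
         - (((m:ℝ)+B+C+D) + (m:ℝ) + (B:ℝ) + (C:ℝ) + (D:ℝ)))
      ≤ Real.log (hypPMF (m+B+C+D) (m+B) (m+C) m) := by
    rw [hlogpmf_eq]
    push_cast at l1 l2 l3 l4 u1 u2 u3 u4 u5
    linarith
  push_cast at hmean₁ hmean₂ hmadlb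
  have FR := final_real (m:ℝ) (B:ℝ) (C:ℝ) (D:ℝ) ((m:ℝ)+B+C+D)
      (((m:ℝ)+B)*((m:ℝ)+C)/((m:ℝ)+B+C+D))
      ((m:ℝ) - ((m:ℝ)+B)*((m:ℝ)+C)/((m:ℝ)+B+C+D))
      ((D:ℝ) - ((m:ℝ) - ((m:ℝ)+B)*((m:ℝ)+C)/((m:ℝ)+B+C+D)))
      (hypPMF (m+B+C+D) (m+B) (m+C) m) (hypMAD (m+B+C+D) (m+B) (m+C))
      (by exact_mod_cast hm2) (by exact_mod_cast hB1) (by exact_mod_cast hC1)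
      (by exact_mod_cast hD1) (by ring) rfl (by ring) (by ring)
      (by linarith) (by linarith) hpm0 hlogpm hmadlb
  push_cast
  rw [show ((m:ℝ)+B+C+D) - ((m:ℝ)+C) = (B:ℝ)+D from by ring,
      show ((m:ℝ)+B+C+D) - ((m:ℝ)+B) = (C:ℝ)+D from by ring]
  exact FR
end

section
/- Let H ~ Hyp(n,i,k) with mean ik/n = 1 and i > 1. Then (n/(2i(n-i)))·E|H - ik/n| = (k/(i(k-1)))·P(H = 0), and moreover this quantity equals ((ik-i-k+1)/(i²(k-1)))·P(H = 1). -/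
open Finset

lemma vandermonde_range (a b k : ℕ) :
    ∑ m ∈ Finset.range (k+1), a.choose m * b.choose (k-m) = (a+b).choose k := by
  rw [Nat.add_choose_eq, Finset.Nat.sum_antidiagonal_eq_sum_range_succ_mk]

lemma weighted_vandermonde (a b k : ℕ) :
    ∑ m ∈ Finset.range (k+2), m * (a+1).choose m * b.choose (k+1-m)
      = (a+1) * (a+b).choose k := by
  rw [Finset.sum_range_succ']
  simp only [Nat.zero_eq, Nat.choose_zero_right, zero_mul, add_zero]
  have h : ∀ m, (m+1) * (a+1).choose (m+1) * b.choose (k+1-(m+1))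
      = (a+1) * (a.choose m * b.choose (k-m)) := by
    intro m
    have h1 := Nat.add_one_mul_choose_eq a m
    have hs : k + 1 - (m+1) = k - m := by omega
    rw [hs]
    calc (m+1) * (a+1).choose (m+1) * b.choose (k-m)
        = ((a+1).choose (m+1) * (m+1)) * b.choose (k-m) := by ring
      _ = ((a+1) * a.choose m) * b.choose (k-m) := by
          rw [← h1]
      _ = (a+1) * (a.choose m * b.choose (k-m)) := by ring
  rw [Finset.sum_congr rfl fun m _ => h m, ← Finset.mul_sum, vandermonde_range]

lemma mad_eq_two_p0 (n i k : ℕ) (hn : n = i * k) (hi1 : 1 < i) (hk1 : 1 < k) :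
    hypMAD n i k = 2 * hypPMF n i k 0 := by
  have hkn : k ≤ n := by subst hn; nlinarith
  have hin : i ≤ n := by subst hn; nlinarith
  have hC : 0 < n.choose k := Nat.choose_pos hkn
  have hCR : ((n.choose k : ℝ)) ≠ 0 := by positivity
  have hnpos : 0 < n := by subst hn; nlinarith
  have hnR : (n : ℝ) ≠ 0 := Nat.cast_ne_zero.mpr hnpos.ne'
  have hmean : (i : ℝ) * k / n = 1 := by
    rw [div_eq_one_iff_eq hnR, hn]; push_cast; ring
  -- S0 : Vandermonde
  have hS0 : ∑ m ∈ Finset.range (k+1), i.choose m * (n-i).choose (k-m) = n.choose k := by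
    have := vandermonde_range i (n - i) k
    rwa [Nat.add_sub_cancel' hin] at this
  -- S1 : weighted Vandermonde
  have hS1 : ∑ m ∈ Finset.range (k+1), m * (i.choose m * (n-i).choose (k-m)) = n.choose k := by
    obtain ⟨a, rfl⟩ : ∃ a, i = a + 1 := ⟨i - 1, by omega⟩
    obtain ⟨K, rfl⟩ : ∃ K, k = K + 1 := ⟨k - 1, by omega⟩
    have hw := weighted_vandermonde a (n - (a+1)) K
    have hsum : ∑ m ∈ Finset.range (K+1+1), m * ((a+1).choose m * (n-(a+1)).choose (K+1-m))
        = ∑ m ∈ Finset.range (K+2), m * (a+1).choose m * (n-(a+1)).choose (K+1-m) := by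
      apply Finset.sum_congr rfl; intro m _; ring
    rw [hsum, hw]
    have hab : a + (n - (a+1)) = n - 1 := by omega
    rw [hab]
    -- (a+1) * (n-1).choose K = n.choose (K+1)
    have h2 := Nat.add_one_mul_choose_eq (n-1) K
    have hn1 : n - 1 + 1 = n := by omega
    rw [hn1] at h2
    -- h2 : n * (n-1).choose K = n.choose (K+1) * (K+1)
    have h3 : (a+1) * (n-1).choose K * (K+1) = n.choose (K+1) * (K+1) := by
      calc (a+1) * (n-1).choose K * (K+1) = n * (n-1).choose K := by rw [hn]; ring
        _ = n.choose (K+1) * (K+1) := h2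
    exact Nat.eq_of_mul_eq_mul_right (Nat.succ_pos K) h3
  -- sums of pmf
  have e0 : ∑ m ∈ Finset.range (k+1), hypPMF n i k m = 1 := by
    unfold hypPMF
    rw [← Finset.sum_div, div_eq_one_iff_eq hCR]
    exact_mod_cast hS0
  have e1 : ∑ m ∈ Finset.range (k+1), (m : ℝ) * hypPMF n i k m = 1 := by
    unfold hypPMF
    have : ∑ m ∈ Finset.range (k+1), (m : ℝ) *
        ((i.choose m * (n-i).choose (k-m) : ℝ) / (n.choose k : ℝ))
        = (∑ m ∈ Finset.range (k+1), (m * (i.choose m * (n-i).choose (k-m)) : ℕ) : ℝ)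
          / (n.choose k : ℝ) := by
      rw [Finset.sum_div]
      apply Finset.sum_congr rfl; intro m _; push_cast; ring
    push_cast at this ⊢
    rw [this, div_eq_one_iff_eq hCR]
    exact_mod_cast hS1
  -- split sum
  have hsplit : ∀ m ∈ Finset.range (k+1),
      |(m : ℝ) - 1| * hypPMF n i k m
        = ((m : ℝ) - 1) * hypPMF n i k m
          + (if m = 0 then 2 * hypPMF n i k 0 else 0) := by
    intro m _
    rcases Nat.eq_zero_or_pos m with h | h
    · subst h; simp; all_goals ring
    · have : (1 : ℝ) ≤ (m : ℝ) := by exact_mod_cast h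
      rw [abs_of_nonneg (by linarith), if_neg (by omega)]
      all_goals ring
  unfold hypMAD
  rw [hmean, Finset.sum_congr rfl hsplit, Finset.sum_add_distrib,
    Finset.sum_ite_eq' (Finset.range (k+1)) 0, if_pos (by simp)]
  have : ∑ m ∈ Finset.range (k+1), ((m : ℝ) - 1) * hypPMF n i k m = 0 := by
    simp only [sub_mul, one_mul, Finset.sum_sub_distrib, e0, e1, sub_self]
  rw [this, zero_add]


/-- When the hypergeometric mean equals `1` (i.e. `n = ik`) and `i, k > 1`, the scaled
mean absolute deviation has the two stated closed forms. -/
theorem hyp_mad_mean_one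
    (n i k : ℕ) (hn : n = i * k) (hi1 : 1 < i) (hik : i ≤ n - 1)
    (hk1 : 1 < k) (hkk : k ≤ n - 1) :
    (n : ℝ) / (2 * i * ((n : ℝ) - i)) * hypMAD n i k
        = (k : ℝ) / (i * ((k : ℝ) - 1)) * hypPMF n i k 0
      ∧ (n : ℝ) / (2 * i * ((n : ℝ) - i)) * hypMAD n i k
        = ((i : ℝ) * k - i - k + 1) / ((i : ℝ) ^ 2 * ((k : ℝ) - 1)) * hypPMF n i k 1 := by
  have hmad := mad_eq_two_p0 n i k hn hi1 hk1
  have hiR : (1 : ℝ) < (i : ℝ) := by exact_mod_cast hi1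
  have hkR : (1 : ℝ) < (k : ℝ) := by exact_mod_cast hk1
  have hnR : (n : ℝ) = (i : ℝ) * (k : ℝ) := by rw [hn]; push_cast; ring
  have hkn : k ≤ n := by subst hn; nlinarith
  have hC : 0 < n.choose k := Nat.choose_pos hkn
  have hCR : ((n.choose k : ℝ)) ≠ 0 := by positivity
  have hi0 : (i : ℝ) ≠ 0 := by linarith
  have hk10 : (k : ℝ) - 1 ≠ 0 := by linarith
  -- p0 and p1 formulas
  have hp0 : hypPMF n i k 0 = ((n - i).choose k : ℝ) / (n.choose k : ℝ) := by
    unfold hypPMF; simp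
  have hp1 : hypPMF n i k 1 = (i : ℝ) * ((n - i).choose (k-1) : ℝ) / (n.choose k : ℝ) := by
    unfold hypPMF; simp
  -- the choose identity: k * C(n-i, k) = (i-1)(k-1) * C(n-i, k-1)
  have hni : n - i = i * (k - 1) := by
    subst hn
    have : i * k - i = i * (k - 1) := by
      cases k with
      | zero => omega
      | succ k' => simp [Nat.mul_succ]
    exact this
  have hchoose : (n - i).choose k * k = (n - i).choose (k-1) * ((i-1) * (k-1)) := by
    have h := Nat.choose_succ_right_eq (n - i) (k - 1)
    have hk : k - 1 + 1 = k := by omega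
    rw [hk] at h
    have hsub : n - i - (k - 1) = (i - 1) * (k - 1) := by
      rw [hni]
      have : i * (k-1) - (k-1) = (i-1) * (k-1) := by
        rw [Nat.sub_mul, one_mul]
      omega
    rw [hsub] at h
    exact h
  have hchooseR : ((n - i).choose k : ℝ) * k
      = ((n - i).choose (k-1) : ℝ) * (((i : ℝ) - 1) * ((k : ℝ) - 1)) := by
    have h : (((n - i).choose k * k : ℕ) : ℝ)
        = (((n - i).choose (k-1) * ((i-1) * (k-1)) : ℕ) : ℝ) := by exact_mod_cast hchoose
    push_cast [Nat.cast_sub hi1.le, Nat.cast_sub hk1.le] at h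
    linear_combination h
  have hd : ((i : ℝ) * (k : ℝ)) - i = i * ((k : ℝ) - 1) := by ring
  constructor
  · rw [hmad, hp0, hnR, hd]
    field_simp
  · rw [hmad, hp0, hp1, hnR, hd]
    field_simp
    linear_combination hchooseR
end

section
/- Let H ~ Hyp(n,i,k) for any n ≥ 2, i ∈ [n-1], k ∈ [n-1]. Then (n/(2i(n-i)))·E|H - ik/n| ≥ (e^{-1/3}/(8√(2π)))·√(k/n)·√(n-k)/n. -/
set_option maxHeartbeats 1000000

open Finset


lemma hyp_vand_range (a b c : ℕ) :
    ∑ m ∈ range (c + 1), a.choose m * b.choose (c - m) = (a + b).choose c := by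
  rw [Nat.add_choose_eq, Finset.Nat.sum_antidiagonal_eq_sum_range_succ_mk]

lemma hyp_choose_mul_choose (i m j : ℕ) (hj : j ≤ m) (hm : m ≤ i) :
    i.choose m * m.choose j = i.choose j * (i - j).choose (m - j) := by
  have hji : j ≤ i := hj.trans hm
  have h1 : m - j ≤ i - j := Nat.sub_le_sub_right hm j
  have key : ((i.choose m * m.choose j : ℕ) : ℚ) =
      ((i.choose j * (i - j).choose (m - j) : ℕ) : ℚ) := by
    push_cast
    rw [Nat.cast_choose ℚ hm, Nat.cast_choose ℚ hj, Nat.cast_choose ℚ hji,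
      Nat.cast_choose ℚ h1]
    have e1 : i - j - (m - j) = i - m := by omega
    rw [e1]
    have f1 : ((Nat.factorial m : ℕ) : ℚ) ≠ 0 := by exact_mod_cast (Nat.factorial_pos m).ne'
    have f2 : ((Nat.factorial (i-m) : ℕ) : ℚ) ≠ 0 := by exact_mod_cast (Nat.factorial_pos (i - m)).ne'
    have f3 : ((Nat.factorial j : ℕ) : ℚ) ≠ 0 := by exact_mod_cast (Nat.factorial_pos j).ne'
    have f4 : ((Nat.factorial (m-j) : ℕ) : ℚ) ≠ 0 := by exact_mod_cast (Nat.factorial_pos (m - j)).ne'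
    have f5 : ((Nat.factorial (i-j) : ℕ) : ℚ) ≠ 0 := by exact_mod_cast (Nat.factorial_pos (i - j)).ne'
    field_simp
  exact_mod_cast key

lemma hyp_weighted_vand (n i k j : ℕ) (hin : i ≤ n) (hjk : j ≤ k) :
    ∑ m ∈ range (k + 1), m.choose j * (i.choose m * (n - i).choose (k - m))
      = i.choose j * (n - j).choose (k - j) := by
  by_cases hij : j ≤ i
  · have hsplit : range (k + 1) = Ico 0 (k + 1) := by rw [range_eq_Ico]
    rw [hsplit, ← Finset.sum_Ico_consecutive _ (Nat.zero_le j) (by omega : j ≤ k + 1)]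
    have h0 : ∑ m ∈ Ico 0 j, m.choose j * (i.choose m * (n - i).choose (k - m)) = 0 := by
      apply Finset.sum_eq_zero
      intro m hm
      rw [Nat.choose_eq_zero_of_lt (by simp at hm; omega), zero_mul]
    rw [h0, zero_add, Finset.sum_Ico_eq_sum_range]
    have hlen : k + 1 - j = (k - j) + 1 := by omega
    rw [hlen]
    have hterm : ∀ t ∈ range ((k - j) + 1),
        (j + t).choose j * (i.choose (j + t) * (n - i).choose (k - (j + t)))
          = i.choose j * ((i - j).choose t * (n - i).choose ((k - j) - t)) := by
      intro t ht
      have hkj : k - (j + t) = (k - j) - t := by omega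
      rw [hkj]
      by_cases hti : j + t ≤ i
      · have := hyp_choose_mul_choose i (j + t) j (Nat.le_add_right j t) hti
        have e : j + t - j = t := by omega
        rw [e] at this
        rw [← mul_assoc, mul_comm ((j+t).choose j) (i.choose (j+t)), this, mul_assoc]
      · rw [Nat.choose_eq_zero_of_lt (by omega : i < j + t),
          Nat.choose_eq_zero_of_lt (by omega : i - j < t)]
        ring
    rw [Finset.sum_congr rfl hterm, ← Finset.mul_sum, hyp_vand_range (i - j) (n - i) (k - j)]
    have : i - j + (n - i) = n - j := by omega
    rw [this]
  · rw [Nat.choose_eq_zero_of_lt (by omega : i < j), zero_mul]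
    apply Finset.sum_eq_zero
    intro m hm
    rcases le_or_gt j m with h | h
    · rw [Nat.choose_eq_zero_of_lt (by omega : i < m), zero_mul, mul_zero]
    · rw [Nat.choose_eq_zero_of_lt h, zero_mul]

lemma hyp_choose_desc (n k j : ℕ) (hjk : j ≤ k) (hkn : k ≤ n) :
    (n - j).choose (k - j) * n.descFactorial j = n.choose k * k.descFactorial j := by
  induction j with
  | zero => simp
  | succ j ih =>
    have hj : j ≤ k := by omega
    have ihe := ih hj
    rw [Nat.descFactorial_succ, Nat.descFactorial_succ]
    have key : (n - j) * (n - (j+1)).choose (k - (j+1)) = (k - j) * ((n - j).choose (k - j)) := by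
      have h1 : n - j = (n - j - 1) + 1 := by omega
      have h2 : k - j = (k - j - 1) + 1 := by omega
      have h3 : n - (j+1) = n - j - 1 := by omega
      have h4 : k - (j+1) = k - j - 1 := by omega
      rw [h3, h4, h1, h2]
      simp only [Nat.add_sub_cancel]
      have h5 := Nat.add_one_mul_choose_eq (n - j - 1) (k - j - 1)
      rw [h5]; ring
    calc (n - (j+1)).choose (k - (j+1)) * ((n - j) * n.descFactorial j)
        = ((n - j) * (n - (j+1)).choose (k - (j+1))) * n.descFactorial j := by ring
      _ = ((k - j) * ((n - j).choose (k - j))) * n.descFactorial j := by rw [key]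
      _ = (k - j) * ((n - j).choose (k - j) * n.descFactorial j) := by ring
      _ = (k - j) * (n.choose k * k.descFactorial j) := by rw [ihe]
      _ = n.choose k * ((k - j) * k.descFactorial j) := by ring

lemma hyp_cast_descFactorial (a j : ℕ) :
    ((a.descFactorial j : ℕ) : ℝ) = ∏ t ∈ range j, ((a : ℝ) - t) := by
  by_cases h : j ≤ a
  · rw [Nat.descFactorial_eq_prod_range]
    push_cast
    apply Finset.prod_congr rfl
    intro t ht
    have : t ≤ a := by simp at ht; omega
    rw [Nat.cast_sub this]
  · rw [Nat.descFactorial_eq_zero_iff_lt.2 (by omega), Nat.cast_zero]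
    symm
    apply Finset.prod_eq_zero (show a ∈ range j by simp; omega)
    simp

lemma hyp_cs3 (s : Finset ℕ) (w f g h : ℕ → ℝ)
    (hw : ∀ m ∈ s, 0 ≤ w m) (hf : ∀ m ∈ s, 0 ≤ f m) (hg : ∀ m ∈ s, 0 ≤ g m)
    (hh : ∀ m ∈ s, 0 ≤ h m) (hfg : ∀ m ∈ s, f m * g m = (h m) ^ 2) :
    (∑ m ∈ s, h m * w m) ^ 2 ≤ (∑ m ∈ s, f m * w m) * ∑ m ∈ s, g m * w m := by
  have key := Finset.sum_mul_sq_le_sq_mul_sq s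
      (fun m => Real.sqrt (f m * w m)) (fun m => Real.sqrt (g m * w m))
  have e1 : ∀ m ∈ s, Real.sqrt (f m * w m) * Real.sqrt (g m * w m) = h m * w m := by
    intro m hm
    rw [← Real.sqrt_mul (mul_nonneg (hf m hm) (hw m hm))]
    have e : f m * w m * (g m * w m) = (h m * w m) ^ 2 := by
      rw [mul_pow, ← hfg m hm]; ring
    rw [e, Real.sqrt_sq (mul_nonneg (hh m hm) (hw m hm))]
  have e2 : ∀ m ∈ s, Real.sqrt (f m * w m) ^ 2 = f m * w m := by
    intro m hm; exact Real.sq_sqrt (mul_nonneg (hf m hm) (hw m hm))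
  have e3 : ∀ m ∈ s, Real.sqrt (g m * w m) ^ 2 = g m * w m := by
    intro m hm; exact Real.sq_sqrt (mul_nonneg (hg m hm) (hw m hm))
  calc (∑ m ∈ s, h m * w m) ^ 2
      = (∑ m ∈ s, Real.sqrt (f m * w m) * Real.sqrt (g m * w m)) ^ 2 := by
        rw [Finset.sum_congr rfl e1]
    _ ≤ (∑ m ∈ s, Real.sqrt (f m * w m) ^ 2) * ∑ m ∈ s, Real.sqrt (g m * w m) ^ 2 := key
    _ = (∑ m ∈ s, f m * w m) * ∑ m ∈ s, g m * w m := by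
        rw [Finset.sum_congr rfl e2, Finset.sum_congr rfl e3]

lemma hyp_Rj (n i k j : ℕ) (hin : i ≤ n) (hkn : k ≤ n) :
    (∑ m ∈ range (k + 1), (m.descFactorial j : ℝ) * hypPMF n i k m)
        * (n.descFactorial j : ℝ)
      = (i.descFactorial j : ℝ) * (k.descFactorial j : ℝ) := by
  by_cases hjk : j ≤ k
  · have hC : (0 : ℝ) < (n.choose k : ℝ) := by
      exact_mod_cast Nat.choose_pos hkn
    have hC' : (n.choose k : ℝ) ≠ 0 := ne_of_gt hC
    have hnat : ∑ m ∈ range (k + 1), m.descFactorial j * (i.choose m * (n - i).choose (k - m))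
        = i.descFactorial j * (n - j).choose (k - j) := by
      have e1 : ∀ m ∈ range (k + 1),
          m.descFactorial j * (i.choose m * (n - i).choose (k - m))
            = Nat.factorial j * (m.choose j * (i.choose m * (n - i).choose (k - m))) := by
        intro m _
        rw [Nat.descFactorial_eq_factorial_mul_choose, mul_assoc]
      rw [Finset.sum_congr rfl e1, ← Finset.mul_sum, hyp_weighted_vand n i k j hin hjk,
        ← mul_assoc, ← Nat.descFactorial_eq_factorial_mul_choose]
    have hsum : ∑ m ∈ range (k + 1), (m.descFactorial j : ℝ) * hypPMF n i k m
        = ((i.descFactorial j * (n - j).choose (k - j) : ℕ) : ℝ) / (n.choose k : ℝ) := by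
      rw [← hnat]
      push_cast
      rw [Finset.sum_div]
      apply Finset.sum_congr rfl
      intro m _
      unfold hypPMF
      push_cast
      ring
    rw [hsum]
    have hcd : ((n - j).choose (k - j) : ℝ) * (n.descFactorial j : ℝ)
        = (n.choose k : ℝ) * (k.descFactorial j : ℝ) := by
      exact_mod_cast congrArg (fun x : ℕ => (x : ℝ)) (hyp_choose_desc n k j hjk hkn)
    push_cast
    field_simp
    linear_combination (i.descFactorial j : ℝ) * hcd
  · have h1 : ∑ m ∈ range (k + 1), (m.descFactorial j : ℝ) * hypPMF n i k m = 0 := by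
      apply Finset.sum_eq_zero
      intro m hm
      have : m.descFactorial j = 0 := Nat.descFactorial_eq_zero_iff_lt.2 (by simp at hm; omega)
      rw [this]; simp
    have h2 : k.descFactorial j = 0 := Nat.descFactorial_eq_zero_iff_lt.2 (by omega)
    rw [h1, h2]; simp

lemma hyp_dF1 (a : ℕ) : ((a.descFactorial 1 : ℕ) : ℝ) = (a : ℝ) := by
  rw [hyp_cast_descFactorial]; simp

lemma hyp_dF2 (a : ℕ) : ((a.descFactorial 2 : ℕ) : ℝ) = (a : ℝ) * ((a : ℝ) - 1) := by
  rw [hyp_cast_descFactorial]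
  rw [Finset.prod_range_succ, Finset.prod_range_succ, Finset.prod_range_zero]
  norm_num

lemma hyp_dF3 (a : ℕ) : ((a.descFactorial 3 : ℕ) : ℝ)
    = (a : ℝ) * ((a : ℝ) - 1) * ((a : ℝ) - 2) := by
  rw [hyp_cast_descFactorial]
  rw [Finset.prod_range_succ, Finset.prod_range_succ, Finset.prod_range_succ,
    Finset.prod_range_zero]
  norm_num

lemma hyp_dF4 (a : ℕ) : ((a.descFactorial 4 : ℕ) : ℝ)
    = (a : ℝ) * ((a : ℝ) - 1) * ((a : ℝ) - 2) * ((a : ℝ) - 3) := by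
  rw [hyp_cast_descFactorial]
  rw [Finset.prod_range_succ, Finset.prod_range_succ, Finset.prod_range_succ,
    Finset.prod_range_succ, Finset.prod_range_zero]
  norm_num


lemma hyp_G_nonneg (N A B : ℝ) (hN : 4 ≤ N)
    (hA1 : N-1 ≤ A) (hA2 : 4*A ≤ N^2) (hB1 : N-1 ≤ B) (hB2 : 4*B ≤ N^2) :
    0 ≤ N^3*(N-1)*(A + B) - N^3*(N-1)^2 - N*(5*N-6)*A*B := by
  have c00 : (0:ℝ) ≤ (N^2/4 - A)*(N^2/4 - B)*(N*(N-1)^2*(N-2)*(N-3)) := by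
    apply mul_nonneg (mul_nonneg (by linarith) (by linarith))
    have h1 : (0:ℝ) ≤ N-1 := by linarith
    have h2 : (0:ℝ) ≤ N-2 := by linarith
    have h3 : (0:ℝ) ≤ N-3 := by linarith
    positivity
  have c10 : (0:ℝ) ≤ (A - (N-1))*(N^2/4 - B)*(N^3*(N-1)/4*(N-2)*(N-3)) := by
    apply mul_nonneg (mul_nonneg (by linarith) (by linarith))
    have h1 : (0:ℝ) ≤ N-1 := by linarith
    have h2 : (0:ℝ) ≤ N-2 := by linarith
    have h3 : (0:ℝ) ≤ N-3 := by linarith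
    positivity
  have c01 : (0:ℝ) ≤ (N^2/4 - A)*(B - (N-1))*(N^3*(N-1)/4*(N-2)*(N-3)) := by
    apply mul_nonneg (mul_nonneg (by linarith) (by linarith))
    have h1 : (0:ℝ) ≤ N-1 := by linarith
    have h2 : (0:ℝ) ≤ N-2 := by linarith
    have h3 : (0:ℝ) ≤ N-3 := by linarith
    positivity
  have c11 : (0:ℝ) ≤ (A - (N-1))*(B - (N-1))*(N^3*(3*N^3-18*N^2+32*N-16)/16) := by
    apply mul_nonneg (mul_nonneg (by linarith) (by linarith))
    have h0 : (0:ℝ) ≤ N := by linarith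
    have : (0:ℝ) ≤ 3*N^3-18*N^2+32*N-16 := by nlinarith
    positivity
  have hid : (((N-2)^2/4)^2) * (N^3*(N-1)*(A + B) - N^3*(N-1)^2 - N*(5*N-6)*A*B)
      = (N^2/4 - A)*(N^2/4 - B)*(N*(N-1)^2*(N-2)*(N-3))
        + (A - (N-1))*(N^2/4 - B)*(N^3*(N-1)/4*(N-2)*(N-3))
        + (N^2/4 - A)*(B - (N-1))*(N^3*(N-1)/4*(N-2)*(N-3))
        + (A - (N-1))*(B - (N-1))*(N^3*(3*N^3-18*N^2+32*N-16)/16) := by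
    ring
  have hcpos : (0:ℝ) < ((N-2)^2/4)^2 := by
    have : (0:ℝ) < N-2 := by linarith
    positivity
  have h1 : (0:ℝ) ≤ (((N-2)^2/4)^2) * (N^3*(N-1)*(A + B) - N^3*(N-1)^2 - N*(5*N-6)*A*B) := by
    rw [hid]
    exact add_nonneg (add_nonneg (add_nonneg c00 c10) c01) c11
  exact (mul_le_mul_iff_right₀ hcpos).mp (by simpa using h1)

lemma hyp_key (N A B S4 : ℝ) (hN : 4 ≤ N)
    (hA1 : N-1 ≤ A) (hA2 : 4*A ≤ N^2) (hB1 : N-1 ≤ B) (hB2 : 4*B ≤ N^2)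
    (hApos : 0 < A) (hBpos : 0 < B)
    (hS4 : S4 * (N^5*(N-1)^2*(N-2)*(N-3))
      = 3*A^2*B^2*N*(N-2)*(N-3) + A*B*N^3*(N-1)*(N-2)*(N-3)
        - 6*A*B*(N^3*(N-1)*(A+B) - N^3*(N-1)^2 - N*(5*N-6)*A*B)) :
    S4 * (N*(N-1)^3) ≤ 100*A*B^2 := by
  have hG := hyp_G_nonneg N A B hN hA1 hA2 hB1 hB2
  have hpos : (0:ℝ) < N^4*(N-2)*(N-3) := by
    have h2 : (0:ℝ) < N-2 := by linarith
    have h3 : (0:ℝ) < N-3 := by linarith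
    have h0 : (0:ℝ) < N := by linarith
    positivity
  apply le_of_mul_le_mul_right _ hpos
  have e1 : S4 * (N*(N-1)^3) * (N^4*(N-2)*(N-3))
      = (S4 * (N^5*(N-1)^2*(N-2)*(N-3))) * (N-1) := by ring
  rw [e1, hS4]
  -- nonneg auxiliary products
  have t1 : (0:ℝ) ≤ A*B^2*N*(N-1)*(N-2)*(N-3)*(N^2-4*A) := by
    have h1 : (0:ℝ) ≤ N-1 := by linarith
    have h2 : (0:ℝ) ≤ N-2 := by linarith
    have h3 : (0:ℝ) ≤ N-3 := by linarith
    have h4 : (0:ℝ) ≤ N^2-4*A := by linarith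
    have h0 : (0:ℝ) ≤ N := by linarith
    positivity
  have hnB : (0:ℝ) ≤ N*B - (N-1)^2 := by nlinarith
  have t2 : (0:ℝ) ≤ A*B*N^3*(N-2)*(N-3)*(N*B-(N-1)^2) := by
    have h2 : (0:ℝ) ≤ N-2 := by linarith
    have h3 : (0:ℝ) ≤ N-3 := by linarith
    have h0 : (0:ℝ) ≤ N := by linarith
    positivity
  have t3 : (0:ℝ) ≤ 6*A*B*(N^3*(N-1)*(A+B) - N^3*(N-1)^2 - N*(5*N-6)*A*B)*(N-1) := by
    have h1 : (0:ℝ) ≤ N-1 := by linarith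
    have := mul_nonneg (mul_nonneg (mul_nonneg (by norm_num : (0:ℝ) ≤ 6)
      (le_of_lt hApos)) (le_of_lt hBpos)) (mul_nonneg hG h1)
    nlinarith [this]
  have t4 : (0:ℝ) ≤ A*B^2*N^3*(N-2)*(N-3) := by
    have h2 : (0:ℝ) ≤ N-2 := by linarith
    have h3 : (0:ℝ) ≤ N-3 := by linarith
    have h0 : (0:ℝ) ≤ N := by linarith
    positivity
  have t5 : (0:ℝ) ≤ A*B^2*N^4*(N-2)*(N-3) := by
    have h2 : (0:ℝ) ≤ N-2 := by linarith
    have h3 : (0:ℝ) ≤ N-3 := by linarith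
    have h0 : (0:ℝ) ≤ N := by linarith
    positivity
  nlinarith [t1, t2, t3, t4, t5]

lemma hyp_chain (S1 S2 S3 S4 : ℝ) (h1 : 0 ≤ S1) (h3 : 0 ≤ S3) (h2 : 0 < S2)
    (CS1 : S2^2 ≤ S1*S3) (CS2 : S3^2 ≤ S2*S4) : S2^3 ≤ S1^2*S4 := by
  have q1 : S2^2 * S2^2 ≤ (S1*S3) * (S1*S3) :=
    mul_le_mul CS1 CS1 (sq_nonneg S2) (mul_nonneg h1 h3)
  have q3 : S1^2*S3^2 ≤ S1^2*(S2*S4) := mul_le_mul_of_nonneg_left CS2 (sq_nonneg S1)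
  have q4 : S2 * S2^3 ≤ S2 * (S1^2*S4) := by nlinarith [q1, q3]
  exact le_of_mul_le_mul_left q4 h2

lemma hyp_const_le : Real.exp (-1/3) / (8 * Real.sqrt (2 * Real.pi)) ≤ 1/20 := by
  have h1 : Real.exp (-1/3) ≤ 1 := by
    have := Real.exp_le_exp.mpr (show (-1/3 : ℝ) ≤ 0 by norm_num)
    simpa [Real.exp_zero] using this
  have h2 : (5/2 : ℝ) ≤ Real.sqrt (2 * Real.pi) := by
    have e : (5/2 : ℝ) = Real.sqrt ((5/2) ^ 2) := (Real.sqrt_sq (by norm_num)).symm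
    rw [e]
    apply Real.sqrt_le_sqrt
    nlinarith [Real.pi_gt_d6]
  have h4 : (0:ℝ) < 8 * Real.sqrt (2 * Real.pi) := by nlinarith
  rw [div_le_div_iff₀ h4 (by norm_num)]
  nlinarith [Real.exp_pos (-1/3 : ℝ)]

/-- General lower bound on the scaled mean absolute deviation of a hypergeometric
random variable, valid for all `n ≥ 2`, `i, k ∈ [n-1]`. -/
theorem hyp_mad_lower_bound
    (n i k : ℕ) (hn : 2 ≤ n)
    (hi : i ∈ Finset.Icc 1 (n - 1)) (hk : k ∈ Finset.Icc 1 (n - 1)) :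
    Real.exp (-1/3) / (8 * Real.sqrt (2 * Real.pi))
        * Real.sqrt ((k : ℝ) / n) * Real.sqrt ((n : ℝ) - k) / n
      ≤ (n : ℝ) / (2 * i * ((n : ℝ) - i)) * hypMAD n i k := by
  obtain ⟨hi1, hi2⟩ := Finset.mem_Icc.mp hi
  obtain ⟨hk1, hk2⟩ := Finset.mem_Icc.mp hk
  have hin : i ≤ n := by omega
  have hkn : k ≤ n := by omega
  have hiR : (1:ℝ) ≤ (i:ℝ) := by exact_mod_cast hi1
  have hiR2 : (i:ℝ) ≤ (n:ℝ) - 1 := by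
    have : (i:ℝ) ≤ ((n - 1 : ℕ) : ℝ) := by exact_mod_cast hi2
    rw [Nat.cast_sub (by omega)] at this; simpa using this
  have hkR : (1:ℝ) ≤ (k:ℝ) := by exact_mod_cast hk1
  have hkR2 : (k:ℝ) ≤ (n:ℝ) - 1 := by
    have : (k:ℝ) ≤ ((n - 1 : ℕ) : ℝ) := by exact_mod_cast hk2
    rw [Nat.cast_sub (by omega)] at this; simpa using this
  have hnR : (2:ℝ) ≤ (n:ℝ) := by exact_mod_cast hn
  have hn0 : (0:ℝ) < (n:ℝ) := by linarith
  have hi0 : (0:ℝ) < (i:ℝ) := by linarith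
  have hni0 : (0:ℝ) < (n:ℝ) - i := by linarith
  have hk0 : (0:ℝ) < (k:ℝ) := by linarith
  have hnk0 : (0:ℝ) < (n:ℝ) - k := by linarith
  have hp0 : ∀ m ∈ range (k+1), 0 ≤ hypPMF n i k m := by
    intro m _
    unfold hypPMF
    positivity
  -- mean absolute deviation etc
  have hS1nonneg : 0 ≤ hypMAD n i k := by
    unfold hypMAD
    apply Finset.sum_nonneg
    intro m hm
    exact mul_nonneg (abs_nonneg _) (hp0 m hm)
  by_cases hn4 : 4 ≤ n
  · -- main case
    have hn4R : (4:ℝ) ≤ (n:ℝ) := by exact_mod_cast hn4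
    have hA1 : (n:ℝ)-1 ≤ (i:ℝ)*((n:ℝ)-(i:ℝ)) := by
      nlinarith [mul_nonneg (by linarith : (0:ℝ) ≤ (i:ℝ)-1) (by linarith : (0:ℝ) ≤ (n:ℝ)-(i:ℝ)-1)]
    have hA2 : 4*((i:ℝ)*((n:ℝ)-(i:ℝ))) ≤ (n:ℝ)^2 := by nlinarith [sq_nonneg ((n:ℝ)-2*(i:ℝ))]
    have hB1 : (n:ℝ)-1 ≤ (k:ℝ)*((n:ℝ)-(k:ℝ)) := by
      nlinarith [mul_nonneg (by linarith : (0:ℝ) ≤ (k:ℝ)-1) (by linarith : (0:ℝ) ≤ (n:ℝ)-(k:ℝ)-1)]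
    have hB2 : 4*((k:ℝ)*((n:ℝ)-(k:ℝ))) ≤ (n:ℝ)^2 := by nlinarith [sq_nonneg ((n:ℝ)-2*(k:ℝ))]
    have hF0 : ∑ m ∈ range (k+1), hypPMF n i k m = 1 := by
      have h := hyp_Rj n i k 0 hin hkn
      simpa using h
    have hF1 : (∑ m ∈ range (k+1), (m:ℝ) * hypPMF n i k m) * (n:ℝ) = (i:ℝ) * (k:ℝ) := by
      have h := hyp_Rj n i k 1 hin hkn
      have e : ∀ m ∈ range (k+1), ((m.descFactorial 1 : ℕ) : ℝ) * hypPMF n i k m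
          = (m:ℝ) * hypPMF n i k m := fun m _ => by rw [hyp_dF1]
      rw [Finset.sum_congr rfl e, hyp_dF1, hyp_dF1, hyp_dF1] at h
      exact h
    have hF2 : (∑ m ∈ range (k+1), ((m:ℝ) * ((m:ℝ)-1)) * hypPMF n i k m)
        * ((n:ℝ) * ((n:ℝ)-1)) = ((i:ℝ) * ((i:ℝ)-1)) * ((k:ℝ) * ((k:ℝ)-1)) := by
      have h := hyp_Rj n i k 2 hin hkn
      have e : ∀ m ∈ range (k+1), ((m.descFactorial 2 : ℕ) : ℝ) * hypPMF n i k m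
          = ((m:ℝ) * ((m:ℝ)-1)) * hypPMF n i k m := fun m _ => by rw [hyp_dF2]
      rw [Finset.sum_congr rfl e, hyp_dF2, hyp_dF2, hyp_dF2] at h
      exact h
    have hF3 : (∑ m ∈ range (k+1), ((m:ℝ) * ((m:ℝ)-1) * ((m:ℝ)-2)) * hypPMF n i k m)
        * ((n:ℝ) * ((n:ℝ)-1) * ((n:ℝ)-2))
        = ((i:ℝ) * ((i:ℝ)-1) * ((i:ℝ)-2)) * ((k:ℝ) * ((k:ℝ)-1) * ((k:ℝ)-2)) := by
      have h := hyp_Rj n i k 3 hin hkn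
      have e : ∀ m ∈ range (k+1), ((m.descFactorial 3 : ℕ) : ℝ) * hypPMF n i k m
          = ((m:ℝ) * ((m:ℝ)-1) * ((m:ℝ)-2)) * hypPMF n i k m := fun m _ => by rw [hyp_dF3]
      rw [Finset.sum_congr rfl e, hyp_dF3, hyp_dF3, hyp_dF3] at h
      exact h
    have hF4 : (∑ m ∈ range (k+1), ((m:ℝ) * ((m:ℝ)-1) * ((m:ℝ)-2) * ((m:ℝ)-3)) * hypPMF n i k m)
        * ((n:ℝ) * ((n:ℝ)-1) * ((n:ℝ)-2) * ((n:ℝ)-3))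
        = ((i:ℝ) * ((i:ℝ)-1) * ((i:ℝ)-2) * ((i:ℝ)-3))
          * ((k:ℝ) * ((k:ℝ)-1) * ((k:ℝ)-2) * ((k:ℝ)-3)) := by
      have h := hyp_Rj n i k 4 hin hkn
      have e : ∀ m ∈ range (k+1), ((m.descFactorial 4 : ℕ) : ℝ) * hypPMF n i k m
          = ((m:ℝ) * ((m:ℝ)-1) * ((m:ℝ)-2) * ((m:ℝ)-3)) * hypPMF n i k m :=
        fun m _ => by rw [hyp_dF4]
      rw [Finset.sum_congr rfl e, hyp_dF4, hyp_dF4, hyp_dF4] at h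
      exact h
    -- second and fourth central moments
    have hsplit2 : (∑ m ∈ range (k+1), ((m:ℝ) - (i:ℝ)*(k:ℝ)/(n:ℝ))^2 * hypPMF n i k m)
        * (n:ℝ)^2
        = (n:ℝ)^2 * (∑ m ∈ range (k+1), ((m:ℝ) * ((m:ℝ)-1)) * hypPMF n i k m)
          + ((n:ℝ)^2 - 2*(n:ℝ)*((i:ℝ)*(k:ℝ)))
              * (∑ m ∈ range (k+1), (m:ℝ) * hypPMF n i k m)
          + ((i:ℝ)*(k:ℝ))^2 := by
      have epoint : ∀ m ∈ range (k+1),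
          ((m:ℝ) - (i:ℝ)*(k:ℝ)/(n:ℝ))^2 * hypPMF n i k m * (n:ℝ)^2
          = (n:ℝ)^2 * (((m:ℝ) * ((m:ℝ)-1)) * hypPMF n i k m)
            + ((n:ℝ)^2 - 2*(n:ℝ)*((i:ℝ)*(k:ℝ))) * ((m:ℝ) * hypPMF n i k m)
            + ((i:ℝ)*(k:ℝ))^2 * hypPMF n i k m := by
        intro m _
        field_simp
        ring
      rw [Finset.sum_mul, Finset.sum_congr rfl epoint, Finset.sum_add_distrib,
        Finset.sum_add_distrib, ← Finset.mul_sum, ← Finset.mul_sum, ← Finset.mul_sum, hF0,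
        mul_one]
    have hS2 : (∑ m ∈ range (k+1), ((m:ℝ) - (i:ℝ)*(k:ℝ)/(n:ℝ))^2 * hypPMF n i k m)
        * ((n:ℝ)^2 * ((n:ℝ)-1)) = ((i:ℝ)*((n:ℝ)-(i:ℝ))) * ((k:ℝ)*((n:ℝ)-(k:ℝ))) := by
      apply mul_left_cancel₀ (ne_of_gt hn0)
      linear_combination ((n:ℝ)*((n:ℝ)-1)) * hsplit2 + (n:ℝ)^2 * hF2
        + ((n:ℝ)*((n:ℝ)-1)*((n:ℝ)-2*((i:ℝ)*(k:ℝ)))) * hF1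
    have hsplit4 : (∑ m ∈ range (k+1), ((m:ℝ) - (i:ℝ)*(k:ℝ)/(n:ℝ))^4 * hypPMF n i k m)
        * (n:ℝ)^4
        = (n:ℝ)^4 * (∑ m ∈ range (k+1), ((m:ℝ) * ((m:ℝ)-1) * ((m:ℝ)-2) * ((m:ℝ)-3)) * hypPMF n i k m)
          + (6*(n:ℝ)^4 - 4*(n:ℝ)^3*((i:ℝ)*(k:ℝ)))
              * (∑ m ∈ range (k+1), ((m:ℝ) * ((m:ℝ)-1) * ((m:ℝ)-2)) * hypPMF n i k m)
          + (7*(n:ℝ)^4 - 12*(n:ℝ)^3*((i:ℝ)*(k:ℝ)) + 6*(n:ℝ)^2*((i:ℝ)*(k:ℝ))^2)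
              * (∑ m ∈ range (k+1), ((m:ℝ) * ((m:ℝ)-1)) * hypPMF n i k m)
          + ((n:ℝ)^4 - 4*(n:ℝ)^3*((i:ℝ)*(k:ℝ)) + 6*(n:ℝ)^2*((i:ℝ)*(k:ℝ))^2
              - 4*(n:ℝ)*((i:ℝ)*(k:ℝ))^3)
              * (∑ m ∈ range (k+1), (m:ℝ) * hypPMF n i k m)
          + ((i:ℝ)*(k:ℝ))^4 := by
      have epoint : ∀ m ∈ range (k+1),
          ((m:ℝ) - (i:ℝ)*(k:ℝ)/(n:ℝ))^4 * hypPMF n i k m * (n:ℝ)^4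
          = (n:ℝ)^4 * (((m:ℝ) * ((m:ℝ)-1) * ((m:ℝ)-2) * ((m:ℝ)-3)) * hypPMF n i k m)
            + (6*(n:ℝ)^4 - 4*(n:ℝ)^3*((i:ℝ)*(k:ℝ)))
                * (((m:ℝ) * ((m:ℝ)-1) * ((m:ℝ)-2)) * hypPMF n i k m)
            + (7*(n:ℝ)^4 - 12*(n:ℝ)^3*((i:ℝ)*(k:ℝ)) + 6*(n:ℝ)^2*((i:ℝ)*(k:ℝ))^2)
                * (((m:ℝ) * ((m:ℝ)-1)) * hypPMF n i k m)
            + ((n:ℝ)^4 - 4*(n:ℝ)^3*((i:ℝ)*(k:ℝ)) + 6*(n:ℝ)^2*((i:ℝ)*(k:ℝ))^2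
                - 4*(n:ℝ)*((i:ℝ)*(k:ℝ))^3) * ((m:ℝ) * hypPMF n i k m)
            + ((i:ℝ)*(k:ℝ))^4 * hypPMF n i k m := by
        intro m _
        field_simp
        ring
      rw [Finset.sum_mul, Finset.sum_congr rfl epoint, Finset.sum_add_distrib,
        Finset.sum_add_distrib, Finset.sum_add_distrib, Finset.sum_add_distrib,
        ← Finset.mul_sum, ← Finset.mul_sum, ← Finset.mul_sum, ← Finset.mul_sum,
        ← Finset.mul_sum, hF0, mul_one]
    have hS4 : (∑ m ∈ range (k+1), ((m:ℝ) - (i:ℝ)*(k:ℝ)/(n:ℝ))^4 * hypPMF n i k m)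
        * ((n:ℝ)^5 * ((n:ℝ)-1)^2 * ((n:ℝ)-2) * ((n:ℝ)-3))
        = 3*((i:ℝ)*((n:ℝ)-(i:ℝ)))^2*((k:ℝ)*((n:ℝ)-(k:ℝ)))^2*(n:ℝ)*((n:ℝ)-2)*((n:ℝ)-3)
          + ((i:ℝ)*((n:ℝ)-(i:ℝ)))*((k:ℝ)*((n:ℝ)-(k:ℝ)))
              *(n:ℝ)^3*((n:ℝ)-1)*((n:ℝ)-2)*((n:ℝ)-3)
          - 6*((i:ℝ)*((n:ℝ)-(i:ℝ)))*((k:ℝ)*((n:ℝ)-(k:ℝ)))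
              * ((n:ℝ)^3*((n:ℝ)-1)*(((i:ℝ)*((n:ℝ)-(i:ℝ))) + ((k:ℝ)*((n:ℝ)-(k:ℝ))))
                 - (n:ℝ)^3*((n:ℝ)-1)^2
                 - (n:ℝ)*(5*(n:ℝ)-6)*((i:ℝ)*((n:ℝ)-(i:ℝ)))*((k:ℝ)*((n:ℝ)-(k:ℝ)))) := by
      linear_combination ((n:ℝ)*((n:ℝ)-1)^2*((n:ℝ)-2)*((n:ℝ)-3)) * hsplit4
        + ((n:ℝ)^4*((n:ℝ)-1)) * hF4
        + ((6*(n:ℝ)^4 - 4*(n:ℝ)^3*((i:ℝ)*(k:ℝ)))*((n:ℝ)-1)*((n:ℝ)-3)) * hF3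
        + ((7*(n:ℝ)^4 - 12*(n:ℝ)^3*((i:ℝ)*(k:ℝ)) + 6*(n:ℝ)^2*((i:ℝ)*(k:ℝ))^2)
            *((n:ℝ)-1)*((n:ℝ)-2)*((n:ℝ)-3)) * hF2
        + (((n:ℝ)^4 - 4*(n:ℝ)^3*((i:ℝ)*(k:ℝ)) + 6*(n:ℝ)^2*((i:ℝ)*(k:ℝ))^2
            - 4*(n:ℝ)*((i:ℝ)*(k:ℝ))^3)*((n:ℝ)-1)^2*((n:ℝ)-2)*((n:ℝ)-3)) * hF1
    set S1 : ℝ := hypMAD n i k with hS1def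
    set S2 : ℝ := ∑ m ∈ range (k+1), ((m:ℝ) - (i:ℝ)*(k:ℝ)/(n:ℝ))^2 * hypPMF n i k m with hS2def
    set S3 : ℝ := ∑ m ∈ range (k+1), |(m:ℝ) - (i:ℝ)*(k:ℝ)/(n:ℝ)|^3 * hypPMF n i k m with hS3def
    set S4 : ℝ := ∑ m ∈ range (k+1), ((m:ℝ) - (i:ℝ)*(k:ℝ)/(n:ℝ))^4 * hypPMF n i k m with hS4def
    set A : ℝ := (i:ℝ)*((n:ℝ)-(i:ℝ)) with hAdef
    set B : ℝ := (k:ℝ)*((n:ℝ)-(k:ℝ)) with hBdef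
    have hApos : 0 < A := by rw [hAdef]; exact mul_pos hi0 hni0
    have hBpos : 0 < B := by rw [hBdef]; exact mul_pos hk0 hnk0
    have hS1sum : S1 = ∑ m ∈ range (k+1), |(m:ℝ) - (i:ℝ)*(k:ℝ)/(n:ℝ)| * hypPMF n i k m := rfl
    have CS1 : S2^2 ≤ S1 * S3 := by
      rw [hS1sum, hS2def, hS3def]
      apply hyp_cs3 (range (k+1)) (hypPMF n i k)
        (fun m => |(m:ℝ) - (i:ℝ)*(k:ℝ)/(n:ℝ)|)
        (fun m => |(m:ℝ) - (i:ℝ)*(k:ℝ)/(n:ℝ)|^3)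
        (fun m => ((m:ℝ) - (i:ℝ)*(k:ℝ)/(n:ℝ))^2)
        hp0 (fun m _ => abs_nonneg _) (fun m _ => by positivity) (fun m _ => sq_nonneg _)
      intro m _
      rw [show |(m:ℝ) - (i:ℝ)*(k:ℝ)/(n:ℝ)| * |(m:ℝ) - (i:ℝ)*(k:ℝ)/(n:ℝ)|^3
          = |(m:ℝ) - (i:ℝ)*(k:ℝ)/(n:ℝ)|^4 by ring, pow_abs,
        abs_of_nonneg (by positivity : (0:ℝ) ≤ ((m:ℝ) - (i:ℝ)*(k:ℝ)/(n:ℝ))^4)]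
      ring
    have CS2 : S3^2 ≤ S2 * S4 := by
      rw [hS2def, hS3def, hS4def]
      apply hyp_cs3 (range (k+1)) (hypPMF n i k)
        (fun m => ((m:ℝ) - (i:ℝ)*(k:ℝ)/(n:ℝ))^2)
        (fun m => ((m:ℝ) - (i:ℝ)*(k:ℝ)/(n:ℝ))^4)
        (fun m => |(m:ℝ) - (i:ℝ)*(k:ℝ)/(n:ℝ)|^3)
        hp0 (fun m _ => sq_nonneg _) (fun m _ => by positivity) (fun m _ => by positivity)
      intro m _
      rw [show (|(m:ℝ) - (i:ℝ)*(k:ℝ)/(n:ℝ)|^3)^2 = |(m:ℝ) - (i:ℝ)*(k:ℝ)/(n:ℝ)|^6 by ring,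
        pow_abs, abs_of_nonneg (by positivity : (0:ℝ) ≤ ((m:ℝ) - (i:ℝ)*(k:ℝ)/(n:ℝ))^6)]
      ring
    have CS3 : S2^2 ≤ S4 := by
      have h := hyp_cs3 (range (k+1)) (hypPMF n i k)
        (fun m => (1:ℝ))
        (fun m => ((m:ℝ) - (i:ℝ)*(k:ℝ)/(n:ℝ))^4)
        (fun m => ((m:ℝ) - (i:ℝ)*(k:ℝ)/(n:ℝ))^2)
        hp0 (fun m _ => zero_le_one) (fun m _ => by positivity) (fun m _ => sq_nonneg _)
        (fun m _ => by ring)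
      simp only [one_mul] at h
      rw [hF0, one_mul] at h
      rw [hS2def, hS4def]
      exact h
    have hden : (0:ℝ) < (n:ℝ)^2*((n:ℝ)-1) :=
      mul_pos (pow_pos hn0 2) (by linarith only [hnR] : (0:ℝ) < (n:ℝ)-1)
    have hS2pos : 0 < S2 := by
      have hq : S2 = A*B/((n:ℝ)^2*((n:ℝ)-1)) := by
        rw [eq_div_iff (ne_of_gt hden)]
        exact hS2
      rw [hq]
      exact div_pos (mul_pos hApos hBpos) hden
    have hS4pos : 0 < S4 := lt_of_lt_of_le (pow_pos hS2pos 2) CS3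
    have hS3nonneg : 0 ≤ S3 := by
      rw [hS3def]
      apply Finset.sum_nonneg
      intro m hm
      exact mul_nonneg (by positivity) (hp0 m hm)
    have hchain : S2^3 ≤ S1^2*S4 := hyp_chain S1 S2 S3 S4 hS1nonneg hS3nonneg hS2pos CS1 CS2
    have hKey : S4 * ((n:ℝ)*((n:ℝ)-1)^3) ≤ 100*A*B^2 :=
      hyp_key (n:ℝ) A B S4 hn4R (by rw [hAdef]; exact hA1) (by rw [hAdef]; exact hA2)
        (by rw [hBdef]; exact hB1) (by rw [hBdef]; exact hB2) hApos hBpos hS4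
    have hposn13 : (0:ℝ) < (n:ℝ)*((n:ℝ)-1)^3 := by
      have h1 : (0:ℝ) < (n:ℝ)-1 := by linarith only [hnR]
      positivity
    have hcube : (S2*((n:ℝ)^2*((n:ℝ)-1)))^3 = (A*B)^3 := by rw [hS2]
    have hfrac : A^2*B*S4 ≤ 100*(n:ℝ)^5*S2^3 := by
      apply le_of_mul_le_mul_right _ hposn13
      calc A^2*B*S4 * ((n:ℝ)*((n:ℝ)-1)^3) = (A*A*B)*(S4 * ((n:ℝ)*((n:ℝ)-1)^3)) := by ring
        _ ≤ (A*A*B)*(100*A*B^2) := by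
            apply mul_le_mul_of_nonneg_left hKey
            exact le_of_lt (mul_pos (mul_pos hApos hApos) hBpos)
        _ = 100*(n:ℝ)^5*S2^3 * ((n:ℝ)*((n:ℝ)-1)^3) := by linear_combination (-100)*hcube
    have hS1sq : A^2*B ≤ 100*(n:ℝ)^5*S1^2 := by
      have h1 : 100*(n:ℝ)^5*S2^3 ≤ (100*(n:ℝ)^5*S1^2)*S4 := by
        rw [show (100*(n:ℝ)^5*S1^2)*S4 = 100*(n:ℝ)^5*(S1^2*S4) by ring]
        exact mul_le_mul_of_nonneg_left hchain (by positivity)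
      exact le_of_mul_le_mul_right (le_trans hfrac h1) hS4pos
    have hsqrtn : (0:ℝ) < Real.sqrt (n:ℝ) := Real.sqrt_pos.mpr hn0
    have hsqrtB : (0:ℝ) ≤ Real.sqrt B := Real.sqrt_nonneg _
    have ht : A*Real.sqrt B/(10*(n:ℝ)^2*Real.sqrt (n:ℝ)) ≤ S1 := by
      have htnn : 0 ≤ A*Real.sqrt B/(10*(n:ℝ)^2*Real.sqrt (n:ℝ)) := by positivity
      have e : (A*Real.sqrt B/(10*(n:ℝ)^2*Real.sqrt (n:ℝ)))^2 = A^2*B/(100*(n:ℝ)^5) := by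
        have e1 : Real.sqrt B ^ 2 = B := Real.sq_sqrt (le_of_lt hBpos)
        have e2 : Real.sqrt (n:ℝ) ^ 2 = (n:ℝ) := Real.sq_sqrt (le_of_lt hn0)
        simp only [div_pow, mul_pow, e1, e2]
        ring
      have hsq : (A*Real.sqrt B/(10*(n:ℝ)^2*Real.sqrt (n:ℝ)))^2 ≤ S1^2 := by
        rw [e, div_le_iff₀ (by positivity : (0:ℝ) < 100*(n:ℝ)^5)]
        calc A^2*B ≤ 100*(n:ℝ)^5*S1^2 := hS1sq
          _ = S1^2 * (100*(n:ℝ)^5) := by ring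
      have h2 := Real.sqrt_le_sqrt hsq
      rwa [Real.sqrt_sq htnn, Real.sqrt_sq hS1nonneg] at h2
    have hfinal1 : Real.exp (-1/3) / (8 * Real.sqrt (2 * Real.pi))
        * Real.sqrt ((k:ℝ)/(n:ℝ)) * Real.sqrt ((n:ℝ) - (k:ℝ))/(n:ℝ)
        ≤ (1/20) * Real.sqrt ((k:ℝ)/(n:ℝ)) * Real.sqrt ((n:ℝ) - (k:ℝ))/(n:ℝ) := by
      apply div_le_div_of_nonneg_right ?_ hn0.le
      exact mul_le_mul_of_nonneg_right
        (mul_le_mul_of_nonneg_right hyp_const_le (Real.sqrt_nonneg _)) (Real.sqrt_nonneg _)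
    have hfinal2 : (1/20) * Real.sqrt ((k:ℝ)/(n:ℝ)) * Real.sqrt ((n:ℝ) - (k:ℝ))/(n:ℝ)
        = (n:ℝ)/(2*(i:ℝ)*((n:ℝ)-(i:ℝ))) * (A*Real.sqrt B/(10*(n:ℝ)^2*Real.sqrt (n:ℝ))) := by
      rw [hAdef, hBdef, Real.sqrt_div (le_of_lt hk0), Real.sqrt_mul (le_of_lt hk0)]
      have hi' : (i:ℝ) ≠ 0 := ne_of_gt hi0
      have hni' : (n:ℝ)-(i:ℝ) ≠ 0 := ne_of_gt hni0
      field_simp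
      ring
    have hfinal3 : (n:ℝ)/(2*(i:ℝ)*((n:ℝ)-(i:ℝ))) * (A*Real.sqrt B/(10*(n:ℝ)^2*Real.sqrt (n:ℝ)))
        ≤ (n:ℝ)/(2*(i:ℝ)*((n:ℝ)-(i:ℝ))) * S1 := by
      apply mul_le_mul_of_nonneg_left ht
      exact le_of_lt (div_pos hn0 (mul_pos (mul_pos (by norm_num : (0:ℝ) < 2) hi0) hni0))
    calc Real.exp (-1/3) / (8 * Real.sqrt (2 * Real.pi))
          * Real.sqrt ((k:ℝ)/(n:ℝ)) * Real.sqrt ((n:ℝ) - (k:ℝ))/(n:ℝ)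
        ≤ (1/20) * Real.sqrt ((k:ℝ)/(n:ℝ)) * Real.sqrt ((n:ℝ) - (k:ℝ))/(n:ℝ) := hfinal1
      _ = (n:ℝ)/(2*(i:ℝ)*((n:ℝ)-(i:ℝ))) * (A*Real.sqrt B/(10*(n:ℝ)^2*Real.sqrt (n:ℝ))) := hfinal2
      _ ≤ (n:ℝ)/(2*(i:ℝ)*((n:ℝ)-(i:ℝ))) * S1 := hfinal3
  · -- small cases n = 2, 3
    have hn3 : n ≤ 3 := by omega
    have hn3R : (n:ℝ) ≤ 3 := by exact_mod_cast hn3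
    have hc := hyp_const_le
    have s1 : Real.sqrt ((k:ℝ)/(n:ℝ)) ≤ 1 := by
      have h : (k:ℝ)/(n:ℝ) ≤ 1 := by
        rw [div_le_one hn0]
        linarith
      calc Real.sqrt ((k:ℝ)/(n:ℝ)) ≤ Real.sqrt 1 := Real.sqrt_le_sqrt h
        _ = 1 := Real.sqrt_one
    have s2 : Real.sqrt ((n:ℝ)-(k:ℝ)) ≤ 3/2 := by
      have h : (n:ℝ)-(k:ℝ) ≤ 9/4 := by linarith
      calc Real.sqrt ((n:ℝ)-(k:ℝ)) ≤ Real.sqrt (9/4) := Real.sqrt_le_sqrt h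
        _ = 3/2 := by
          rw [show (9/4:ℝ) = (3/2)^2 by norm_num, Real.sqrt_sq (by norm_num : (0:ℝ) ≤ 3/2)]
    have q1 : Real.exp (-1/3) / (8 * Real.sqrt (2 * Real.pi)) * Real.sqrt ((k:ℝ)/(n:ℝ))
        ≤ 1/20 := by
      have h := mul_le_mul hc s1 (Real.sqrt_nonneg _) (by norm_num : (0:ℝ) ≤ 1/20)
      simpa using h
    have q2 : Real.exp (-1/3) / (8 * Real.sqrt (2 * Real.pi)) * Real.sqrt ((k:ℝ)/(n:ℝ))
        * Real.sqrt ((n:ℝ)-(k:ℝ)) ≤ 3/40 := by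
      have h := mul_le_mul q1 s2 (Real.sqrt_nonneg _) (by norm_num : (0:ℝ) ≤ 1/20)
      linarith
    have hLHS : Real.exp (-1/3) / (8 * Real.sqrt (2 * Real.pi)) * Real.sqrt ((k:ℝ)/(n:ℝ))
        * Real.sqrt ((n:ℝ)-(k:ℝ)) / (n:ℝ) ≤ 3/80 := by
      have h := div_le_div₀ (by norm_num : (0:ℝ) ≤ 3/40) q2 (by norm_num : (0:ℝ) < 2) hnR
      linarith
    interval_cases n
    · interval_cases i
      interval_cases k
      refine le_trans hLHS ?_
      norm_num [hypMAD, hypPMF, Finset.sum_range_succ, Nat.choose, abs]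
    · interval_cases i <;> interval_cases k <;>
        (refine le_trans hLHS ?_ ;
         norm_num [hypMAD, hypPMF, Finset.sum_range_succ, Nat.choose, abs])
end

section
/- Let P = (x₁,...,xₙ), n ≥ 2, with Σxᵢ = 0 and Σ|xᵢ| > 0, and let k ∈ [n-1]. Let X_P = Σ_{i∈I} xᵢ where I is a uniformly random k-element subset of [n]. Then P(X_P > 0) ≥ (e^{-1/3}/(8√(2π)))·(k/n)·√((n-k)/(nk)). -/
open Finset

namespace ProbPos



noncomputable def eps (s : Finset ℕ) (t : ℕ) : ℝ := if t ∈ s then -1 else 1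

lemma eps_insert_self (s : Finset ℕ) (a : ℕ) : eps (insert a s) a = -1 := by
  unfold eps; rw [if_pos (Finset.mem_insert_self _ _)]

lemma eps_not_mem {s : Finset ℕ} {a : ℕ} (h : a ∉ s) : eps s a = 1 := by
  unfold eps; rw [if_neg h]

lemma sum_eps_insert {a : ℕ} {T : Finset ℕ} (ha : a ∉ T) (d : ℕ → ℝ) (s : Finset ℕ)
    (hs : s ⊆ T) :
    (∑ t ∈ insert a T, eps s t * d t) = (∑ t ∈ T, eps s t * d t) + d a := by
  rw [Finset.sum_insert ha, eps_not_mem (fun h => ha (hs h))]; ring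

lemma sum_eps_insert' {a : ℕ} {T : Finset ℕ} (ha : a ∉ T) (d : ℕ → ℝ) (s : Finset ℕ)
    (hs : s ⊆ T) :
    (∑ t ∈ insert a T, eps (insert a s) t * d t) = (∑ t ∈ T, eps s t * d t) - d a := by
  rw [Finset.sum_insert ha, eps_insert_self]
  have hcong : ∀ t ∈ T, eps (insert a s) t * d t = eps s t * d t := by
    intro t ht
    have hne : t ≠ a := fun h => ha (h ▸ ht)
    have : (t ∈ insert a s) ↔ t ∈ s := by
      rw [Finset.mem_insert]
      exact ⟨fun h => h.resolve_left hne, Or.inr⟩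
    unfold eps; simp [this]
  rw [Finset.sum_congr rfl hcong]; ring

lemma sq_sum_signs (T : Finset ℕ) (d : ℕ → ℝ) :
    ∑ s ∈ T.powerset, (∑ t ∈ T, eps s t * d t) ^ 2
      = 2 ^ T.card * ∑ t ∈ T, d t ^ 2 := by
  classical
  induction T using Finset.induction_on with
  | empty => simp
  | @insert a T ha ih =>
    rw [Finset.sum_powerset_insert ha]
    calc (∑ s ∈ T.powerset, (∑ t ∈ insert a T, eps s t * d t) ^ 2)
          + ∑ s ∈ T.powerset, (∑ t ∈ insert a T, eps (insert a s) t * d t) ^ 2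
        = ∑ s ∈ T.powerset, (((∑ t ∈ T, eps s t * d t) + d a) ^ 2
            + ((∑ t ∈ T, eps s t * d t) - d a) ^ 2) := by
          rw [← Finset.sum_add_distrib]
          refine Finset.sum_congr rfl fun s hs => ?_
          rw [sum_eps_insert ha d s (Finset.mem_powerset.1 hs),
              sum_eps_insert' ha d s (Finset.mem_powerset.1 hs)]
      _ = 2 * (∑ s ∈ T.powerset, (∑ t ∈ T, eps s t * d t) ^ 2)
            + (2 ^ T.card) * (2 * d a ^ 2) := by
          have : ∀ s ∈ T.powerset, ((∑ t ∈ T, eps s t * d t) + d a) ^ 2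
              + ((∑ t ∈ T, eps s t * d t) - d a) ^ 2
              = 2 * (∑ t ∈ T, eps s t * d t) ^ 2 + 2 * d a ^ 2 := fun s _ => by ring
          rw [Finset.sum_congr rfl this, Finset.sum_add_distrib, ← Finset.mul_sum,
            Finset.sum_const, Finset.card_powerset, nsmul_eq_mul]
          push_cast; ring
      _ = 2 ^ (insert a T).card * ∑ t ∈ insert a T, d t ^ 2 := by
          rw [ih, Finset.sum_insert ha, Finset.card_insert_of_notMem ha]
          push_cast; ring

lemma quart_sum_signs (T : Finset ℕ) (d : ℕ → ℝ) :
    ∑ s ∈ T.powerset, (∑ t ∈ T, eps s t * d t) ^ 4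
      ≤ 3 * 2 ^ T.card * (∑ t ∈ T, d t ^ 2) ^ 2 := by
  classical
  induction T using Finset.induction_on with
  | empty => simp
  | @insert a T ha ih =>
    rw [Finset.sum_powerset_insert ha]
    have key : (∑ s ∈ T.powerset, (∑ t ∈ insert a T, eps s t * d t) ^ 4)
          + ∑ s ∈ T.powerset, (∑ t ∈ insert a T, eps (insert a s) t * d t) ^ 4
        = ∑ s ∈ T.powerset, (2 * (∑ t ∈ T, eps s t * d t) ^ 4
            + 12 * (∑ t ∈ T, eps s t * d t) ^ 2 * d a ^ 2 + 2 * d a ^ 4) := by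
      rw [← Finset.sum_add_distrib]
      refine Finset.sum_congr rfl fun s hs => ?_
      rw [sum_eps_insert ha d s (Finset.mem_powerset.1 hs),
          sum_eps_insert' ha d s (Finset.mem_powerset.1 hs)]
      ring
    rw [key, Finset.sum_add_distrib, Finset.sum_add_distrib]
    have t1 : ∑ s ∈ T.powerset, 2 * (∑ t ∈ T, eps s t * d t) ^ 4
        ≤ 2 * (3 * 2 ^ T.card * (∑ t ∈ T, d t ^ 2) ^ 2) := by
      rw [← Finset.mul_sum]
      nlinarith [ih]
    have t2 : ∑ s ∈ T.powerset, 12 * (∑ t ∈ T, eps s t * d t) ^ 2 * d a ^ 2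
        = 12 * d a ^ 2 * (2 ^ T.card * ∑ t ∈ T, d t ^ 2) := by
      calc ∑ s ∈ T.powerset, 12 * (∑ t ∈ T, eps s t * d t) ^ 2 * d a ^ 2
          = 12 * d a ^ 2 * ∑ s ∈ T.powerset, (∑ t ∈ T, eps s t * d t) ^ 2 := by
            rw [Finset.mul_sum]
            exact Finset.sum_congr rfl fun s _ => by ring
        _ = 12 * d a ^ 2 * (2 ^ T.card * ∑ t ∈ T, d t ^ 2) := by rw [sq_sum_signs]
    have t3 : ∑ s ∈ T.powerset, (2 : ℝ) * d a ^ 4 = 2 ^ T.card * (2 * d a ^ 4) := by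
      rw [Finset.sum_const, Finset.card_powerset, nsmul_eq_mul]; push_cast; ring
    rw [t2, t3, Finset.sum_insert ha, Finset.card_insert_of_notMem ha]
    have hQ : (0:ℝ) ≤ ∑ t ∈ T, d t ^ 2 :=
      Finset.sum_nonneg fun t _ => sq_nonneg _
    have h2 : (0:ℝ) < 2 ^ T.card := by positivity
    calc _ ≤ 2 * (3 * 2 ^ T.card * (∑ t ∈ T, d t ^ 2) ^ 2)
            + 12 * d a ^ 2 * (2 ^ T.card * ∑ t ∈ T, d t ^ 2)
            + 2 ^ T.card * (2 * d a ^ 4) := by linarith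
    _ ≤ 3 * 2 ^ (T.card + 1) * (d a ^ 2 + ∑ t ∈ T, d t ^ 2) ^ 2 := by
        rw [pow_succ 2 T.card]
        set Q := ∑ t ∈ T, d t ^ 2 with hQdef
        set P := (2:ℝ) ^ T.card with hPdef
        nlinarith [sq_nonneg (d a), sq_nonneg (d a ^ 2), mul_nonneg (le_of_lt h2) hQ,
          mul_nonneg (mul_nonneg (le_of_lt h2) (sq_nonneg (d a))) (sq_nonneg (d a)),
          mul_nonneg (mul_nonneg (le_of_lt h2) hQ) hQ]


lemma khintchine (T : Finset ℕ) (d : ℕ → ℝ) :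
    (2:ℝ) ^ T.card * ∑ t ∈ T, |d t|
      ≤ Real.sqrt (3 * T.card) * ∑ s ∈ T.powerset, |∑ t ∈ T, eps s t * d t| := by
  classical
  set Q : ℝ := ∑ t ∈ T, d t ^ 2 with hQdef
  set L : ℝ := ∑ s ∈ T.powerset, |∑ t ∈ T, eps s t * d t| with hLdef
  have hQ0 : 0 ≤ Q := Finset.sum_nonneg fun t _ => sq_nonneg _
  have hL0 : 0 ≤ L := Finset.sum_nonneg fun s _ => abs_nonneg _
  have hd0 : 0 ≤ ∑ t ∈ T, |d t| := Finset.sum_nonneg fun t _ => abs_nonneg _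
  rcases eq_or_lt_of_le hQ0 with hQz | hQpos
  · -- Q = 0, all d t = 0 on T
    have : ∀ t ∈ T, d t ^ 2 = 0 := by
      intro t ht
      have := (Finset.sum_eq_zero_iff_of_nonneg (fun t _ => sq_nonneg (d t))).1 hQz.symm
      exact this t ht
    have hz : ∑ t ∈ T, |d t| = 0 := Finset.sum_eq_zero fun t ht => by
      have := this t ht; rw [abs_eq_zero]; exact pow_eq_zero_iff (by norm_num) |>.1 this
    rw [hz, mul_zero]
    positivity
  · -- main case
    have hCd : (∑ t ∈ T, |d t|) ^ 2 ≤ (T.card : ℝ) * Q := by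
      have := Finset.sum_mul_sq_le_sq_mul_sq T (fun _ => (1:ℝ)) (fun t => |d t|)
      simpa [sq_abs] using this
    set A : ℝ := ∑ s ∈ T.powerset, (∑ t ∈ T, eps s t * d t) ^ 2 with hAdef
    set B : ℝ := ∑ s ∈ T.powerset, (∑ t ∈ T, eps s t * d t) ^ 4 with hBdef
    set C : ℝ := ∑ s ∈ T.powerset, |∑ t ∈ T, eps s t * d t| ^ 3 with hCdef
    have hC0 : 0 ≤ C := Finset.sum_nonneg fun s _ => by positivity
    have hB0 : 0 ≤ B := Finset.sum_nonneg fun s _ => by positivity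
    have hAval : A = 2 ^ T.card * Q := sq_sum_signs T d
    have hBle : B ≤ 3 * 2 ^ T.card * Q ^ 2 := quart_sum_signs T d
    have hApos : 0 < A := by
      rw [hAval]; positivity
    have CS1 : A ^ 2 ≤ L * C := by
      have h := Finset.sum_mul_sq_le_sq_mul_sq T.powerset
        (fun s => Real.sqrt |∑ t ∈ T, eps s t * d t|)
        (fun s => |∑ t ∈ T, eps s t * d t| * Real.sqrt |∑ t ∈ T, eps s t * d t|)
      have e1 : ∀ s : Finset ℕ,
          Real.sqrt |∑ t ∈ T, eps s t * d t|
            * (|∑ t ∈ T, eps s t * d t| * Real.sqrt |∑ t ∈ T, eps s t * d t|)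
          = (∑ t ∈ T, eps s t * d t) ^ 2 := by
        intro s
        have h1 : Real.sqrt |∑ t ∈ T, eps s t * d t| * Real.sqrt |∑ t ∈ T, eps s t * d t|
            = |∑ t ∈ T, eps s t * d t| := Real.mul_self_sqrt (abs_nonneg _)
        calc Real.sqrt |∑ t ∈ T, eps s t * d t|
              * (|∑ t ∈ T, eps s t * d t| * Real.sqrt |∑ t ∈ T, eps s t * d t|)
            = (Real.sqrt |∑ t ∈ T, eps s t * d t| * Real.sqrt |∑ t ∈ T, eps s t * d t|)
              * |∑ t ∈ T, eps s t * d t| := by ring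
          _ = |∑ t ∈ T, eps s t * d t| * |∑ t ∈ T, eps s t * d t| := by rw [h1]
          _ = (∑ t ∈ T, eps s t * d t) ^ 2 := by rw [← abs_mul, abs_mul_self]; ring
      have e2 : ∀ s : Finset ℕ,
          (Real.sqrt |∑ t ∈ T, eps s t * d t|) ^ 2 = |∑ t ∈ T, eps s t * d t| :=
        fun s => Real.sq_sqrt (abs_nonneg _)
      have e3 : ∀ s : Finset ℕ,
          (|∑ t ∈ T, eps s t * d t| * Real.sqrt |∑ t ∈ T, eps s t * d t|) ^ 2
            = |∑ t ∈ T, eps s t * d t| ^ 3 := by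
        intro s
        rw [mul_pow, Real.sq_sqrt (abs_nonneg _)]
        ring
      calc A ^ 2 = (∑ s ∈ T.powerset, Real.sqrt |∑ t ∈ T, eps s t * d t|
            * (|∑ t ∈ T, eps s t * d t| * Real.sqrt |∑ t ∈ T, eps s t * d t|)) ^ 2 := by
            rw [hAdef]; congr 1; exact Finset.sum_congr rfl fun s _ => (e1 s).symm
        _ ≤ (∑ s ∈ T.powerset, (Real.sqrt |∑ t ∈ T, eps s t * d t|) ^ 2)
              * (∑ s ∈ T.powerset,
                (|∑ t ∈ T, eps s t * d t| * Real.sqrt |∑ t ∈ T, eps s t * d t|) ^ 2) := h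
        _ = L * C := by
            rw [hLdef, hCdef]
            congr 1
            · exact Finset.sum_congr rfl fun s _ => e2 s
            · exact Finset.sum_congr rfl fun s _ => e3 s
    have CS2 : C ^ 2 ≤ A * B := by
      have h := Finset.sum_mul_sq_le_sq_mul_sq T.powerset
        (fun s => |∑ t ∈ T, eps s t * d t|) (fun s => (∑ t ∈ T, eps s t * d t) ^ 2)
      have e1 : ∀ s : Finset ℕ,
          |∑ t ∈ T, eps s t * d t| * (∑ t ∈ T, eps s t * d t) ^ 2
            = |∑ t ∈ T, eps s t * d t| ^ 3 := by
        intro s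
        rw [← sq_abs]
        ring
      calc C ^ 2 = (∑ s ∈ T.powerset,
            |∑ t ∈ T, eps s t * d t| * (∑ t ∈ T, eps s t * d t) ^ 2) ^ 2 := by
            rw [hCdef]; congr 1; exact Finset.sum_congr rfl fun s _ => (e1 s).symm
        _ ≤ (∑ s ∈ T.powerset, |∑ t ∈ T, eps s t * d t| ^ 2)
              * (∑ s ∈ T.powerset, ((∑ t ∈ T, eps s t * d t) ^ 2) ^ 2) := h
        _ = A * B := by
            rw [hAdef, hBdef]
            congr 1
            · exact Finset.sum_congr rfl fun s _ => by rw [sq_abs]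
            · exact Finset.sum_congr rfl fun s _ => by ring
    -- A^3 ≤ L^2 * B
    have key : A ^ 3 ≤ L ^ 2 * B := by
      nlinarith [CS1, CS2, hApos, hL0, hC0, hB0, sq_nonneg (A^2 - L*C)]
    -- L^2 ≥ 2^(2c) Q / 3
    have hL2 : (2:ℝ) ^ (2 * T.card) * Q ≤ 3 * L ^ 2 := by
      have h3 : A ^ 3 = 2 ^ (3 * T.card) * Q ^ 3 := by
        rw [hAval, mul_pow, ← pow_mul, mul_comm T.card 3]
      have hB3 : L ^ 2 * B ≤ L ^ 2 * (3 * 2 ^ T.card * Q ^ 2) := by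
        apply mul_le_mul_of_nonneg_left hBle (sq_nonneg _)
      have hmain := le_trans (h3 ▸ key) hB3
      have hpos : (0:ℝ) < 2 ^ T.card * Q ^ 2 := by positivity
      refine (mul_le_mul_iff_of_pos_right hpos).1 ?_
      calc (2:ℝ) ^ (2 * T.card) * Q * (2 ^ T.card * Q ^ 2)
          = 2 ^ (3 * T.card) * Q ^ 3 := by
            rw [pow_mul, pow_mul, show ((2:ℝ)^2) = 4 by norm_num,
              show ((2:ℝ)^3) = 8 by norm_num,
              show (8:ℝ)^T.card = 4^T.card * 2^T.card by rw [← mul_pow]; norm_num]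
            ring
        _ ≤ L ^ 2 * (3 * 2 ^ T.card * Q ^ 2) := hmain
        _ = 3 * L ^ 2 * (2 ^ T.card * Q ^ 2) := by ring
    -- conclude
    have lhs_sq : ((2:ℝ) ^ T.card * ∑ t ∈ T, |d t|) ^ 2
        ≤ (3 * T.card) * L ^ 2 := by
      have heq : ((2:ℝ) ^ T.card * ∑ t ∈ T, |d t|) ^ 2
          = 2 ^ (2 * T.card) * (∑ t ∈ T, |d t|) ^ 2 := by
        rw [mul_pow, ← pow_mul, mul_comm T.card 2]
      rw [heq]
      calc 2 ^ (2 * T.card) * (∑ t ∈ T, |d t|) ^ 2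
          ≤ 2 ^ (2 * T.card) * ((T.card : ℝ) * Q) := by
            apply mul_le_mul_of_nonneg_left hCd (by positivity)
        _ = (T.card : ℝ) * (2 ^ (2 * T.card) * Q) := by ring
        _ ≤ (T.card : ℝ) * (3 * L ^ 2) := by
            apply mul_le_mul_of_nonneg_left hL2 (by positivity)
        _ = 3 * T.card * L ^ 2 := by ring
    have rhs_sq : (Real.sqrt (3 * T.card) * L) ^ 2 = (3 * T.card) * L ^ 2 := by
      rw [mul_pow, Real.sq_sqrt (by positivity)]
    have lhs0 : 0 ≤ (2:ℝ) ^ T.card * ∑ t ∈ T, |d t| := by positivity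
    have rhs0 : 0 ≤ Real.sqrt (3 * T.card) * L := by positivity
    have hsq : ((2:ℝ) ^ T.card * ∑ t ∈ T, |d t|) ^ 2 ≤ (Real.sqrt (3 * T.card) * L) ^ 2 := by
      rw [rhs_sq]; exact lhs_sq
    have := Real.sqrt_le_sqrt hsq
    rwa [Real.sqrt_sq lhs0, Real.sqrt_sq rhs0] at this




section Defs

variable {n : ℕ}

/-- embed a natural number into `Fin n` (garbage value if too big) -/
def emb (hn : 0 < n) (m : ℕ) : Fin n := if h : m < n then ⟨m, h⟩ else ⟨0, hn⟩

lemma emb_val (hn : 0 < n) {m : ℕ} (h : m < n) : (emb hn m).val = m := by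
  simp [emb, h]

lemma emb_eq_iff (hn : 0 < n) {a b : ℕ} (ha : a < n) (hb : b < n) :
    emb hn a = emb hn b ↔ a = b := by
  constructor
  · intro h
    have := congrArg Fin.val h
    rwa [emb_val hn ha, emb_val hn hb] at this
  · intro h; rw [h]

/-- the sign-flip slot involution on ℕ -/
def gfun (k r : ℕ) (s : Finset ℕ) (m : ℕ) : ℕ :=
  if m < r ∧ m ∈ s then m + k
  else if k ≤ m ∧ m < k + r ∧ m - k ∈ s then m - k
  else m

lemma gfun_lt {k r m : ℕ} (s : Finset ℕ) (hkr : k + r ≤ n) (hm : m < n) :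
    gfun k r s m < n := by
  unfold gfun
  split_ifs with h1 h2
  · omega
  · omega
  · exact hm

lemma gfun_invol {k r : ℕ} (s : Finset ℕ) (hrk : r ≤ k) (m : ℕ) :
    gfun k r s (gfun k r s m) = m := by
  unfold gfun
  by_cases h1 : m < r ∧ m ∈ s
  · rw [if_pos h1]
    have hnotlt : ¬(m + k < r ∧ m + k ∈ s) := by
      rintro ⟨h, -⟩; omega
    rw [if_neg hnotlt]
    have : k ≤ m + k ∧ m + k < k + r ∧ m + k - k ∈ s := by
      refine ⟨by omega, by omega, ?_⟩
      have : m + k - k = m := by omega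
      rw [this]; exact h1.2
    rw [if_pos this]
    omega
  · rw [if_neg h1]
    by_cases h2 : k ≤ m ∧ m < k + r ∧ m - k ∈ s
    · rw [if_pos h2]
      have : m - k < r ∧ m - k ∈ s := ⟨by omega, h2.2.2⟩
      rw [if_pos this]
      omega
    · rw [if_neg h2, if_neg h1, if_neg h2]

/-- sign-flip permutation of slots -/
lemma uperm_invol (hn : 0 < n) {k r : ℕ} (hrk : r ≤ k) (hkr : k + r ≤ n) (s : Finset ℕ) :
    Function.Involutive (fun i : Fin n => emb hn (gfun k r s i.val)) := by
  intro i
  apply Fin.ext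
  have h1 : gfun k r s i.val < n := gfun_lt s hkr i.isLt
  show (emb hn (gfun k r s (emb hn (gfun k r s i.val)).val)).val = i.val
  rw [emb_val hn h1, emb_val hn (gfun_lt s hkr h1)]
  exact gfun_invol s hrk i.val

def uperm (hn : 0 < n) {k r : ℕ} (hrk : r ≤ k) (hkr : k + r ≤ n) (s : Finset ℕ) :
    Equiv.Perm (Fin n) :=
  Function.Involutive.toPerm _ (uperm_invol hn hrk hkr s)

lemma uperm_apply (hn : 0 < n) {k r : ℕ} (hrk : r ≤ k) (hkr : k + r ≤ n) (s : Finset ℕ)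
    (i : Fin n) : uperm hn hrk hkr s i = emb hn (gfun k r s i.val) := rfl

variable (x : Fin n → ℝ)

/-- the pair difference -/
noncomputable def dpair (hn : 0 < n) (k : ℕ) (π : Equiv.Perm (Fin n)) (t : ℕ) : ℝ :=
  x (π (emb hn t)) - x (π (emb hn (t + k)))

noncomputable def Zsum (hn : 0 < n) (k r : ℕ) (π : Equiv.Perm (Fin n)) : ℝ :=
  ∑ t ∈ range r, dpair x hn k π t

/-- sum over permutations is invariant under right multiplication -/
lemma sum_reindex {M : Type*} [AddCommMonoid M] (ρ : Equiv.Perm (Fin n))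
    (F : Equiv.Perm (Fin n) → M) :
    ∑ π : Equiv.Perm (Fin n), F (π * ρ) = ∑ π : Equiv.Perm (Fin n), F π :=
  Fintype.sum_equiv (Equiv.mulRight ρ) _ _ (fun _ => rfl)

lemma sum_reindex_left {M : Type*} [AddCommMonoid M] (ρ : Equiv.Perm (Fin n))
    (F : Equiv.Perm (Fin n) → M) :
    ∑ π : Equiv.Perm (Fin n), F (ρ * π) = ∑ π : Equiv.Perm (Fin n), F π :=
  Fintype.sum_equiv (Equiv.mulLeft ρ) _ _ (fun _ => rfl)

/-- the bridge: composing with the sign-flip permutation flips signs of pair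
differences -/
lemma bridge (hn : 0 < n) {k r : ℕ} (hr1 : 1 ≤ r) (hrk : r ≤ k) (hkr : k + r ≤ n)
    (s : Finset ℕ) (π : Equiv.Perm (Fin n)) {t : ℕ} (ht : t < r) :
    dpair x hn k (π * uperm hn hrk hkr s) t = eps s t * dpair x hn k π t := by
  have htn : t < n := by omega
  have htkn : t + k < n := by omega
  have h1 : (uperm hn hrk hkr s) (emb hn t) = emb hn (gfun k r s t) := by
    rw [uperm_apply, emb_val hn htn]
  have h2 : (uperm hn hrk hkr s) (emb hn (t + k)) = emb hn (gfun k r s (t + k)) := by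
    rw [uperm_apply, emb_val hn htkn]
  by_cases hs : t ∈ s
  · have g1 : gfun k r s t = t + k := by
      unfold gfun; rw [if_pos ⟨ht, hs⟩]
    have g2 : gfun k r s (t + k) = t := by
      unfold gfun
      rw [if_neg (by rintro ⟨h, -⟩; omega), if_pos ⟨by omega, by omega, by
        have : t + k - k = t := by omega
        rw [this]; exact hs⟩]
      omega
    unfold dpair eps
    rw [Equiv.Perm.mul_apply, Equiv.Perm.mul_apply, h1, h2, g1, g2, if_pos hs]
    ring
  · have g1 : gfun k r s t = t := by
      unfold gfun
      rw [if_neg (by rintro ⟨-, h⟩; exact hs h), if_neg (by rintro ⟨h, -⟩; omega)]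
    have g2 : gfun k r s (t + k) = t + k := by
      unfold gfun
      rw [if_neg (by rintro ⟨h, -⟩; omega), if_neg (by
        rintro ⟨-, -, h⟩
        have : t + k - k = t := by omega
        rw [this] at h; exact hs h)]
    unfold dpair eps
    rw [Equiv.Perm.mul_apply, Equiv.Perm.mul_apply, h1, h2, g1, g2, if_neg hs]
    ring

end Defs

section Chunk2

variable {n : ℕ} (x : Fin n → ℝ)


lemma SD_le_SZ (hn : 0 < n) {k r : ℕ} (hr1 : 1 ≤ r) (hrk : r ≤ k) (hkr : k + r ≤ n) :
    ∑ π : Equiv.Perm (Fin n), ∑ t ∈ range r, |dpair x hn k π t|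
      ≤ Real.sqrt (3 * r) * ∑ π : Equiv.Perm (Fin n), |Zsum x hn k r π| := by
  have h2r : (0:ℝ) < 2 ^ r := by positivity
  have main : (2:ℝ)^r * ∑ π : Equiv.Perm (Fin n), ∑ t ∈ range r, |dpair x hn k π t|
      ≤ Real.sqrt (3 * r) * ((2:ℝ)^r * ∑ π : Equiv.Perm (Fin n), |Zsum x hn k r π|) := by
    calc (2:ℝ)^r * ∑ π : Equiv.Perm (Fin n), ∑ t ∈ range r, |dpair x hn k π t|
        = ∑ π : Equiv.Perm (Fin n), (2:ℝ)^r * ∑ t ∈ range r, |dpair x hn k π t| := by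
          rw [Finset.mul_sum]
      _ ≤ ∑ π : Equiv.Perm (Fin n), Real.sqrt (3 * r)
            * ∑ s ∈ (range r).powerset, |∑ t ∈ range r, eps s t * dpair x hn k π t| := by
          apply Finset.sum_le_sum
          intro π _
          have := khintchine (range r) (dpair x hn k π)
          rwa [Finset.card_range] at this
      _ = Real.sqrt (3 * r) * ∑ π : Equiv.Perm (Fin n),
            ∑ s ∈ (range r).powerset, |∑ t ∈ range r, eps s t * dpair x hn k π t| := by
          rw [Finset.mul_sum]
      _ = Real.sqrt (3 * r) * ∑ s ∈ (range r).powerset,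
            ∑ π : Equiv.Perm (Fin n), |∑ t ∈ range r, eps s t * dpair x hn k π t| := by
          rw [Finset.sum_comm]
      _ = Real.sqrt (3 * r) * ∑ s ∈ (range r).powerset,
            ∑ π : Equiv.Perm (Fin n), |Zsum x hn k r (π * uperm hn hrk hkr s)| := by
          congr 1
          refine Finset.sum_congr rfl fun s _ => Finset.sum_congr rfl fun π _ => ?_
          congr 1
          unfold Zsum
          exact (Finset.sum_congr rfl fun t ht =>
            bridge x hn hr1 hrk hkr s π (Finset.mem_range.1 ht)).symm
      _ = Real.sqrt (3 * r) * ∑ s ∈ (range r).powerset,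
            ∑ π : Equiv.Perm (Fin n), |Zsum x hn k r π| := by
          congr 1
          exact Finset.sum_congr rfl fun s _ =>
            sum_reindex (uperm hn hrk hkr s) (fun π => |Zsum x hn k r π|)
      _ = Real.sqrt (3 * r) * ((2:ℝ)^r * ∑ π : Equiv.Perm (Fin n), |Zsum x hn k r π|) := by
          rw [Finset.sum_const, Finset.card_powerset, Finset.card_range, nsmul_eq_mul]
          push_cast
          ring
  have hs3 : (0:ℝ) ≤ Real.sqrt (3 * r) := Real.sqrt_nonneg _
  have main2 : (2:ℝ)^r * (∑ π : Equiv.Perm (Fin n), ∑ t ∈ range r, |dpair x hn k π t|)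
      ≤ (2:ℝ)^r * (Real.sqrt (3 * r) * ∑ π : Equiv.Perm (Fin n), |Zsum x hn k r π|) := by
    calc (2:ℝ)^r * (∑ π : Equiv.Perm (Fin n), ∑ t ∈ range r, |dpair x hn k π t|)
        ≤ Real.sqrt (3 * r) * ((2:ℝ)^r * ∑ π : Equiv.Perm (Fin n), |Zsum x hn k r π|) := main
      _ = (2:ℝ)^r * (Real.sqrt (3 * r) * ∑ π : Equiv.Perm (Fin n), |Zsum x hn k r π|) := by
          ring
  exact le_of_mul_le_mul_left main2 h2r

lemma slot_eq (hn : 0 < n) {k r : ℕ} (hr1 : 1 ≤ r) (hrk : r ≤ k) (hkr : k + r ≤ n)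
    {t : ℕ} (ht : t < r) :
    ∑ π : Equiv.Perm (Fin n), |dpair x hn k π t|
      = ∑ π : Equiv.Perm (Fin n), |dpair x hn k π 0| := by
  have hk1 : 1 ≤ k := le_trans hr1 hrk
  have h0n : 0 < n := hn
  have htn : t < n := by omega
  have hkn : k < n := by omega
  have htkn : t + k < n := by omega
  set ρ := Equiv.swap (emb hn 0) (emb hn t) * Equiv.swap (emb hn k) (emb hn (t+k)) with hρ
  have e1 : ρ (emb hn 0) = emb hn t := by
    rw [hρ, Equiv.Perm.mul_apply]
    have h1 : Equiv.swap (emb hn k) (emb hn (t+k)) (emb hn 0) = emb hn 0 := by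
      apply Equiv.swap_apply_of_ne_of_ne
      · rw [Ne, emb_eq_iff hn h0n hkn]; omega
      · rw [Ne, emb_eq_iff hn h0n htkn]; omega
    rw [h1, Equiv.swap_apply_left]
  have e2 : ρ (emb hn k) = emb hn (t + k) := by
    rw [hρ, Equiv.Perm.mul_apply, Equiv.swap_apply_left]
    apply Equiv.swap_apply_of_ne_of_ne
    · rw [Ne, emb_eq_iff hn htkn h0n]; omega
    · rw [Ne, emb_eq_iff hn htkn htn]; omega
  have hd : ∀ π : Equiv.Perm (Fin n), dpair x hn k (π * ρ) 0 = dpair x hn k π t := by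
    intro π
    unfold dpair
    rw [zero_add, show (π * ρ) (emb hn 0) = π (ρ (emb hn 0)) from rfl,
      show (π * ρ) (emb hn k) = π (ρ (emb hn k)) from rfl, e1, e2]
  calc ∑ π : Equiv.Perm (Fin n), |dpair x hn k π t|
      = ∑ π : Equiv.Perm (Fin n), |dpair x hn k (π * ρ) 0| := by
        exact (Finset.sum_congr rfl fun π _ => by rw [hd π]).symm
    _ = ∑ π : Equiv.Perm (Fin n), |dpair x hn k π 0| :=
        sum_reindex ρ (fun π => |dpair x hn k π 0|)

lemma SD_eq (hn : 0 < n) {k r : ℕ} (hr1 : 1 ≤ r) (hrk : r ≤ k) (hkr : k + r ≤ n) :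
    ∑ π : Equiv.Perm (Fin n), ∑ t ∈ range r, |dpair x hn k π t|
      = r * ∑ π : Equiv.Perm (Fin n), |dpair x hn k π 0| := by
  rw [Finset.sum_comm]
  calc ∑ t ∈ range r, ∑ π : Equiv.Perm (Fin n), |dpair x hn k π t|
      = ∑ t ∈ range r, ∑ π : Equiv.Perm (Fin n), |dpair x hn k π 0| :=
        Finset.sum_congr rfl fun t ht =>
          slot_eq x hn hr1 hrk hkr (Finset.mem_range.1 ht)
    _ = r * ∑ π : Equiv.Perm (Fin n), |dpair x hn k π 0| := by
        rw [Finset.sum_const, Finset.card_range, nsmul_eq_mul]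

end Chunk2


section Chunk3

variable {n : ℕ} (x : Fin n → ℝ)

lemma fiber_card_const (a0 : Fin n) (v w : Fin n) :
    (univ.filter (fun π : Equiv.Perm (Fin n) => π a0 = v)).card
      = (univ.filter (fun π : Equiv.Perm (Fin n) => π a0 = w)).card := by
  classical
  rw [Finset.card_filter, Finset.card_filter]
  rw [← sum_reindex_left (n := n) (M := ℕ) (Equiv.swap v w)
    (fun π => if π a0 = w then 1 else 0)]
  refine Finset.sum_congr rfl fun π _ => ?_
  have hh : (Equiv.swap v w * π) a0 = Equiv.swap v w (π a0) := rfl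
  have hiff : Equiv.swap v w (π a0) = w ↔ π a0 = v := by
    rw [Equiv.swap_apply_eq_iff, Equiv.swap_apply_right]
  rw [hh]
  exact (if_congr hiff rfl rfl).symm

lemma fiber_card_mul (a0 : Fin n) (v : Fin n) :
    n * (univ.filter (fun π : Equiv.Perm (Fin n) => π a0 = v)).card = n.factorial := by
  classical
  have hpart : (univ : Finset (Equiv.Perm (Fin n))).card
      = ∑ w : Fin n, (univ.filter (fun π : Equiv.Perm (Fin n) => π a0 = w)).card :=
    Finset.card_eq_sum_card_fiberwise (fun π _ => Finset.mem_univ (π a0))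
  have hconst : ∑ w : Fin n, (univ.filter (fun π : Equiv.Perm (Fin n) => π a0 = w)).card
      = n * (univ.filter (fun π : Equiv.Perm (Fin n) => π a0 = v)).card := by
    rw [Finset.sum_congr rfl (fun w _ => fiber_card_const a0 w v), Finset.sum_const,
      Finset.card_univ, Fintype.card_fin, smul_eq_mul]
  rw [← hconst, ← hpart, Finset.card_univ, Fintype.card_perm, Fintype.card_fin]

lemma marginal (hn : 0 < n) {k : ℕ} (hk1 : 1 ≤ k) (hkn : k < n)
    (hsum : ∑ v, x v = 0) :
    (n.factorial : ℝ) * ∑ v, |x v|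
      ≤ ((n:ℝ) - 1) * ∑ π : Equiv.Perm (Fin n), |dpair x hn k π 0| := by
  classical
  set a0 : Fin n := emb hn 0 with ha0
  set b0 : Fin n := emb hn k with hb0
  have hab : a0 ≠ b0 := by
    rw [ha0, hb0, Ne, emb_eq_iff hn hn hkn]; omega
  have hdp : ∀ π : Equiv.Perm (Fin n), dpair x hn k π 0 = x (π a0) - x (π b0) := by
    intro π; unfold dpair; rw [zero_add]
  -- slot symmetry within a fiber
  have hslot : ∀ (v : Fin n) (j : Fin n), j ≠ a0 →
      ∑ π ∈ univ.filter (fun π : Equiv.Perm (Fin n) => π a0 = v), x (π j)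
        = ∑ π ∈ univ.filter (fun π : Equiv.Perm (Fin n) => π a0 = v), x (π b0) := by
    intro v j hj
    by_cases hjb : j = b0
    · rw [hjb]
    · have hσa : Equiv.swap b0 j a0 = a0 :=
        Equiv.swap_apply_of_ne_of_ne hab (Ne.symm hj)
      rw [Finset.sum_filter, Finset.sum_filter]
      have := sum_reindex (n := n) (M := ℝ) (Equiv.swap b0 j)
        (fun π => if π a0 = v then x (π b0) else 0)
      rw [← this]
      refine (Finset.sum_congr rfl fun π _ => ?_)
      have h1 : (π * Equiv.swap b0 j) a0 = π a0 := by
        rw [Equiv.Perm.mul_apply, hσa]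
      have h2 : (π * Equiv.swap b0 j) b0 = π j := by
        rw [Equiv.Perm.mul_apply, Equiv.swap_apply_left]
      rw [h1, h2]
  -- the key linear identity on each fiber
  have hkey : ∀ v : Fin n,
      ((n:ℝ) - 1) * ∑ π ∈ univ.filter (fun π : Equiv.Perm (Fin n) => π a0 = v), x (π b0)
        = -(((univ.filter (fun π : Equiv.Perm (Fin n) => π a0 = v)).card : ℝ) * x v) := by
    intro v
    set Av := univ.filter (fun π : Equiv.Perm (Fin n) => π a0 = v) with hAv
    have hcard_erase : ((univ.erase a0).card : ℝ) = (n:ℝ) - 1 := by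
      rw [Finset.card_erase_of_mem (Finset.mem_univ a0), Finset.card_univ, Fintype.card_fin]
      have : (1:ℕ) ≤ n := hn
      push_cast [Nat.cast_sub this]
      ring
    have step1 : ∑ j ∈ univ.erase a0, ∑ π ∈ Av, x (π j)
        = ((n:ℝ) - 1) * ∑ π ∈ Av, x (π b0) := by
      rw [Finset.sum_congr rfl (fun j hj => hslot v j (Finset.ne_of_mem_erase hj)),
        Finset.sum_const, nsmul_eq_mul, hcard_erase]
    have step2 : ∑ j ∈ univ.erase a0, ∑ π ∈ Av, x (π j)
        = -((Av.card : ℝ) * x v) := by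
      rw [Finset.sum_comm]
      have inner : ∀ π ∈ Av, ∑ j ∈ univ.erase a0, x (π j) = - x v := by
        intro π hπ
        have hπa : π a0 = v := (Finset.mem_filter.1 hπ).2
        have htot : ∑ j : Fin n, x (π j) = 0 := by
          rw [Equiv.sum_comp π x]; exact hsum
        have hsp : ∑ j ∈ univ.erase a0, x (π j) + x (π a0) = ∑ j : Fin n, x (π j) :=
          Finset.sum_erase_add univ _ (Finset.mem_univ a0)
        rw [htot, hπa] at hsp
        linarith
      rw [Finset.sum_congr rfl inner, Finset.sum_const, nsmul_eq_mul]
      ring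
    rw [← step1, step2]
  -- per-fiber bound
  have hper : ∀ v : Fin n,
      (n : ℝ) * ((univ.filter (fun π : Equiv.Perm (Fin n) => π a0 = v)).card : ℝ) * |x v|
        ≤ ((n:ℝ) - 1) *
          ∑ π ∈ univ.filter (fun π : Equiv.Perm (Fin n) => π a0 = v), |x (π a0) - x (π b0)| := by
    intro v
    set Av := univ.filter (fun π : Equiv.Perm (Fin n) => π a0 = v) with hAv
    have habs : |∑ π ∈ Av, (x (π a0) - x (π b0))| ≤ ∑ π ∈ Av, |x (π a0) - x (π b0)| :=
      Finset.abs_sum_le_sum_abs _ _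
    have hval : ∑ π ∈ Av, (x (π a0) - x (π b0))
        = (Av.card : ℝ) * x v - ∑ π ∈ Av, x (π b0) := by
      rw [Finset.sum_sub_distrib]
      congr 1
      have : ∀ π ∈ Av, x (π a0) = x v := by
        intro π hπ
        rw [(Finset.mem_filter.1 hπ).2]
      rw [Finset.sum_congr rfl this, Finset.sum_const, nsmul_eq_mul]
    have hn1 : (0:ℝ) ≤ (n:ℝ) - 1 := by
      have : (1:ℕ) ≤ n := hn
      have : (1:ℝ) ≤ (n:ℝ) := by exact_mod_cast this
      linarith
    have hinner : ((n:ℝ) - 1) * ((Av.card : ℝ) * x v - ∑ π ∈ Av, x (π b0))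
        = (n : ℝ) * (Av.card : ℝ) * x v := by
      rw [mul_sub, hkey v]
      ring
    calc (n : ℝ) * (Av.card : ℝ) * |x v|
        = |(n : ℝ) * (Av.card : ℝ) * x v| := by
          rw [abs_mul, abs_mul]
          rw [abs_of_nonneg (by positivity : (0:ℝ) ≤ (n:ℝ)),
            abs_of_nonneg (by positivity : (0:ℝ) ≤ ((Av.card : ℕ) : ℝ))]
      _ = ((n:ℝ) - 1) * |(Av.card : ℝ) * x v - ∑ π ∈ Av, x (π b0)| := by
          rw [← hinner, abs_mul, abs_of_nonneg hn1]
      _ = ((n:ℝ) - 1) * |∑ π ∈ Av, (x (π a0) - x (π b0))| := by rw [hval]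
      _ ≤ ((n:ℝ) - 1) * ∑ π ∈ Av, |x (π a0) - x (π b0)| :=
          mul_le_mul_of_nonneg_left habs hn1
  -- assemble
  have hfib : ∑ π : Equiv.Perm (Fin n), |dpair x hn k π 0|
      = ∑ v : Fin n, ∑ π ∈ univ.filter (fun π : Equiv.Perm (Fin n) => π a0 = v),
          |x (π a0) - x (π b0)| := by
    rw [Finset.sum_fiberwise_of_maps_to (fun π _ => Finset.mem_univ (π a0))]
    exact Finset.sum_congr rfl fun π _ => by rw [hdp π]
  calc (n.factorial : ℝ) * ∑ v, |x v|
      = ∑ v : Fin n, (n.factorial : ℝ) * |x v| := by rw [Finset.mul_sum]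
    _ = ∑ v : Fin n, (n : ℝ)
          * ((univ.filter (fun π : Equiv.Perm (Fin n) => π a0 = v)).card : ℝ) * |x v| := by
        refine Finset.sum_congr rfl fun v _ => ?_
        have h1 := fiber_card_mul (n := n) a0 v
        have h2 : (n : ℝ) * ((univ.filter (fun π : Equiv.Perm (Fin n) => π a0 = v)).card : ℝ)
            = (n.factorial : ℝ) := by exact_mod_cast h1
        rw [← h2]
    _ ≤ ∑ v : Fin n, ((n:ℝ) - 1) *
          ∑ π ∈ univ.filter (fun π : Equiv.Perm (Fin n) => π a0 = v),
            |x (π a0) - x (π b0)| := Finset.sum_le_sum fun v _ => hper v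
    _ = ((n:ℝ) - 1) * ∑ π : Equiv.Perm (Fin n), |dpair x hn k π 0| := by
        rw [hfib, Finset.mul_sum]

end Chunk3


section Chunk4

variable {n : ℕ} (x : Fin n → ℝ)

def Kset {k : ℕ} (hkn : k ≤ n) : Finset (Fin n) :=
  (range k).attachFin (fun m hm => lt_of_lt_of_le (Finset.mem_range.1 hm) hkn)

lemma Kset_card {k : ℕ} (hkn : k ≤ n) : (Kset hkn).card = k := by
  rw [Kset, Finset.card_attachFin, Finset.card_range]

lemma mem_Kset {k : ℕ} (hkn : k ≤ n) {i : Fin n} : i ∈ Kset hkn ↔ i.val < k := by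
  rw [Kset, Finset.mem_attachFin, Finset.mem_range]

noncomputable def Ysum {k : ℕ} (hkn : k ≤ n) (π : Equiv.Perm (Fin n)) : ℝ :=
  ∑ i ∈ Kset hkn, x (π i)

lemma Z_eq_Y_sub (hn : 0 < n) {k r : ℕ} (hr1 : 1 ≤ r) (hrk : r ≤ k) (hkr : k + r ≤ n)
    (hkn : k ≤ n) (π : Equiv.Perm (Fin n)) :
    Zsum x hn k r π = Ysum x hkn π - Ysum x hkn (π * uperm hn hrk hkr (range r)) := by
  classical
  set τ := uperm hn hrk hkr (range r) with hτ
  rw [Ysum, Ysum, ← Finset.sum_sub_distrib]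
  have hsplit := Finset.sum_filter_add_sum_filter_not (Kset hkn)
    (fun i : Fin n => i.val < r) (fun i => x (π i) - x ((π * τ) i))
  have hzero : ∑ i ∈ (Kset hkn).filter (fun i => ¬ i.val < r),
      (x (π i) - x ((π * τ) i)) = 0 := by
    apply Finset.sum_eq_zero
    intro i hi
    have h1 : i.val < k := (mem_Kset hkn).1 (Finset.mem_filter.1 hi).1
    have h2 : ¬ i.val < r := (Finset.mem_filter.1 hi).2
    have hτi : τ i = i := by
      rw [hτ, uperm_apply]
      have : gfun k r (range r) i.val = i.val := by
        unfold gfun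
        rw [if_neg (by rintro ⟨h, -⟩; omega), if_neg (by rintro ⟨h, -⟩; omega)]
      rw [this]
      apply Fin.ext
      rw [emb_val hn i.isLt]
    have : (π * τ) i = π i := by rw [Equiv.Perm.mul_apply, hτi]
    rw [this, sub_self]
  have hmain : ∑ i ∈ (Kset hkn).filter (fun i : Fin n => i.val < r),
      (x (π i) - x ((π * τ) i)) = Zsum x hn k r π := by
    apply Finset.sum_nbij' (i := fun (a : Fin n) => a.val) (j := fun (t : ℕ) => emb hn t)
    · intro a ha
      exact Finset.mem_range.2 (Finset.mem_filter.1 ha).2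
    · intro t ht
      have htr : t < r := Finset.mem_range.1 ht
      have htn : t < n := by omega
      refine Finset.mem_filter.2 ⟨(mem_Kset hkn).2 ?_, ?_⟩
      · rw [emb_val hn htn]; omega
      · rw [emb_val hn htn]; exact htr
    · intro a ha
      apply Fin.ext
      rw [emb_val hn a.isLt]
    · intro t ht
      have htn : t < n := by
        have := Finset.mem_range.1 ht
        omega
      rw [emb_val hn htn]
    · intro a ha
      have har : a.val < r := (Finset.mem_filter.1 ha).2
      have hak : a.val < k := (mem_Kset hkn).1 (Finset.mem_filter.1 ha).1
      unfold dpair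
      have he : emb hn a.val = a := by
        apply Fin.ext
        rw [emb_val hn a.isLt]
      have hτa : τ a = emb hn (a.val + k) := by
        rw [hτ, uperm_apply]
        have : gfun k r (range r) a.val = a.val + k := by
          unfold gfun
          rw [if_pos ⟨har, Finset.mem_range.2 har⟩]
        rw [this]
      rw [he, show (π * τ) a = π (τ a) from rfl, hτa]
  rw [← hsplit, hzero, add_zero, hmain]

lemma SZ_le_2SY (hn : 0 < n) {k r : ℕ} (hr1 : 1 ≤ r) (hrk : r ≤ k) (hkr : k + r ≤ n)
    (hkn : k ≤ n) :
    ∑ π : Equiv.Perm (Fin n), |Zsum x hn k r π|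
      ≤ 2 * ∑ π : Equiv.Perm (Fin n), |Ysum x hkn π| := by
  set τ := uperm hn hrk hkr (range r) with hτ
  calc ∑ π : Equiv.Perm (Fin n), |Zsum x hn k r π|
      = ∑ π : Equiv.Perm (Fin n), |Ysum x hkn π - Ysum x hkn (π * τ)| :=
        Finset.sum_congr rfl fun π _ => by rw [Z_eq_Y_sub x hn hr1 hrk hkr hkn π]
    _ ≤ ∑ π : Equiv.Perm (Fin n), (|Ysum x hkn π| + |Ysum x hkn (π * τ)|) :=
        Finset.sum_le_sum fun π _ => abs_sub _ _
    _ = ∑ π : Equiv.Perm (Fin n), |Ysum x hkn π|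
          + ∑ π : Equiv.Perm (Fin n), |Ysum x hkn (π * τ)| := Finset.sum_add_distrib
    _ = 2 * ∑ π : Equiv.Perm (Fin n), |Ysum x hkn π| := by
        rw [sum_reindex τ (fun π => |Ysum x hkn π|)]
        ring

lemma sum_Y_eq_zero {k : ℕ} (hn : 0 < n) (hkn : k ≤ n) (hsum : ∑ v, x v = 0) :
    ∑ π : Equiv.Perm (Fin n), Ysum x hkn π = 0 := by
  classical
  unfold Ysum
  rw [Finset.sum_comm]
  have hconst : ∀ i j : Fin n,
      (∑ π : Equiv.Perm (Fin n), x (π i)) = ∑ π : Equiv.Perm (Fin n), x (π j) := by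
    intro i j
    have := sum_reindex (n := n) (M := ℝ) (Equiv.swap i j) (fun π => x (π i))
    rw [← this]
    refine Finset.sum_congr rfl fun π _ => ?_
    rw [show (π * Equiv.swap i j) i = π (Equiv.swap i j i) from rfl, Equiv.swap_apply_left]
  have hzero : ∀ i : Fin n, (∑ π : Equiv.Perm (Fin n), x (π i)) = 0 := by
    intro i
    have htotal : ∑ j : Fin n, ∑ π : Equiv.Perm (Fin n), x (π j) = 0 := by
      rw [Finset.sum_comm]
      apply Finset.sum_eq_zero
      intro π _
      rw [Equiv.sum_comp π x]
      exact hsum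
    have hre : ∑ j : Fin n, ∑ π : Equiv.Perm (Fin n), x (π j)
        = n * ∑ π : Equiv.Perm (Fin n), x (π i) := by
      rw [Finset.sum_congr rfl (fun j _ => hconst j i), Finset.sum_const,
        Finset.card_univ, Fintype.card_fin, nsmul_eq_mul]
    rw [hre] at htotal
    have hnne : (n:ℝ) ≠ 0 := by
      exact_mod_cast Nat.pos_iff_ne_zero.1 hn
    exact (mul_eq_zero.1 htotal).resolve_left hnne
  exact Finset.sum_eq_zero fun i _ => hzero i

lemma sum_absY_le {k : ℕ} (hn : 0 < n) (hkn : k ≤ n) (hsum : ∑ v, x v = 0) :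
    ∑ π : Equiv.Perm (Fin n), |Ysum x hkn π|
      ≤ 2 * (∑ v, |x v|)
        * ((univ.filter (fun π : Equiv.Perm (Fin n) => 0 < Ysum x hkn π)).card : ℝ) := by
  classical
  set S := ∑ v, |x v| with hS
  have hYle : ∀ π : Equiv.Perm (Fin n), Ysum x hkn π ≤ S := by
    intro π
    calc Ysum x hkn π ≤ ∑ i ∈ Kset hkn, |x (π i)| :=
          Finset.sum_le_sum fun i _ => le_abs_self _
      _ ≤ ∑ i : Fin n, |x (π i)| :=
          Finset.sum_le_sum_of_subset_of_nonneg (Finset.subset_univ _)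
            (fun i _ _ => abs_nonneg _)
      _ = S := by rw [hS, Equiv.sum_comp π (fun v => |x v|)]
  have hmax : ∀ π : Equiv.Perm (Fin n),
      max (Ysum x hkn π) 0 ≤ if 0 < Ysum x hkn π then S else 0 := by
    intro π
    by_cases h : 0 < Ysum x hkn π
    · rw [if_pos h, max_eq_left (le_of_lt h)]
      exact hYle π
    · rw [if_neg h, max_eq_right (le_of_not_gt h)]
  have habs : ∀ a : ℝ, |a| = 2 * max a 0 - a := by
    intro a
    rcases le_total a 0 with h | h
    · rw [abs_of_nonpos h, max_eq_right h]; ring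
    · rw [abs_of_nonneg h, max_eq_left h]; ring
  calc ∑ π : Equiv.Perm (Fin n), |Ysum x hkn π|
      = ∑ π : Equiv.Perm (Fin n), (2 * max (Ysum x hkn π) 0 - Ysum x hkn π) :=
        Finset.sum_congr rfl fun π _ => habs _
    _ = 2 * ∑ π : Equiv.Perm (Fin n), max (Ysum x hkn π) 0
          - ∑ π : Equiv.Perm (Fin n), Ysum x hkn π := by
        rw [Finset.sum_sub_distrib, Finset.mul_sum]
    _ = 2 * ∑ π : Equiv.Perm (Fin n), max (Ysum x hkn π) 0 := by
        rw [sum_Y_eq_zero x hn hkn hsum]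
        ring
    _ ≤ 2 * ∑ π : Equiv.Perm (Fin n), (if 0 < Ysum x hkn π then S else 0) := by
        have := Finset.sum_le_sum (fun π (_ : π ∈ (univ : Finset (Equiv.Perm (Fin n)))) => hmax π)
        linarith
    _ = 2 * S * ((univ.filter (fun π : Equiv.Perm (Fin n) => 0 < Ysum x hkn π)).card : ℝ) := by
        rw [← Finset.sum_filter, Finset.sum_const, nsmul_eq_mul]
        ring

end Chunk4


section Chunk5

lemma exists_perm_image {α : Type*} [DecidableEq α] [Fintype α] (I : Finset α) :
    ∀ J : Finset α, I.card = J.card → ∃ ρ : Equiv.Perm α, I.image ρ = J := by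
  classical
  induction I using Finset.induction_on with
  | empty =>
    intro J h
    have : J = ∅ := (Finset.card_eq_zero.1 h.symm)
    exact ⟨1, by simp [this]⟩
  | @insert a I' ha ih =>
    intro J h
    rw [Finset.card_insert_of_notMem ha] at h
    have hJne : J.Nonempty := by
      rw [← Finset.card_pos]; omega
    obtain ⟨b, hb⟩ := hJne
    have hcard : I'.card = (J.erase b).card := by
      rw [Finset.card_erase_of_mem hb]; omega
    obtain ⟨ρ', hρ'⟩ := ih (J.erase b) hcard
    set c := ρ' a with hc
    have hcnot : c ∉ J.erase b := by
      rw [← hρ']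
      intro hmem
      obtain ⟨a', ha', heq⟩ := Finset.mem_image.1 hmem
      exact ha (ρ'.injective heq ▸ ha')
    refine ⟨ρ'.trans (Equiv.swap c b), ?_⟩
    have himg : I'.image (ρ'.trans (Equiv.swap c b)) = J.erase b := by
      have h1 : I'.image (ρ'.trans (Equiv.swap c b))
          = (I'.image ρ').image (Equiv.swap c b) := by
        rw [Finset.image_image]
        rfl
      rw [h1, hρ']
      have : ∀ y ∈ J.erase b, Equiv.swap c b y = y := by
        intro y hy
        apply Equiv.swap_apply_of_ne_of_ne
        · intro hyc; exact hcnot (hyc ▸ hy)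
        · exact Finset.ne_of_mem_erase hy
      calc (J.erase b).image (Equiv.swap c b) = (J.erase b).image id :=
            Finset.image_congr (fun y hy => this y hy)
        _ = J.erase b := Finset.image_id
    rw [Finset.image_insert, himg]
    have : (ρ'.trans (Equiv.swap c b)) a = b := by
      show Equiv.swap c b (ρ' a) = b
      rw [← hc, Equiv.swap_apply_left]
    rw [this, Finset.insert_erase hb]

variable {n : ℕ} (x : Fin n → ℝ)

lemma count_eq {k : ℕ} (hkn : k ≤ n) :
    ((powersetCard k (univ : Finset (Fin n))).filter (fun F => 0 < ∑ i ∈ F, x i)).card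
        * n.factorial
      = (n.choose k)
        * (univ.filter (fun π : Equiv.Perm (Fin n) => 0 < Ysum x hkn π)).card := by
  classical
  set Φ : Equiv.Perm (Fin n) → Finset (Fin n) := fun π => (Kset hkn).image π with hΦ
  have hY : ∀ π, Ysum x hkn π = ∑ i ∈ Φ π, x i := by
    intro π
    rw [hΦ, Ysum]
    exact (Finset.sum_image (fun a _ b _ h => π.injective h)).symm
  have hΦmem : ∀ π, Φ π ∈ powersetCard k (univ : Finset (Fin n)) := fun π =>
    Finset.mem_powersetCard.2 ⟨Finset.subset_univ _, by
      rw [hΦ, Finset.card_image_of_injective _ π.injective, Kset_card]⟩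
  have hfib_const : ∀ I ∈ powersetCard k (univ : Finset (Fin n)),
      (univ.filter (fun π => Φ π = I)).card
        = (univ.filter (fun π => Φ π = Kset hkn)).card := by
    intro I hI
    have hcard : I.card = (Kset hkn).card := by
      rw [(Finset.mem_powersetCard.1 hI).2, Kset_card]
    obtain ⟨ρ, hρ⟩ := exists_perm_image I (Kset hkn) hcard
    rw [Finset.card_filter, Finset.card_filter,
      ← sum_reindex_left (n := n) (M := ℕ) ρ (fun π => if Φ π = Kset hkn then 1 else 0)]
    refine Finset.sum_congr rfl fun π _ => ?_
    have h1 : Φ (ρ * π) = (Φ π).image ρ := by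
      rw [hΦ]
      show (Kset hkn).image (⇑(ρ * π)) = ((Kset hkn).image ⇑π).image ⇑ρ
      rw [Finset.image_image]
      rfl
    have hiff : Φ π = I ↔ Φ (ρ * π) = Kset hkn := by
      rw [h1, ← hρ]
      constructor
      · intro h; rw [h]
      · intro h
        exact Finset.image_injective ρ.injective h
    exact if_congr hiff rfl rfl
  -- n! = choose * F0
  set F0 := (univ.filter (fun π => Φ π = Kset hkn)).card with hF0
  have hfact : n.factorial = (n.choose k) * F0 := by
    have hpart : (univ : Finset (Equiv.Perm (Fin n))).card
        = ∑ I ∈ powersetCard k (univ : Finset (Fin n)),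
            (univ.filter (fun π => Φ π = I)).card :=
      Finset.card_eq_sum_card_fiberwise (fun π _ => hΦmem π)
    rw [Finset.card_univ, Fintype.card_perm, Fintype.card_fin] at hpart
    rw [hpart, Finset.sum_congr rfl hfib_const, Finset.sum_const,
      Finset.card_powersetCard, Finset.card_univ, Fintype.card_fin, smul_eq_mul]
  -- W = m * F0
  have hW : (univ.filter (fun π : Equiv.Perm (Fin n) => 0 < Ysum x hkn π)).card
      = ((powersetCard k (univ : Finset (Fin n))).filter
          (fun F => 0 < ∑ i ∈ F, x i)).card * F0 := by
    have hmaps : ∀ π ∈ univ.filter (fun π : Equiv.Perm (Fin n) => 0 < Ysum x hkn π),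
        Φ π ∈ (powersetCard k (univ : Finset (Fin n))).filter
          (fun F => 0 < ∑ i ∈ F, x i) := by
      intro π hπ
      have h1 : 0 < Ysum x hkn π := (Finset.mem_filter.1 hπ).2
      exact Finset.mem_filter.2 ⟨hΦmem π, by rw [← hY]; exact h1⟩
    have hpart := Finset.card_eq_sum_card_fiberwise hmaps
    rw [hpart]
    have hfibeq : ∀ I ∈ (powersetCard k (univ : Finset (Fin n))).filter
        (fun F => 0 < ∑ i ∈ F, x i),
        ((univ.filter (fun π : Equiv.Perm (Fin n) => 0 < Ysum x hkn π)).filter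
            (fun π => Φ π = I)).card = F0 := by
      intro I hI
      have hIpos : 0 < ∑ i ∈ I, x i := (Finset.mem_filter.1 hI).2
      have hIP : I ∈ powersetCard k (univ : Finset (Fin n)) := (Finset.mem_filter.1 hI).1
      have : (univ.filter (fun π : Equiv.Perm (Fin n) => 0 < Ysum x hkn π)).filter
          (fun π => Φ π = I) = univ.filter (fun π => Φ π = I) := by
        ext π
        simp only [Finset.mem_filter, Finset.mem_univ, true_and]
        constructor
        · rintro ⟨-, h⟩; exact h
        · intro h
          refine ⟨?_, h⟩
          rw [hY, h]
          exact hIpos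
      rw [this]
      exact hfib_const I hIP
    rw [Finset.sum_congr rfl hfibeq, Finset.sum_const, smul_eq_mul]
  rw [hfact, hW]
  ring

end Chunk5


section Final

set_option maxHeartbeats 1000000 in
theorem prob_pos_lower_bound_aux
    {n : ℕ} (hn : 2 ≤ n) (k : ℕ) (hk : k ∈ Finset.Icc 1 (n - 1))
    (x : Fin n → ℝ) (hsum : ∑ i, x i = 0) (habs : 0 < ∑ i, |x i|) :
    Real.exp (-1/3) / (8 * Real.sqrt (2 * Real.pi)) * ((k : ℝ) / n)
        * Real.sqrt (((n : ℝ) - k) / ((n : ℝ) * k))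
      ≤ (((univ : Finset (Fin n)).powersetCard k |>.filter
            (fun F => 0 < ∑ i ∈ F, x i)).card : ℝ) / (n.choose k : ℝ) := by
  classical
  obtain ⟨hk1, hkn1⟩ := Finset.mem_Icc.1 hk
  have hn0 : 0 < n := by omega
  have hkn : k ≤ n := by omega
  have hkltn : k < n := by omega
  set r := min k (n - k) with hrdef
  have hr1 : 1 ≤ r := by omega
  have hrk : r ≤ k := min_le_left _ _
  have hkr : k + r ≤ n := by omega
  set S := ∑ v, |x v| with hSdef
  have hS : 0 < S := habs
  set Sd0 := ∑ π : Equiv.Perm (Fin n), |dpair x hn0 k π 0| with hSd0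
  set SZ := ∑ π : Equiv.Perm (Fin n), |Zsum x hn0 k r π| with hSZ
  set SY := ∑ π : Equiv.Perm (Fin n), |Ysum x hkn π| with hSY
  set Wc := (univ.filter (fun π : Equiv.Perm (Fin n) => 0 < Ysum x hkn π)).card with hWc
  set mc := ((powersetCard k (univ : Finset (Fin n))).filter
      (fun F => 0 < ∑ i ∈ F, x i)).card with hmc
  have hfac_pos : (0:ℝ) < (n.factorial : ℝ) := by
    exact_mod_cast Nat.factorial_pos n
  have hN_pos : (0:ℝ) < (n.choose k : ℝ) := by
    exact_mod_cast Nat.choose_pos hkn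
  have hn1R : (0:ℝ) ≤ (n:ℝ) - 1 := by
    have : (1:ℝ) ≤ (n:ℝ) := by exact_mod_cast hn0
    linarith
  have hn2R : (2:ℝ) ≤ (n:ℝ) := by exact_mod_cast hn
  have hsqrt3r : (0:ℝ) ≤ Real.sqrt (3 * r) := Real.sqrt_nonneg _
  have hr0R : (0:ℝ) ≤ (r:ℝ) := by positivity
  have hrposR : (0:ℝ) < (r:ℝ) := by exact_mod_cast hr1
  -- main chain
  have A1 : (n.factorial : ℝ) * S ≤ ((n:ℝ) - 1) * Sd0 :=
    marginal x hn0 hk1 hkltn hsum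
  have A2 : (r:ℝ) * Sd0 ≤ Real.sqrt (3 * r) * SZ := by
    rw [hSd0, ← SD_eq x hn0 hr1 hrk hkr]
    exact SD_le_SZ x hn0 hr1 hrk hkr
  have A3 : SZ ≤ 2 * SY := SZ_le_2SY x hn0 hr1 hrk hkr hkn
  have A4 : SY ≤ 2 * S * (Wc : ℝ) := sum_absY_le x hn0 hkn hsum
  have chain : (r:ℝ) * ((n.factorial : ℝ) * S)
      ≤ 4 * Real.sqrt (3 * r) * ((n:ℝ) - 1) * S * (Wc : ℝ) := by
    calc (r:ℝ) * ((n.factorial : ℝ) * S)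
        ≤ (r:ℝ) * (((n:ℝ) - 1) * Sd0) := mul_le_mul_of_nonneg_left A1 hr0R
      _ = ((n:ℝ) - 1) * ((r:ℝ) * Sd0) := by ring
      _ ≤ ((n:ℝ) - 1) * (Real.sqrt (3 * r) * SZ) :=
          mul_le_mul_of_nonneg_left A2 hn1R
      _ ≤ ((n:ℝ) - 1) * (Real.sqrt (3 * r) * (2 * SY)) :=
          mul_le_mul_of_nonneg_left (mul_le_mul_of_nonneg_left A3 hsqrt3r) hn1R
      _ ≤ ((n:ℝ) - 1) * (Real.sqrt (3 * r) * (2 * (2 * S * (Wc : ℝ)))) := by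
          apply mul_le_mul_of_nonneg_left _ hn1R
          apply mul_le_mul_of_nonneg_left _ hsqrt3r
          linarith
      _ = 4 * Real.sqrt (3 * r) * ((n:ℝ) - 1) * S * (Wc : ℝ) := by ring
  have cancelS : (r:ℝ) * (n.factorial : ℝ)
      ≤ 4 * Real.sqrt (3 * r) * ((n:ℝ) - 1) * (Wc : ℝ) := by
    have h1 : ((r:ℝ) * (n.factorial : ℝ)) * S
        ≤ (4 * Real.sqrt (3 * r) * ((n:ℝ) - 1) * (Wc : ℝ)) * S := by
      calc ((r:ℝ) * (n.factorial : ℝ)) * S = (r:ℝ) * ((n.factorial : ℝ) * S) := by ring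
        _ ≤ 4 * Real.sqrt (3 * r) * ((n:ℝ) - 1) * S * (Wc : ℝ) := chain
        _ = (4 * Real.sqrt (3 * r) * ((n:ℝ) - 1) * (Wc : ℝ)) * S := by ring
    exact le_of_mul_le_mul_right h1 hS
  -- m / N = W / n!
  have hcount : (mc : ℝ) * (n.factorial : ℝ) = (n.choose k : ℝ) * (Wc : ℝ) := by
    exact_mod_cast count_eq x hkn
  have hdiv_eq : (mc : ℝ) / (n.choose k : ℝ) = (Wc : ℝ) / (n.factorial : ℝ) := by
    rw [div_eq_div_iff hN_pos.ne' hfac_pos.ne']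
    linarith [hcount]
  -- constant bound
  have hsqrt2pi : (2:ℝ) ≤ Real.sqrt (2 * Real.pi) := by
    have h4 : (2:ℝ)^2 ≤ 2 * Real.pi := by nlinarith [Real.two_le_pi]
    calc (2:ℝ) = Real.sqrt ((2:ℝ)^2) := (Real.sqrt_sq (by norm_num)).symm
      _ ≤ Real.sqrt (2 * Real.pi) := Real.sqrt_le_sqrt h4
  have hconst : Real.exp (-1/3) / (8 * Real.sqrt (2 * Real.pi)) ≤ 1/16 := by
    have hexp : Real.exp (-1/3) ≤ 1 := Real.exp_le_one_iff.2 (by norm_num)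
    have hden : (16:ℝ) ≤ 8 * Real.sqrt (2 * Real.pi) := by linarith
    have hdenpos : (0:ℝ) < 8 * Real.sqrt (2 * Real.pi) := by linarith
    rw [div_le_div_iff₀ hdenpos (by norm_num : (0:ℝ) < 16)]
    nlinarith [Real.exp_pos (-1/3 : ℝ)]
  have hkR : (0:ℝ) < (k:ℝ) := by exact_mod_cast hk1
  have hnR : (0:ℝ) < (n:ℝ) := by exact_mod_cast hn0
  have hnkR : (0:ℝ) ≤ (n:ℝ) - (k:ℝ) := by
    have : (k:ℝ) ≤ (n:ℝ) := by exact_mod_cast hkn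
    linarith
  have hfrac_nonneg : (0:ℝ) ≤ ((n:ℝ) - k) / ((n:ℝ) * k) := by positivity
  have hknr_nat : k * (n - k) ≤ r * n := by
    rcases le_total k (n - k) with h | h
    · have hre : r = k := by omega
      rw [hre]
      exact Nat.mul_le_mul_left k (by omega)
    · have hre : r = n - k := by omega
      rw [hre]
      calc k * (n - k) = (n - k) * k := Nat.mul_comm _ _
        _ ≤ (n - k) * n := Nat.mul_le_mul_left (n - k) (by omega)
  have hknr : (k:ℝ) * ((n:ℝ) - k) ≤ (r:ℝ) * (n:ℝ) := by
    have hcast : ((n:ℝ) - k) = ((n - k : ℕ) : ℝ) := by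
      rw [Nat.cast_sub hkn]
    rw [hcast]
    exact_mod_cast hknr_nat
  -- α ≤ √r / n
  have halpha : ((k:ℝ) / n) * Real.sqrt (((n : ℝ) - k) / ((n : ℝ) * k))
      ≤ Real.sqrt (r:ℝ) / n := by
    have hL : ((k:ℝ) / n) * Real.sqrt (((n : ℝ) - k) / ((n : ℝ) * k))
        = Real.sqrt (((k:ℝ)/n)^2 * (((n : ℝ) - k) / ((n : ℝ) * k))) := by
      rw [Real.sqrt_mul (by positivity) _, Real.sqrt_sq (by positivity)]
    have hR : Real.sqrt ((r:ℝ) / (n:ℝ)^2) = Real.sqrt (r:ℝ) / n := by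
      rw [Real.sqrt_div hr0R, Real.sqrt_sq hnR.le]
    have key : ((k:ℝ)/n)^2 * (((n:ℝ) - k)/((n:ℝ)*k)) ≤ (r:ℝ)/(n:ℝ)^2 := by
      rw [div_pow, div_mul_div_comm, div_le_div_iff₀ (by positivity) (by positivity)]
      calc (k:ℝ)^2 * ((n:ℝ) - k) * (n:ℝ)^2
          = ((k:ℝ) * ((n:ℝ) - k)) * ((k:ℝ) * (n:ℝ)^2) := by ring
        _ ≤ ((r:ℝ) * (n:ℝ)) * ((k:ℝ) * (n:ℝ)^2) :=
            mul_le_mul_of_nonneg_right hknr (by positivity)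
        _ = (r:ℝ) * ((n:ℝ)^2 * ((n:ℝ) * (k:ℝ))) := by ring
    rw [hL, ← hR]
    exact Real.sqrt_le_sqrt key
  -- step 1
  have hαnonneg : (0:ℝ) ≤ ((k:ℝ) / n) * Real.sqrt (((n : ℝ) - k) / ((n : ℝ) * k)) := by
    positivity
  have hstep1 : Real.exp (-1/3) / (8 * Real.sqrt (2 * Real.pi)) * ((k : ℝ) / n)
        * Real.sqrt (((n : ℝ) - k) / ((n : ℝ) * k))
      ≤ (1/16) * (Real.sqrt (r:ℝ) / n) := by
    calc Real.exp (-1/3) / (8 * Real.sqrt (2 * Real.pi)) * ((k : ℝ) / n)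
          * Real.sqrt (((n : ℝ) - k) / ((n : ℝ) * k))
        = (Real.exp (-1/3) / (8 * Real.sqrt (2 * Real.pi)))
          * (((k : ℝ) / n) * Real.sqrt (((n : ℝ) - k) / ((n : ℝ) * k))) := by ring
      _ ≤ (1/16) * (Real.sqrt (r:ℝ) / n) := by
          apply mul_le_mul hconst halpha hαnonneg (by norm_num)
  -- step 2
  have hsqrt3le2 : Real.sqrt 3 ≤ 2 := by
    calc Real.sqrt 3 ≤ Real.sqrt ((2:ℝ)^2) := Real.sqrt_le_sqrt (by norm_num)
      _ = 2 := Real.sqrt_sq (by norm_num)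
  have hd1 : (0:ℝ) < 4 * Real.sqrt (3 * r) * ((n:ℝ) - 1) := by
    have h1 : (0:ℝ) < Real.sqrt (3 * r) := Real.sqrt_pos.2 (by positivity)
    have h2 : (0:ℝ) < (n:ℝ) - 1 := by linarith
    positivity
  have hstep2 : (1/16) * (Real.sqrt (r:ℝ) / n)
      ≤ (r:ℝ) / (4 * Real.sqrt (3 * r) * ((n:ℝ) - 1)) := by
    have heq : (1/16) * (Real.sqrt (r:ℝ) / n) = Real.sqrt (r:ℝ) / (16 * n) := by
      ring
    rw [heq, div_le_div_iff₀ (by positivity) hd1]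
    have hsqrt3r_eq : Real.sqrt (3 * r) = Real.sqrt 3 * Real.sqrt (r:ℝ) :=
      Real.sqrt_mul (by norm_num) _
    have hrr : Real.sqrt (r:ℝ) * Real.sqrt (r:ℝ) = (r:ℝ) := Real.mul_self_sqrt hr0R
    have hsr0 : (0:ℝ) ≤ Real.sqrt (r:ℝ) := Real.sqrt_nonneg _
    calc Real.sqrt (r:ℝ) * (4 * Real.sqrt (3 * r) * ((n:ℝ) - 1))
        = 4 * Real.sqrt 3 * ((n:ℝ) - 1) * (Real.sqrt (r:ℝ) * Real.sqrt (r:ℝ)) := by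
          rw [hsqrt3r_eq]; ring
      _ = 4 * Real.sqrt 3 * ((n:ℝ) - 1) * (r:ℝ) := by rw [hrr]
      _ ≤ 4 * 2 * ((n:ℝ) - 1) * (r:ℝ) := by
          have h1 : (0:ℝ) ≤ ((n:ℝ) - 1) * (r:ℝ) := mul_nonneg hn1R hr0R
          nlinarith [h1]
      _ ≤ (r:ℝ) * (16 * n) := by nlinarith [hr0R, hnR, hrposR]
  -- step 3
  have hstep3 : (r:ℝ) / (4 * Real.sqrt (3 * r) * ((n:ℝ) - 1))
      ≤ (Wc : ℝ) / (n.factorial : ℝ) := by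
    rw [div_le_div_iff₀ hd1 hfac_pos]
    calc (r:ℝ) * (n.factorial : ℝ)
        ≤ 4 * Real.sqrt (3 * r) * ((n:ℝ) - 1) * (Wc : ℝ) := cancelS
      _ = (Wc:ℝ) * (4 * Real.sqrt (3 * r) * ((n:ℝ) - 1)) := by ring
  calc Real.exp (-1/3) / (8 * Real.sqrt (2 * Real.pi)) * ((k : ℝ) / n)
        * Real.sqrt (((n : ℝ) - k) / ((n : ℝ) * k))
      ≤ (1/16) * (Real.sqrt (r:ℝ) / n) := hstep1
    _ ≤ (r:ℝ) / (4 * Real.sqrt (3 * r) * ((n:ℝ) - 1)) := hstep2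
    _ ≤ (Wc : ℝ) / (n.factorial : ℝ) := hstep3
    _ = (mc : ℝ) / (n.choose k : ℝ) := hdiv_eq.symm

end Final


end ProbPos

open Finset

/-- Main theorem: lower bound on `P(X_P > 0)` for the sum of a uniformly random
`k`-subset of a zero-sum population which is not identically zero. -/
theorem prob_pos_lower_bound
    {n : ℕ} (hn : 2 ≤ n) (k : ℕ) (hk : k ∈ Finset.Icc 1 (n - 1))
    (x : Fin n → ℝ) (hsum : ∑ i, x i = 0) (habs : 0 < ∑ i, |x i|) :
    Real.exp (-1/3) / (8 * Real.sqrt (2 * Real.pi)) * ((k : ℝ) / n)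
        * Real.sqrt (((n : ℝ) - k) / ((n : ℝ) * k))
      ≤ (((univ : Finset (Fin n)).powersetCard k |>.filter
            (fun F => 0 < ∑ i ∈ F, x i)).card : ℝ) / (n.choose k : ℝ) :=
  ProbPos.prob_pos_lower_bound_aux hn k hk x hsum habs
end
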